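/- arXiv:1812.07186 — 6 statements merged into one kernel-verified Lean document; each statement's English description precedes it below -/
import Mathlib

section
/- For any matrices A, P ∈ ℝ^{m×m} and bounded measurable functions B₁, Q₁ : [a,b] → ℝ^{m×n}, B₂, Q₂ : [a,b] → ℝ^{n×m}, D, S : [a,b] → ℝ^{n×n}, C₁, C₂, R₁, R₂ : [a,b]×[a,b] → ℝ^{n×n}, the composition 𝒫_{A,B₁,B₂,D,C₁,C₂} ∘ 𝒫_{P,Q₁,Q₂,S,R₁,R₂} equals 𝒫_{P̂,Q̂₁,Q̂₂,Ŝ,R̂₁,R̂₂}, where: P̂ = AP + ∫ₐᵇ B₁(s)Q₂(s) ds; Q̂₁(s) = AQ₁(s) + B₁(s)S(s) + ∫ₛᵇ B₁(η)R₁(η,s) dη + ∫ₐˢ B₁(η)R₂(η,s) dη; Q̂₂(s) = B₂(s)P + D(s)Q₂(s) + ∫ₐˢ C₁(s,η)Q₂(η) dη + ∫ₛᵇ C₂(s,η)Q₂(η) dη; Ŝ(s) = D(s)S(s); R̂₁(s,η) = B₂(s)Q₁(η) + D(s)R₁(s,η) + C₁(s,η)S(η) + ∫ₐ^η C₁(s,θ)R₂(θ,η)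 dθ + ∫_η^s C₁(s,θ)R₁(θ,η) dθ + ∫ₛᵇ C₂(s,θ)R₁(θ,η) dθ; and R̂₂(s,η) = B₂(s)Q₁(η) + D(s)R₂(s,η) + C₂(s,η)S(η) + ∫ₐˢ C₁(s,θ)R₂(θ,η) dθ + ∫ₛ^η C₂(s,θ)R₂(θ,η) dθ + ∫_η^b C₂(s,θ)R₁(θ,η) dθ; i.e. both operators agree on every (x,z) ∈ ℝ^m × L²([a,b];ℝ^n). -/
open MeasureTheory Matrix Set

noncomputable section

/-- The operator `𝒫_{P,Q₁,Q₂,S,R₁,R₂}` on `ℝ^m × L²([a,b];ℝⁿ)`, applied to a pair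
`u = (x, z)`.  All integrals are taken entrywise. -/
def Pop (a b : ℝ) {m n : ℕ}
    (P : Matrix (Fin m) (Fin m) ℝ)
    (Q1 : ℝ → Matrix (Fin m) (Fin n) ℝ)
    (Q2 : ℝ → Matrix (Fin n) (Fin m) ℝ)
    (S : ℝ → Matrix (Fin n) (Fin n) ℝ)
    (R1 R2 : ℝ → ℝ → Matrix (Fin n) (Fin n) ℝ)
    (u : (Fin m → ℝ) × (ℝ → Fin n → ℝ)) :
    (Fin m → ℝ) × (ℝ → Fin n → ℝ) :=
  (P.mulVec u.1 + (fun i => ∫ s in a..b, (Q1 s).mulVec (u.2 s) i),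
   fun s => (Q2 s).mulVec u.1 + (S s).mulVec (u.2 s)
     + (fun i => ∫ η in a..s, (R1 s η).mulVec (u.2 η) i)
     + (fun i => ∫ η in s..b, (R2 s η).mulVec (u.2 η) i))

/-- The inner product on `X = ℝ^m × L²([a,b];ℝⁿ)`:
`⟨(x₁,x₂),(z₁,z₂)⟩_X = x₁ᵀz₁ + ∫ₐᵇ x₂(s)ᵀ z₂(s) ds`. -/
def innerX (a b : ℝ) {m n : ℕ}
    (u v : (Fin m → ℝ) × (ℝ → Fin n → ℝ)) : ℝ :=
  u.1 ⬝ᵥ v.1 + ∫ s in a..b, u.2 s ⬝ᵥ v.2 s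

/-- `z ∈ L²([a,b];ℝⁿ)`. -/
def MemL2 (a b : ℝ) {n : ℕ} (z : ℝ → Fin n → ℝ) : Prop :=
  MemLp z 2 (volume.restrict (Icc a b))

/-- A bounded measurable matrix-valued function on `[a,b]`. -/
def BddMeas (a b : ℝ) {k l : ℕ} (F : ℝ → Matrix (Fin k) (Fin l) ℝ) : Prop :=
  (∀ i j, Measurable fun s => F s i j) ∧
    ∃ C, ∀ s ∈ Icc a b, ∀ i j, |F s i j| ≤ C

/-- A bounded measurable matrix-valued kernel on `[a,b] × [a,b]`. -/
def BddMeas2 (a b : ℝ) {k l : ℕ} (F : ℝ → ℝ → Matrix (Fin k) (Fin l) ℝ) : Prop :=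
  (∀ i j, Measurable fun p : ℝ × ℝ => F p.1 p.2 i j) ∧
    ∃ C, ∀ s ∈ Icc a b, ∀ η ∈ Icc a b, ∀ i j, |F s η i j| ≤ C

/-- Entrywise integral of a matrix-valued function. -/
def mInt {k l : ℕ} (c d : ℝ) (F : ℝ → Matrix (Fin k) (Fin l) ℝ) :
    Matrix (Fin k) (Fin l) ℝ :=
  Matrix.of fun i j => ∫ t in c..d, F t i j
section

variable {m n : ℕ} (a b : ℝ)
variable (A P : Matrix (Fin m) (Fin m) ℝ)
variable (B1 Q1 : ℝ → Matrix (Fin m) (Fin n) ℝ)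
variable (B2 Q2 : ℝ → Matrix (Fin n) (Fin m) ℝ)
variable (D S : ℝ → Matrix (Fin n) (Fin n) ℝ)
variable (C1 C2 R1 R2 : ℝ → ℝ → Matrix (Fin n) (Fin n) ℝ)

/-- `P̂ = AP + ∫ₐᵇ B₁(s)Q₂(s) ds`. -/
def Pcomp : Matrix (Fin m) (Fin m) ℝ :=
  A * P + mInt a b (fun s => B1 s * Q2 s)

/-- `Q̂₁(s) = AQ₁(s) + B₁(s)S(s) + ∫ₛᵇ B₁(η)R₁(η,s) dη + ∫ₐˢ B₁(η)R₂(η,s) dη`. -/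
def Q1comp (s : ℝ) : Matrix (Fin m) (Fin n) ℝ :=
  A * Q1 s + B1 s * S s + mInt s b (fun η => B1 η * R1 η s)
    + mInt a s (fun η => B1 η * R2 η s)

/-- `Q̂₂(s) = B₂(s)P + D(s)Q₂(s) + ∫ₐˢ C₁(s,η)Q₂(η) dη + ∫ₛᵇ C₂(s,η)Q₂(η) dη`. -/
def Q2comp (s : ℝ) : Matrix (Fin n) (Fin m) ℝ :=
  B2 s * P + D s * Q2 s + mInt a s (fun η => C1 s η * Q2 η)
    + mInt s b (fun η => C2 s η * Q2 η)

/-- `Ŝ(s) = D(s)S(s)`. -/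
def Scomp (s : ℝ) : Matrix (Fin n) (Fin n) ℝ := D s * S s

/-- `R̂₁(s,η)` of the composition. -/
def R1comp (s η : ℝ) : Matrix (Fin n) (Fin n) ℝ :=
  B2 s * Q1 η + D s * R1 s η + C1 s η * S η
    + mInt a η (fun θ => C1 s θ * R2 θ η)
    + mInt η s (fun θ => C1 s θ * R1 θ η)
    + mInt s b (fun θ => C2 s θ * R1 θ η)

/-- `R̂₂(s,η)` of the composition. -/
def R2comp (s η : ℝ) : Matrix (Fin n) (Fin n) ℝ :=
  B2 s * Q1 η + D s * R2 s η + C2 s η * S η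
    + mInt a s (fun θ => C1 s θ * R2 θ η)
    + mInt s η (fun θ => C2 s θ * R2 θ η)
    + mInt η b (fun θ => C2 s θ * R1 θ η)

end



section PopAuxSection

open Function

namespace PopAux

lemma triangle_swap_lower {c d : ℝ} (hcd : c ≤ d) {F : ℝ → ℝ → ℝ}
    (hF : Integrable (uncurry F)
      ((volume.restrict (Ioc c d)).prod (volume.restrict (Ioc c d)))) :
    (∫ s in c..d, ∫ η in c..s, F s η) = ∫ η in c..d, ∫ s in η..d, F s η := by
  have hT : MeasurableSet {p : ℝ × ℝ | p.2 ≤ p.1} :=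
    measurableSet_le measurable_snd measurable_fst
  have hG : Integrable ({p : ℝ × ℝ | p.2 ≤ p.1}.indicator (uncurry F))
      ((volume.restrict (Ioc c d)).prod (volume.restrict (Ioc c d))) := hF.indicator hT
  rw [intervalIntegral.integral_of_le hcd, intervalIntegral.integral_of_le hcd]
  have h1 : ∫ s in Ioc c d, (∫ η in c..s, F s η)
      = ∫ s in Ioc c d, ∫ η in Ioc c d,
          ({p : ℝ × ℝ | p.2 ≤ p.1}.indicator (uncurry F)) (s, η) := by
    refine setIntegral_congr_fun measurableSet_Ioc (fun s hs => ?_)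
    rw [intervalIntegral.integral_of_le hs.1.le]
    have he : ∀ η, ({p : ℝ × ℝ | p.2 ≤ p.1}.indicator (uncurry F)) (s, η)
        = (Iic s).indicator (fun η => F s η) η := by
      intro η; by_cases h : η ≤ s <;> simp [Set.indicator_apply, h, uncurry]
    simp_rw [he]
    rw [setIntegral_indicator measurableSet_Iic, Ioc_inter_Iic, min_eq_right hs.2]
  have h2 : ∫ η in Ioc c d, (∫ s in Ioc c d,
        ({p : ℝ × ℝ | p.2 ≤ p.1}.indicator (uncurry F)) (s, η))
      = ∫ η in Ioc c d, ∫ s in η..d, F s η := by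
    refine setIntegral_congr_fun measurableSet_Ioc (fun η hη => ?_)
    have he : ∀ s, ({p : ℝ × ℝ | p.2 ≤ p.1}.indicator (uncurry F)) (s, η)
        = (Ici η).indicator (fun s => F s η) s := by
      intro s; by_cases h : η ≤ s <;> simp [Set.indicator_apply, h, uncurry]
    simp_rw [he]
    rw [setIntegral_indicator measurableSet_Ici]
    rw [show Ioc c d ∩ Ici η = Icc η d by
      ext t; simp only [mem_inter_iff, mem_Ioc, mem_Ici, mem_Icc]
      exact ⟨fun ⟨⟨_, h2⟩, h3⟩ => ⟨h3, h2⟩,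
        fun ⟨h2, h3⟩ => ⟨⟨lt_of_lt_of_le hη.1 h2, h3⟩, h2⟩⟩]
    rw [integral_Icc_eq_integral_Ioc, intervalIntegral.integral_of_le hη.2]
  have swap := integral_integral_swap
    (f := fun s η => ({p : ℝ × ℝ | p.2 ≤ p.1}.indicator (uncurry F)) (s, η)) (by exact hG)
  rw [h1, swap, h2]

lemma triangle_swap_upper {c d : ℝ} (hcd : c ≤ d) {F : ℝ → ℝ → ℝ}
    (hF : Integrable (uncurry F)
      ((volume.restrict (Ioc c d)).prod (volume.restrict (Ioc c d)))) :
    (∫ s in c..d, ∫ η in s..d, F s η) = ∫ η in c..d, ∫ s in c..η, F s η := by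
  have h : Integrable (uncurry fun s η => F η s)
      ((volume.restrict (Ioc c d)).prod (volume.restrict (Ioc c d))) := by
    have := hF.swap
    apply this.congr
    exact ae_of_all _ fun p => rfl
  exact (triangle_swap_lower hcd h).symm

lemma rect_swap {c d e f : ℝ} (hcd : c ≤ d) (hef : e ≤ f) {F : ℝ → ℝ → ℝ}
    (hF : Integrable (uncurry F)
      ((volume.restrict (Ioc c d)).prod (volume.restrict (Ioc e f)))) :
    (∫ s in c..d, ∫ η in e..f, F s η) = ∫ η in e..f, ∫ s in c..d, F s η := by
  rw [intervalIntegral.integral_of_le hcd, intervalIntegral.integral_of_le hef]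
  simp_rw [intervalIntegral.integral_of_le hef, intervalIntegral.integral_of_le hcd]
  exact integral_integral_swap hF

end PopAux

namespace PopAux

lemma measurable_mul_entry {α : Type*} [MeasurableSpace α] {k l r : ℕ}
    {F : α → Matrix (Fin k) (Fin l) ℝ} {G : α → Matrix (Fin l) (Fin r) ℝ}
    (hF : ∀ i j, Measurable fun s => F s i j) (hG : ∀ i j, Measurable fun s => G s i j)
    (i : Fin k) (j : Fin r) : Measurable fun s => (F s * G s) i j := by
  simp only [Matrix.mul_apply]
  exact Finset.measurable_sum _ fun p _ => (hF i p).mul (hG p j)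

lemma abs_mul_entry_le {k l r : ℕ} (F : Matrix (Fin k) (Fin l) ℝ) (G : Matrix (Fin l) (Fin r) ℝ)
    {C D' : ℝ} (hC0 : 0 ≤ C) (hF : ∀ i j, |F i j| ≤ C) (hG : ∀ i j, |G i j| ≤ D')
    (i : Fin k) (j : Fin r) : |(F * G) i j| ≤ l * (C * D') := by
  simp only [Matrix.mul_apply]
  calc |∑ p, F i p * G p j| ≤ ∑ p, |F i p * G p j| := Finset.abs_sum_le_sum_abs _ _
    _ ≤ ∑ _p : Fin l, C * D' := Finset.sum_le_sum fun p _ => by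
        rw [abs_mul]; exact mul_le_mul (hF i p) (hG p j) (abs_nonneg _) hC0
    _ = l * (C * D') := by simp [Finset.sum_const, mul_comm]

lemma sm_paramInt {G : ℝ → ℝ → ℝ} (hG : Measurable fun p : ℝ × ℝ => G p.1 p.2)
    {u v : ℝ → ℝ} (hu : Measurable u) (hv : Measurable v) :
    StronglyMeasurable fun t => ∫ θ in (u t)..(v t), G θ t := by
  have key : ∀ {u v : ℝ → ℝ}, Measurable u → Measurable v →
      StronglyMeasurable fun t => ∫ θ in Ioc (u t) (v t), G θ t := by
    intro u v hu hv
    have h1 : ∀ t, (∫ θ in Ioc (u t) (v t), G θ t)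
        = ∫ θ, ({q : ℝ × ℝ | u q.1 < q.2 ∧ q.2 ≤ v q.1}.indicator (fun q => G q.2 q.1)) (t, θ) := by
      intro t
      rw [← integral_indicator measurableSet_Ioc]
      exact integral_congr_ae (ae_of_all _ fun θ => by
        by_cases h : u t < θ ∧ θ ≤ v t <;> simp [Set.indicator_apply, mem_Ioc, h])
    simp_rw [h1]
    have hset : MeasurableSet {q : ℝ × ℝ | u q.1 < q.2 ∧ q.2 ≤ v q.1} :=
      (measurableSet_lt (hu.comp measurable_fst) measurable_snd).inter
        (measurableSet_le measurable_snd (hv.comp measurable_fst))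
    exact (((hG.comp (measurable_snd.prodMk measurable_fst)).indicator
      hset).stronglyMeasurable).integral_prod_right'
  have hdef : ∀ t, (∫ θ in (u t)..(v t), G θ t)
      = (∫ θ in Ioc (u t) (v t), G θ t) - ∫ θ in Ioc (v t) (u t), G θ t := fun t => rfl
  simp_rw [hdef]
  exact (key hu hv).sub (key hv hu)

lemma abs_paramInt_le {a b : ℝ} {G : ℝ → ℝ → ℝ} {C : ℝ} (hC0 : 0 ≤ C) {t c d : ℝ}
    (hc : c ∈ Icc a b) (hd : d ∈ Icc a b)
    (hbd : ∀ θ ∈ Icc a b, |G θ t| ≤ C) :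
    |∫ θ in c..d, G θ t| ≤ C * (b - a) := by
  have h1 : |∫ θ in c..d, G θ t| ≤ C * |d - c| := by
    have := intervalIntegral.norm_integral_le_of_norm_le_const (C := C)
      (f := fun θ => G θ t) (a := c) (b := d) ?_
    · simpa [Real.norm_eq_abs] using this
    · intro θ hθ
      rw [Real.norm_eq_abs]
      refine hbd θ ⟨?_, ?_⟩
      · exact le_trans (le_min hc.1 hd.1) hθ.1.le
      · exact le_trans hθ.2 (max_le hc.2 hd.2)
  refine h1.trans (mul_le_mul_of_nonneg_left ?_ hC0)
  rw [abs_sub_le_iff]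
  constructor <;> [linarith [hc.1, hd.2]; linarith [hd.1, hc.2]]

lemma mulVec_intInt {k l : ℕ} (M : Matrix (Fin k) (Fin l) ℝ) (f : ℝ → Fin l → ℝ)
    {c d : ℝ} (hf : ∀ j, IntervalIntegrable (fun t => f t j) volume c d) (i : Fin k) :
    M.mulVec (fun j => ∫ t in c..d, f t j) i = ∫ t in c..d, M.mulVec (f t) i := by
  simp only [Matrix.mulVec, dotProduct]
  rw [intervalIntegral.integral_finset_sum (fun j _ => (hf j).const_mul _)]
  exact Finset.sum_congr rfl fun j _ => (intervalIntegral.integral_const_mul _ _).symm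

lemma intInt_mulVec_const {k l : ℕ} {M : ℝ → Matrix (Fin k) (Fin l) ℝ} (v : Fin l → ℝ)
    {c d : ℝ} (hM : ∀ i j, IntervalIntegrable (fun t => M t i j) volume c d) (i : Fin k) :
    (∫ t in c..d, (M t).mulVec v i) = (mInt c d M).mulVec v i := by
  simp only [Matrix.mulVec, dotProduct, mInt, Matrix.of_apply]
  rw [intervalIntegral.integral_finset_sum (fun j _ => (hM i j).mul_const _)]
  exact Finset.sum_congr rfl fun j _ => intervalIntegral.integral_mul_const _ _

lemma integrable_matvec {a b c d : ℝ} {k l : ℕ} (hsub : Ioc c d ⊆ Icc a b)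
    {M : ℝ → Matrix (Fin k) (Fin l) ℝ}
    (hM : ∀ i j, AEStronglyMeasurable (fun t => M t i j) (volume.restrict (Ioc c d)))
    {C : ℝ} (hC : ∀ t ∈ Icc a b, ∀ i j, |M t i j| ≤ C)
    {v : ℝ → Fin l → ℝ} (hv : ∀ j, Integrable (fun t => v t j) (volume.restrict (Ioc c d)))
    (i : Fin k) : Integrable (fun t => (M t).mulVec (v t) i) (volume.restrict (Ioc c d)) := by
  simp only [Matrix.mulVec, dotProduct]
  apply integrable_finset_sum
  intro j _
  exact (hv j).bdd_mul (hM i j) ((ae_restrict_iff' measurableSet_Ioc).2 (ae_of_all _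
    fun t ht => by simpa [Real.norm_eq_abs] using hC t (hsub ht) i j))

lemma integrable_prod_matvec {a b c d e f : ℝ} {k l : ℕ}
    (h1 : Ioc c d ⊆ Icc a b) (h2 : Ioc e f ⊆ Icc a b)
    {M : ℝ → ℝ → Matrix (Fin k) (Fin l) ℝ}
    (hM : ∀ i j, Measurable fun p : ℝ × ℝ => M p.1 p.2 i j)
    {C : ℝ} (hC : ∀ s ∈ Icc a b, ∀ t ∈ Icc a b, ∀ i j, |M s t i j| ≤ C)
    {v : ℝ → Fin l → ℝ} (hv : ∀ j, Integrable (fun t => v t j) (volume.restrict (Ioc e f)))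
    (i : Fin k) :
    Integrable (uncurry fun s t => (M s t).mulVec (v t) i)
      ((volume.restrict (Ioc c d)).prod (volume.restrict (Ioc e f))) := by
  haveI : IsFiniteMeasure (volume.restrict (Ioc c d)) :=
    ⟨by rw [Measure.restrict_apply_univ]; exact measure_Ioc_lt_top⟩
  have heq : (uncurry fun s t => (M s t).mulVec (v t) i)
      = fun p : ℝ × ℝ => ∑ j, M p.1 p.2 i j * v p.2 j := by
    ext p; simp [uncurry, Matrix.mulVec, dotProduct]
  rw [heq]
  apply integrable_finset_sum
  intro j _
  have hbase : Integrable (fun p : ℝ × ℝ => v p.2 j)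
      ((volume.restrict (Ioc c d)).prod (volume.restrict (Ioc e f))) := by
    simpa using (integrable_const (1:ℝ)).mul_prod (hv j)
  apply hbase.bdd_mul (hM i j).aestronglyMeasurable
  rw [Measure.prod_restrict]
  refine (ae_restrict_iff' (measurableSet_Ioc.prod measurableSet_Ioc)).2 (ae_of_all _ ?_)
  rintro ⟨s, t⟩ ⟨hs, ht⟩
  simpa [Real.norm_eq_abs] using hC s (h1 hs) t (h2 ht) i j

end PopAux

namespace PopAux

lemma integrable_paramInt_matvec {a b c d : ℝ} {k l : ℕ}
    (hsub : Ioc c d ⊆ Ioc a b)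
    {M : ℝ → ℝ → Matrix (Fin k) (Fin l) ℝ}
    (hM : ∀ i j, Measurable fun p : ℝ × ℝ => M p.1 p.2 i j)
    {C : ℝ} (hC0 : 0 ≤ C) (hC : ∀ s ∈ Icc a b, ∀ t ∈ Icc a b, ∀ i j, |M s t i j| ≤ C)
    {v : ℝ → Fin l → ℝ} (hv : ∀ j, Integrable (fun t => v t j) (volume.restrict (Ioc a b)))
    {u w : ℝ → ℝ} (hu : Measurable u) (hw : Measurable w)
    (huw : ∀ s ∈ Ioc c d, u s ≤ w s ∧ Ioc (u s) (w s) ⊆ Ioc a b)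
    (i : Fin k) :
    Integrable (fun s => ∫ t in (u s)..(w s), (M s t).mulVec (v t) i)
      (volume.restrict (Ioc c d)) := by
  haveI : IsFiniteMeasure (volume.restrict (Ioc c d)) :=
    ⟨by rw [Measure.restrict_apply_univ]; exact measure_Ioc_lt_top⟩
  set T : Set (ℝ × ℝ) := {q : ℝ × ℝ | u q.1 < q.2 ∧ q.2 ≤ w q.1} with hT
  have hTm : MeasurableSet T :=
    (measurableSet_lt (hu.comp measurable_fst) measurable_snd).inter
      (measurableSet_le measurable_snd (hw.comp measurable_fst))
  have hunc : Integrable (uncurry fun s t => (M s t).mulVec (v t) i)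
      ((volume.restrict (Ioc c d)).prod (volume.restrict (Ioc a b))) :=
    integrable_prod_matvec (hsub.trans Ioc_subset_Icc_self) Ioc_subset_Icc_self hM hC hv i
  have haesm : AEStronglyMeasurable
      (fun s => ∫ t in Ioc a b,
        T.indicator (uncurry fun s t => (M s t).mulVec (v t) i) (s, t))
      (volume.restrict (Ioc c d)) :=
    (hunc.aestronglyMeasurable.indicator hTm).integral_prod_right'
  have heq : ∀ s ∈ Ioc c d,
      (∫ t in Ioc a b, T.indicator (uncurry fun s t => (M s t).mulVec (v t) i) (s, t))
        = ∫ t in (u s)..(w s), (M s t).mulVec (v t) i := by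
    intro s hs
    rw [intervalIntegral.integral_of_le (huw s hs).1]
    have hpt : ∀ t, T.indicator (uncurry fun s t => (M s t).mulVec (v t) i) (s, t)
        = (Ioc (u s) (w s)).indicator (fun t => (M s t).mulVec (v t) i) t := by
      intro t
      by_cases h : u s < t ∧ t ≤ w s <;>
        simp [hT, Set.indicator_apply, mem_Ioc, h, uncurry]
    simp_rw [hpt]
    rw [setIntegral_indicator measurableSet_Ioc,
      inter_eq_self_of_subset_right (huw s hs).2]
  have haesm2 : AEStronglyMeasurable
      (fun s => ∫ t in (u s)..(w s), (M s t).mulVec (v t) i)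
      (volume.restrict (Ioc c d)) :=
    haesm.congr ((ae_restrict_iff' measurableSet_Ioc).2 (ae_of_all _ heq))
  have hint_bd : Integrable (fun t => ∑ j, C * |v t j|) (volume.restrict (Ioc a b)) :=
    integrable_finset_sum _ fun j _ => ((hv j).abs.const_mul C)
  refine Integrable.mono' (integrable_const (∫ t in Ioc a b, ∑ j, C * |v t j|)) haesm2 ?_
  refine (ae_restrict_iff' measurableSet_Ioc).2 (ae_of_all _ fun s hs => ?_)
  have hsIcc : s ∈ Icc a b := Ioc_subset_Icc_self (hsub hs)
  have hintM : Integrable (fun t => (M s t).mulVec (v t) i) (volume.restrict (Ioc a b)) :=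
    integrable_matvec Ioc_subset_Icc_self
      (fun i j => ((hM i j).comp (measurable_const.prodMk measurable_id)).aestronglyMeasurable)
      (fun t ht i j => hC s hsIcc t ht i j) hv i
  rw [Real.norm_eq_abs, intervalIntegral.integral_of_le (huw s hs).1]
  calc |∫ t in Ioc (u s) (w s), (M s t).mulVec (v t) i|
      ≤ ∫ t in Ioc (u s) (w s), ‖(M s t).mulVec (v t) i‖ := by
        rw [← Real.norm_eq_abs]
        exact norm_integral_le_integral_norm _
    _ ≤ ∫ t in Ioc (u s) (w s), ∑ j, C * |v t j| := by
        refine setIntegral_mono_on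
          ((hintM.mono_measure (Measure.restrict_mono (huw s hs).2 le_rfl)).norm)
          (hint_bd.mono_measure (Measure.restrict_mono (huw s hs).2 le_rfl))
          measurableSet_Ioc ?_
        intro t ht
        have htIcc : t ∈ Icc a b := Ioc_subset_Icc_self ((huw s hs).2 ht)
        rw [Real.norm_eq_abs]
        calc |(M s t).mulVec (v t) i| = |∑ j, M s t i j * v t j| := by
              simp [Matrix.mulVec, dotProduct]
          _ ≤ ∑ j, |M s t i j * v t j| := Finset.abs_sum_le_sum_abs _ _
          _ ≤ ∑ j, C * |v t j| := Finset.sum_le_sum fun j _ => by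
              rw [abs_mul]
              exact mul_le_mul_of_nonneg_right (hC s hsIcc t htIcc i j) (abs_nonneg _)
    _ ≤ ∫ t in Ioc a b, ∑ j, C * |v t j| :=
        setIntegral_mono_set hint_bd
          (ae_of_all _ fun t => Finset.sum_nonneg fun j _ => mul_nonneg hC0 (abs_nonneg _))
          ((huw s hs).2.eventuallyLE)

end PopAux

namespace PopAux

lemma intervalIntegrable_of_integrable {c d : ℝ} (hcd : c ≤ d) {f : ℝ → ℝ}
    (h : Integrable f (volume.restrict (Ioc c d))) : IntervalIntegrable f volume c d :=
  (intervalIntegrable_iff_integrableOn_Ioc_of_le hcd).2 h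

lemma integrable_matvec_const {a b c d : ℝ} {k l : ℕ} (hsub : Ioc c d ⊆ Icc a b)
    {M : ℝ → Matrix (Fin k) (Fin l) ℝ}
    (hM : ∀ i j, AEStronglyMeasurable (fun t => M t i j) (volume.restrict (Ioc c d)))
    {C : ℝ} (hC : ∀ t ∈ Icc a b, ∀ i j, |M t i j| ≤ C)
    (x : Fin l → ℝ) (i : Fin k) :
    Integrable (fun t => (M t).mulVec x i) (volume.restrict (Ioc c d)) := by
  haveI : IsFiniteMeasure (volume.restrict (Ioc c d)) :=
    ⟨by rw [Measure.restrict_apply_univ]; exact measure_Ioc_lt_top⟩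
  simp only [Matrix.mulVec, dotProduct]
  apply integrable_finset_sum
  intro j _
  exact (integrable_const (x j)).bdd_mul (hM i j) ((ae_restrict_iff' measurableSet_Ioc).2
    (ae_of_all _ fun t ht => by simpa [Real.norm_eq_abs] using hC t (hsub ht) i j))

lemma entry_abs_le_sum {k l : ℕ} (A : Matrix (Fin k) (Fin l) ℝ) (i : Fin k) (j : Fin l) :
    |A i j| ≤ ∑ i', ∑ j', |A i' j'| := by
  have h1 : |A i j| ≤ ∑ j', |A i j'| :=
    Finset.single_le_sum (f := fun j' => |A i j'|) (fun _ _ => abs_nonneg _) (Finset.mem_univ j)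
  exact h1.trans (Finset.single_le_sum (f := fun i' => ∑ j', |A i' j'|)
    (fun _ _ => Finset.sum_nonneg fun _ _ => abs_nonneg _) (Finset.mem_univ i))

end PopAux

namespace PopAux

lemma integrable_of_bdd {a b c d : ℝ} (hsub : Ioc c d ⊆ Icc a b) {f : ℝ → ℝ}
    (hf : AEStronglyMeasurable f (volume.restrict (Ioc c d)))
    {C : ℝ} (hC : ∀ t ∈ Icc a b, |f t| ≤ C) :
    Integrable f (volume.restrict (Ioc c d)) := by
  haveI : IsFiniteMeasure (volume.restrict (Ioc c d)) :=
    ⟨by rw [Measure.restrict_apply_univ]; exact measure_Ioc_lt_top⟩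
  exact Integrable.mono' (integrable_const C) hf ((ae_restrict_iff' measurableSet_Ioc).2
    (ae_of_all _ fun t ht => by simpa [Real.norm_eq_abs] using hC t (hsub ht)))

lemma intervalIntegrable_entry {a b c d : ℝ} (hcd : c ≤ d) (hsub : Ioc c d ⊆ Icc a b)
    {f : ℝ → ℝ} (hf : Measurable f) {C : ℝ} (hC : ∀ t ∈ Icc a b, |f t| ≤ C) :
    IntervalIntegrable f volume c d :=
  intervalIntegrable_of_integrable hcd (integrable_of_bdd hsub hf.aestronglyMeasurable hC)

end PopAux

end PopAuxSection

open PopAux Function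

set_option maxHeartbeats 4000000 in
/-- The composition of two operators of the class `𝒫` is again of the
class `𝒫`, with parameters given by the explicit formulas: the two operators agree on
every `(x,z) ∈ ℝ^m × L²([a,b];ℝⁿ)` (the first components agree exactly, and the second
components agree at every point `s ∈ [a,b]`). -/
theorem composition_of_Pop {m n : ℕ} (a b : ℝ) (hab : a < b)
    (A P : Matrix (Fin m) (Fin m) ℝ)
    (B1 Q1 : ℝ → Matrix (Fin m) (Fin n) ℝ)
    (B2 Q2 : ℝ → Matrix (Fin n) (Fin m) ℝ)
    (D S : ℝ → Matrix (Fin n) (Fin n) ℝ)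
    (C1 C2 R1 R2 : ℝ → ℝ → Matrix (Fin n) (Fin n) ℝ)
    (hB1 : BddMeas a b B1) (hQ1 : BddMeas a b Q1)
    (hB2 : BddMeas a b B2) (hQ2 : BddMeas a b Q2)
    (hD : BddMeas a b D) (hS : BddMeas a b S)
    (hC1 : BddMeas2 a b C1) (hC2 : BddMeas2 a b C2)
    (hR1 : BddMeas2 a b R1) (hR2 : BddMeas2 a b R2) :
    ∀ (x : Fin m → ℝ) (z : ℝ → Fin n → ℝ), MemL2 a b z →
      (Pop a b A B1 B2 D C1 C2 (Pop a b P Q1 Q2 S R1 R2 (x, z))).1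
          = (Pop a b (Pcomp a b A P B1 Q2) (Q1comp a b A B1 Q1 S R1 R2)
              (Q2comp a b P B2 Q2 D C1 C2) (Scomp D S)
              (R1comp a b Q1 B2 D S C1 C2 R1 R2) (R2comp a b Q1 B2 D S C1 C2 R1 R2)
              (x, z)).1
        ∧ ∀ s ∈ Icc a b,
          (Pop a b A B1 B2 D C1 C2 (Pop a b P Q1 Q2 S R1 R2 (x, z))).2 s
            = (Pop a b (Pcomp a b A P B1 Q2) (Q1comp a b A B1 Q1 S R1 R2)
                (Q2comp a b P B2 Q2 D C1 C2) (Scomp D S)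
                (R1comp a b Q1 B2 D S C1 C2 R1 R2) (R2comp a b Q1 B2 D S C1 C2 R1 R2)
                (x, z)).2 s := by

  intro x z hz
  obtain ⟨mB1, CB1, bB1⟩ := hB1
  obtain ⟨mQ1, CQ1, bQ1⟩ := hQ1
  obtain ⟨mB2, CB2, bB2⟩ := hB2
  obtain ⟨mQ2, CQ2, bQ2⟩ := hQ2
  obtain ⟨mD, CD, bD⟩ := hD
  obtain ⟨mS, CS, bS⟩ := hS
  obtain ⟨mC1, CC1, bC1⟩ := hC1
  obtain ⟨mC2, CC2, bC2⟩ := hC2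
  obtain ⟨mR1, CR1, bR1⟩ := hR1
  obtain ⟨mR2, CR2, bR2⟩ := hR2
  have bB1' : ∀ t ∈ Icc a b, ∀ i j, |B1 t i j| ≤ max CB1 0 :=
    fun t ht i j => (bB1 t ht i j).trans (le_max_left _ _)
  have bQ1' : ∀ t ∈ Icc a b, ∀ i j, |Q1 t i j| ≤ max CQ1 0 :=
    fun t ht i j => (bQ1 t ht i j).trans (le_max_left _ _)
  have bB2' : ∀ t ∈ Icc a b, ∀ i j, |B2 t i j| ≤ max CB2 0 :=
    fun t ht i j => (bB2 t ht i j).trans (le_max_left _ _)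
  have bQ2' : ∀ t ∈ Icc a b, ∀ i j, |Q2 t i j| ≤ max CQ2 0 :=
    fun t ht i j => (bQ2 t ht i j).trans (le_max_left _ _)
  have bD' : ∀ t ∈ Icc a b, ∀ i j, |D t i j| ≤ max CD 0 :=
    fun t ht i j => (bD t ht i j).trans (le_max_left _ _)
  have bS' : ∀ t ∈ Icc a b, ∀ i j, |S t i j| ≤ max CS 0 :=
    fun t ht i j => (bS t ht i j).trans (le_max_left _ _)
  have bC1' : ∀ s ∈ Icc a b, ∀ t ∈ Icc a b, ∀ i j, |C1 s t i j| ≤ max CC1 0 :=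
    fun s hs t ht i j => (bC1 s hs t ht i j).trans (le_max_left _ _)
  have bC2' : ∀ s ∈ Icc a b, ∀ t ∈ Icc a b, ∀ i j, |C2 s t i j| ≤ max CC2 0 :=
    fun s hs t ht i j => (bC2 s hs t ht i j).trans (le_max_left _ _)
  have bR1' : ∀ s ∈ Icc a b, ∀ t ∈ Icc a b, ∀ i j, |R1 s t i j| ≤ max CR1 0 :=
    fun s hs t ht i j => (bR1 s hs t ht i j).trans (le_max_left _ _)
  have bR2' : ∀ s ∈ Icc a b, ∀ t ∈ Icc a b, ∀ i j, |R2 s t i j| ≤ max CR2 0 :=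
    fun s hs t ht i j => (bR2 s hs t ht i j).trans (le_max_left _ _)
  haveI hfin : IsFiniteMeasure (volume.restrict (Icc a b)) :=
    ⟨by rw [Measure.restrict_apply_univ]; exact measure_Icc_lt_top⟩
  have hzint : Integrable z (volume.restrict (Icc a b)) := hz.integrable one_le_two
  have hzIoc : ∀ j, Integrable (fun t => z t j) (volume.restrict (Ioc a b)) := fun j =>
    ((ContinuousLinearMap.proj (R := ℝ) (φ := fun _ : Fin n => ℝ) j).integrable_comp
      hzint).mono_measure (Measure.restrict_mono Ioc_subset_Icc_self le_rfl)
  have hzOn : ∀ {c d : ℝ}, Ioc c d ⊆ Ioc a b →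
      ∀ j, Integrable (fun t => z t j) (volume.restrict (Ioc c d)) :=
    fun h j => (hzIoc j).mono_measure (Measure.restrict_mono h le_rfl)
  have hsubab : Ioc a b ⊆ Icc a b := Ioc_subset_Icc_self
  have J1 : ∀ t ∈ Icc a b, ∀ k,
      IntervalIntegrable (fun θ => (R1 t θ).mulVec (z θ) k) volume a t := by
    intro t ht k
    refine intervalIntegrable_of_integrable ht.1 ?_
    exact integrable_matvec (a := a) (b := b)
      ((Ioc_subset_Ioc_right ht.2).trans Ioc_subset_Icc_self)
      (fun i j => ((mR1 i j).comp (measurable_const.prodMk measurable_id)).aestronglyMeasurable)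
      (fun θ hθ i j => bR1' t ht θ hθ i j)
      (hzOn (Ioc_subset_Ioc_right ht.2)) k
  have J2 : ∀ t ∈ Icc a b, ∀ k,
      IntervalIntegrable (fun θ => (R2 t θ).mulVec (z θ) k) volume t b := by
    intro t ht k
    refine intervalIntegrable_of_integrable ht.2 ?_
    exact integrable_matvec (a := a) (b := b)
      ((Ioc_subset_Ioc_left ht.1).trans Ioc_subset_Icc_self)
      (fun i j => ((mR2 i j).comp (measurable_const.prodMk measurable_id)).aestronglyMeasurable)
      (fun θ hθ i j => bR2' t ht θ hθ i j)
      (hzOn (Ioc_subset_Ioc_left ht.1)) k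
  have hWexp : ∀ {k : ℕ} (M : Matrix (Fin k) (Fin n) ℝ) (t : ℝ), t ∈ Icc a b → ∀ i : Fin k,
      M.mulVec ((Q2 t).mulVec x + (S t).mulVec (z t)
        + (fun j => ∫ η in a..t, (R1 t η).mulVec (z η) j)
        + (fun j => ∫ η in t..b, (R2 t η).mulVec (z η) j)) i
      = (M * Q2 t).mulVec x i + (M * S t).mulVec (z t) i
        + (∫ η in a..t, (M * R1 t η).mulVec (z η) i)
        + (∫ η in t..b, (M * R2 t η).mulVec (z η) i) := by
    intro k M t ht i
    have h3 : M.mulVec (fun j => ∫ η in a..t, (R1 t η).mulVec (z η) j) i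
        = ∫ η in a..t, (M * R1 t η).mulVec (z η) i :=
      (mulVec_intInt M (fun η => (R1 t η).mulVec (z η)) (J1 t ht) i).trans
        (by simp_rw [Matrix.mulVec_mulVec])
    have h4 : M.mulVec (fun j => ∫ η in t..b, (R2 t η).mulVec (z η) j) i
        = ∫ η in t..b, (M * R2 t η).mulVec (z η) i :=
      (mulVec_intInt M (fun η => (R2 t η).mulVec (z η)) (J2 t ht) i).trans
        (by simp_rw [Matrix.mulVec_mulVec])
    rw [Matrix.mulVec_add, Matrix.mulVec_add, Matrix.mulVec_add]
    simp only [Pi.add_apply]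
    rw [h3, h4, Matrix.mulVec_mulVec, Matrix.mulVec_mulVec]
  refine ⟨?_, ?_⟩
  · -- first components
    funext i
    show A.mulVec (P.mulVec x + fun k => ∫ t in a..b, (Q1 t).mulVec (z t) k) i
        + (∫ s in a..b, (B1 s).mulVec ((Q2 s).mulVec x + (S s).mulVec (z s)
            + (fun j => ∫ η in a..s, (R1 s η).mulVec (z η) j)
            + (fun j => ∫ η in s..b, (R2 s η).mulVec (z η) j)) i)
      = (Pcomp a b A P B1 Q2).mulVec x i
        + ∫ t in a..b, (Q1comp a b A B1 Q1 S R1 R2 t).mulVec (z t) i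
    -- integrability facts
    have hI1 : ∀ k, Integrable (fun t => (Q1 t).mulVec (z t) k) (volume.restrict (Ioc a b)) :=
      fun k => integrable_matvec hsubab (fun i j => (mQ1 i j).aestronglyMeasurable) bQ1' hzIoc k
    have hI6 : ∀ i, Integrable (fun t => (A * Q1 t).mulVec (z t) i) (volume.restrict (Ioc a b)) :=
      fun i => integrable_matvec hsubab
        (fun i j => (measurable_mul_entry (F := fun _ : ℝ => A) (fun _ _ => measurable_const)
          mQ1 i j).aestronglyMeasurable)
        (fun t ht i j => abs_mul_entry_le A (Q1 t)
          (Finset.sum_nonneg fun _ _ => Finset.sum_nonneg fun _ _ => abs_nonneg _)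
          (entry_abs_le_sum A) (fun i j => bQ1' t ht i j) i j)
        hzIoc i
    have hI2 : ∀ i, Integrable (fun t => (B1 t * Q2 t).mulVec x i) (volume.restrict (Ioc a b)) :=
      fun i => integrable_matvec_const hsubab
        (fun i j => (measurable_mul_entry mB1 mQ2 i j).aestronglyMeasurable)
        (fun t ht i j => abs_mul_entry_le (B1 t) (Q2 t) (le_max_right CB1 0)
          (fun i j => bB1' t ht i j) (fun i j => bQ2' t ht i j) i j) x i
    have hI3 : ∀ i, Integrable (fun t => (B1 t * S t).mulVec (z t) i) (volume.restrict (Ioc a b)) :=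
      fun i => integrable_matvec hsubab
        (fun i j => (measurable_mul_entry mB1 mS i j).aestronglyMeasurable)
        (fun t ht i j => abs_mul_entry_le (B1 t) (S t) (le_max_right CB1 0)
          (fun i j => bB1' t ht i j) (fun i j => bS' t ht i j) i j) hzIoc i
    have mB1R1 : ∀ i j, Measurable fun p : ℝ × ℝ => (B1 p.1 * R1 p.1 p.2) i j :=
      fun i j => measurable_mul_entry (α := ℝ × ℝ) (F := fun p => B1 p.1)
        (G := fun p => R1 p.1 p.2) (fun i j => (mB1 i j).comp measurable_fst) mR1 i j
    have mB1R2 : ∀ i j, Measurable fun p : ℝ × ℝ => (B1 p.1 * R2 p.1 p.2) i j :=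
      fun i j => measurable_mul_entry (α := ℝ × ℝ) (F := fun p => B1 p.1)
        (G := fun p => R2 p.1 p.2) (fun i j => (mB1 i j).comp measurable_fst) mR2 i j
    have bB1R1 : ∀ s ∈ Icc a b, ∀ t ∈ Icc a b, ∀ i j,
        |(B1 s * R1 s t) i j| ≤ (n : ℝ) * (max CB1 0 * max CR1 0) :=
      fun s hs t ht i j => abs_mul_entry_le (B1 s) (R1 s t) (le_max_right CB1 0)
        (fun i j => bB1' s hs i j) (fun i j => bR1' s hs t ht i j) i j
    have bB1R2 : ∀ s ∈ Icc a b, ∀ t ∈ Icc a b, ∀ i j,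
        |(B1 s * R2 s t) i j| ≤ (n : ℝ) * (max CB1 0 * max CR2 0) :=
      fun s hs t ht i j => abs_mul_entry_le (B1 s) (R2 s t) (le_max_right CB1 0)
        (fun i j => bB1' s hs i j) (fun i j => bR2' s hs t ht i j) i j
    have hU1 : ∀ i, Integrable (uncurry fun s t => (B1 s * R1 s t).mulVec (z t) i)
        ((volume.restrict (Ioc a b)).prod (volume.restrict (Ioc a b))) :=
      fun i => integrable_prod_matvec hsubab hsubab mB1R1 bB1R1 hzIoc i
    have hU2 : ∀ i, Integrable (uncurry fun s t => (B1 s * R2 s t).mulVec (z t) i)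
        ((volume.restrict (Ioc a b)).prod (volume.restrict (Ioc a b))) :=
      fun i => integrable_prod_matvec hsubab hsubab mB1R2 bB1R2 hzIoc i
    have hI4 : ∀ i, Integrable (fun s => ∫ η in a..s, (B1 s * R1 s η).mulVec (z η) i)
        (volume.restrict (Ioc a b)) :=
      fun i => integrable_paramInt_matvec (u := fun _ => a) (w := fun s => s) subset_rfl
        mB1R1 (by positivity) bB1R1 hzIoc measurable_const measurable_id
        (fun s hs => ⟨hs.1.le, Ioc_subset_Ioc_right hs.2⟩) i
    have hI5 : ∀ i, Integrable (fun s => ∫ η in s..b, (B1 s * R2 s η).mulVec (z η) i)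
        (volume.restrict (Ioc a b)) :=
      fun i => integrable_paramInt_matvec (u := fun s => s) (w := fun _ => b) subset_rfl
        mB1R2 (by positivity) bB1R2 hzIoc measurable_id measurable_const
        (fun s hs => ⟨hs.2, Ioc_subset_Ioc_left hs.1.le⟩) i
    have hI7 : ∀ i, Integrable
        (fun t => (mInt t b (fun η => B1 η * R1 η t)).mulVec (z t) i)
        (volume.restrict (Ioc a b)) :=
      fun i => integrable_matvec (M := fun t => mInt t b (fun η => B1 η * R1 η t))
        (C := ((n : ℝ) * (max CB1 0 * max CR1 0)) * (b - a)) hsubab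
        (fun i' j' => (sm_paramInt (G := fun θ t => (B1 θ * R1 θ t) i' j') (mB1R1 i' j')
          measurable_id measurable_const).aestronglyMeasurable)
        (fun t ht i' j' => by
          show |∫ θ in t..b, (B1 θ * R1 θ t) i' j'| ≤ _
          exact abs_paramInt_le (G := fun θ t => (B1 θ * R1 θ t) i' j')
            (C := (n : ℝ) * (max CB1 0 * max CR1 0)) (by positivity) ht
            ⟨hab.le, le_refl b⟩ (fun θ hθ => bB1R1 θ hθ t ht i' j'))
        hzIoc i
    have hI8 : ∀ i, Integrable
        (fun t => (mInt a t (fun η => B1 η * R2 η t)).mulVec (z t) i)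
        (volume.restrict (Ioc a b)) :=
      fun i => integrable_matvec (M := fun t => mInt a t (fun η => B1 η * R2 η t))
        (C := ((n : ℝ) * (max CB1 0 * max CR2 0)) * (b - a)) hsubab
        (fun i' j' => (sm_paramInt (G := fun θ t => (B1 θ * R2 θ t) i' j') (mB1R2 i' j')
          measurable_const measurable_id).aestronglyMeasurable)
        (fun t ht i' j' => by
          show |∫ θ in a..t, (B1 θ * R2 θ t) i' j'| ≤ _
          exact abs_paramInt_le (G := fun θ t => (B1 θ * R2 θ t) i' j')
            (C := (n : ℝ) * (max CB1 0 * max CR2 0)) (by positivity)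
            ⟨le_refl a, hab.le⟩ ht (fun θ hθ => bB1R2 θ hθ t ht i' j'))
        hzIoc i
    -- step e1
    have e1 : A.mulVec (P.mulVec x + fun k => ∫ t in a..b, (Q1 t).mulVec (z t) k) i
        = (A * P).mulVec x i + ∫ t in a..b, (A * Q1 t).mulVec (z t) i := by
      rw [Matrix.mulVec_add]
      simp only [Pi.add_apply]
      rw [Matrix.mulVec_mulVec]
      congr 1
      exact (mulVec_intInt A (fun t => (Q1 t).mulVec (z t))
        (fun k => intervalIntegrable_of_integrable hab.le (hI1 k)) i).trans
        (by simp_rw [Matrix.mulVec_mulVec])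
    -- step e2
    have e2 : (∫ s in a..b, (B1 s).mulVec ((Q2 s).mulVec x + (S s).mulVec (z s)
            + (fun j => ∫ η in a..s, (R1 s η).mulVec (z η) j)
            + (fun j => ∫ η in s..b, (R2 s η).mulVec (z η) j)) i)
        = (∫ s in a..b, (B1 s * Q2 s).mulVec x i) + (∫ s in a..b, (B1 s * S s).mulVec (z s) i)
          + (∫ s in a..b, ∫ η in a..s, (B1 s * R1 s η).mulVec (z η) i)
          + (∫ s in a..b, ∫ η in s..b, (B1 s * R2 s η).mulVec (z η) i) := by
      rw [intervalIntegral.integral_of_le hab.le]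
      rw [setIntegral_congr_fun (g := fun s => (B1 s * Q2 s).mulVec x i
          + (B1 s * S s).mulVec (z s) i
          + (∫ η in a..s, (B1 s * R1 s η).mulVec (z η) i)
          + ∫ η in s..b, (B1 s * R2 s η).mulVec (z η) i) measurableSet_Ioc
        (fun s hs => hWexp (B1 s) s (hsubab hs) i)]
      have had1 : Integrable (fun t => (B1 t * Q2 t).mulVec x i
          + (B1 t * S t).mulVec (z t) i) (volume.restrict (Ioc a b)) := (hI2 i).add (hI3 i)
      have had2 : Integrable (fun t => (B1 t * Q2 t).mulVec x i
          + (B1 t * S t).mulVec (z t) i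
          + ∫ η in a..t, (B1 t * R1 t η).mulVec (z η) i) (volume.restrict (Ioc a b)) :=
        had1.add (hI4 i)
      rw [integral_add had2 (hI5 i), integral_add had1 (hI4 i), integral_add (hI2 i) (hI3 i)]
      rw [← intervalIntegral.integral_of_le hab.le, ← intervalIntegral.integral_of_le hab.le,
        ← intervalIntegral.integral_of_le hab.le, ← intervalIntegral.integral_of_le hab.le]
    -- x-piece to mInt form
    have e2a : (∫ s in a..b, (B1 s * Q2 s).mulVec x i)
        = (mInt a b (fun s => B1 s * Q2 s)).mulVec x i :=
      intInt_mulVec_const (M := fun s => B1 s * Q2 s) x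
        (fun i' j' => intervalIntegrable_entry hab.le hsubab (measurable_mul_entry mB1 mQ2 i' j')
          (fun t ht => abs_mul_entry_le (B1 t) (Q2 t) (le_max_right CB1 0)
            (fun i j => bB1' t ht i j) (fun i j => bQ2' t ht i j) i' j')) i
    -- Fubini pieces
    have e3 : (∫ s in a..b, ∫ η in a..s, (B1 s * R1 s η).mulVec (z η) i)
        = ∫ t in a..b, (mInt t b (fun η => B1 η * R1 η t)).mulVec (z t) i := by
      rw [triangle_swap_lower hab.le (hU1 i)]
      rw [intervalIntegral.integral_of_le hab.le, intervalIntegral.integral_of_le hab.le]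
      refine setIntegral_congr_fun measurableSet_Ioc (fun t ht => ?_)
      exact intInt_mulVec_const (M := fun s' => B1 s' * R1 s' t) (z t)
        (fun i' j' => intervalIntegrable_entry ht.2
          ((Ioc_subset_Ioc_left ht.1.le).trans hsubab)
          (measurable_mul_entry (F := fun s' => B1 s') (G := fun s' => R1 s' t)
            mB1 (fun i j => (mR1 i j).comp (measurable_id.prodMk measurable_const)) i' j')
          (fun θ hθ => bB1R1 θ hθ t (hsubab ht) i' j')) i
    have e4 : (∫ s in a..b, ∫ η in s..b, (B1 s * R2 s η).mulVec (z η) i)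
        = ∫ t in a..b, (mInt a t (fun η => B1 η * R2 η t)).mulVec (z t) i := by
      rw [triangle_swap_upper hab.le (hU2 i)]
      rw [intervalIntegral.integral_of_le hab.le, intervalIntegral.integral_of_le hab.le]
      refine setIntegral_congr_fun measurableSet_Ioc (fun t ht => ?_)
      exact intInt_mulVec_const (M := fun s' => B1 s' * R2 s' t) (z t)
        (fun i' j' => intervalIntegrable_entry ht.1.le
          ((Ioc_subset_Ioc_right ht.2).trans hsubab)
          (measurable_mul_entry (F := fun s' => B1 s') (G := fun s' => R2 s' t)
            mB1 (fun i j => (mR2 i j).comp (measurable_id.prodMk measurable_const)) i' j')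
          (fun θ hθ => bB1R2 θ hθ t (hsubab ht) i' j')) i
    -- RHS expansions
    have e0 : (Pcomp a b A P B1 Q2).mulVec x i
        = (A * P).mulVec x i + (mInt a b (fun s => B1 s * Q2 s)).mulVec x i := by
      simp only [Pcomp, Matrix.add_mulVec, Pi.add_apply]
    have e5 : (∫ t in a..b, (Q1comp a b A B1 Q1 S R1 R2 t).mulVec (z t) i)
        = (∫ t in a..b, (A * Q1 t).mulVec (z t) i)
          + (∫ t in a..b, (B1 t * S t).mulVec (z t) i)
          + (∫ t in a..b, (mInt t b (fun η => B1 η * R1 η t)).mulVec (z t) i)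
          + (∫ t in a..b, (mInt a t (fun η => B1 η * R2 η t)).mulVec (z t) i) := by
      simp only [Q1comp, Matrix.add_mulVec, Pi.add_apply]
      rw [intervalIntegral.integral_of_le hab.le]
      have had1 : Integrable (fun t => (A * Q1 t).mulVec (z t) i
          + (B1 t * S t).mulVec (z t) i) (volume.restrict (Ioc a b)) := (hI6 i).add (hI3 i)
      have had2 : Integrable (fun t => (A * Q1 t).mulVec (z t) i
          + (B1 t * S t).mulVec (z t) i
          + (mInt t b (fun η => B1 η * R1 η t)).mulVec (z t) i) (volume.restrict (Ioc a b)) :=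
        had1.add (hI7 i)
      rw [integral_add had2 (hI8 i), integral_add had1 (hI7 i), integral_add (hI6 i) (hI3 i)]
      rw [← intervalIntegral.integral_of_le hab.le, ← intervalIntegral.integral_of_le hab.le,
        ← intervalIntegral.integral_of_le hab.le, ← intervalIntegral.integral_of_le hab.le]
    rw [e1, e2, e2a, e3, e4, e0, e5]
    ring
  · -- second components
    intro s hs
    funext j
    have has : a ≤ s := hs.1
    have hsb : s ≤ b := hs.2
    have hsubas : Ioc a s ⊆ Ioc a b := Ioc_subset_Ioc_right hsb
    have hsubsb : Ioc s b ⊆ Ioc a b := Ioc_subset_Ioc_left has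
    have hsubas' : Ioc a s ⊆ Icc a b := hsubas.trans hsubab
    have hsubsb' : Ioc s b ⊆ Icc a b := hsubsb.trans hsubab
    have hI1 : ∀ k, Integrable (fun t => (Q1 t).mulVec (z t) k) (volume.restrict (Ioc a b)) :=
      fun k => integrable_matvec hsubab (fun i j => (mQ1 i j).aestronglyMeasurable) bQ1' hzIoc k
    have isum : ∀ {f g : ℝ → ℝ} {c d : ℝ}, c ≤ d →
        Integrable f (volume.restrict (Ioc c d)) → Integrable g (volume.restrict (Ioc c d)) →
        (∫ t in c..d, (f t + g t)) = (∫ t in c..d, f t) + ∫ t in c..d, g t := by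
      intro f g c d hcd hf hg
      rw [intervalIntegral.integral_of_le hcd, integral_add hf hg,
        ← intervalIntegral.integral_of_le hcd, ← intervalIntegral.integral_of_le hcd]
    -- measurability shorthands (s fixed)
    have mC1s : ∀ i j, Measurable fun η => C1 s η i j :=
      fun i j => (mC1 i j).comp (measurable_const.prodMk measurable_id)
    have mC2s : ∀ i j, Measurable fun η => C2 s η i j :=
      fun i j => (mC2 i j).comp (measurable_const.prodMk measurable_id)
    have mR1s : ∀ i j, Measurable fun η => R1 s η i j :=
      fun i j => (mR1 i j).comp (measurable_const.prodMk measurable_id)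
    have mR2s : ∀ i j, Measurable fun η => R2 s η i j :=
      fun i j => (mR2 i j).comp (measurable_const.prodMk measurable_id)
    have mC1R1 : ∀ i j, Measurable fun p : ℝ × ℝ => (C1 s p.1 * R1 p.1 p.2) i j :=
      fun i j => measurable_mul_entry (α := ℝ × ℝ) (F := fun p => C1 s p.1)
        (G := fun p => R1 p.1 p.2)
        (fun i j => (mC1 i j).comp (measurable_const.prodMk measurable_fst)) mR1 i j
    have mC1R2 : ∀ i j, Measurable fun p : ℝ × ℝ => (C1 s p.1 * R2 p.1 p.2) i j :=
      fun i j => measurable_mul_entry (α := ℝ × ℝ) (F := fun p => C1 s p.1)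
        (G := fun p => R2 p.1 p.2)
        (fun i j => (mC1 i j).comp (measurable_const.prodMk measurable_fst)) mR2 i j
    have mC2R1 : ∀ i j, Measurable fun p : ℝ × ℝ => (C2 s p.1 * R1 p.1 p.2) i j :=
      fun i j => measurable_mul_entry (α := ℝ × ℝ) (F := fun p => C2 s p.1)
        (G := fun p => R1 p.1 p.2)
        (fun i j => (mC2 i j).comp (measurable_const.prodMk measurable_fst)) mR1 i j
    have mC2R2 : ∀ i j, Measurable fun p : ℝ × ℝ => (C2 s p.1 * R2 p.1 p.2) i j :=
      fun i j => measurable_mul_entry (α := ℝ × ℝ) (F := fun p => C2 s p.1)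
        (G := fun p => R2 p.1 p.2)
        (fun i j => (mC2 i j).comp (measurable_const.prodMk measurable_fst)) mR2 i j
    -- bounds
    have bC1R1 : ∀ η ∈ Icc a b, ∀ θ ∈ Icc a b, ∀ i j,
        |(C1 s η * R1 η θ) i j| ≤ (n : ℝ) * (max CC1 0 * max CR1 0) :=
      fun η hη θ hθ i j => abs_mul_entry_le (C1 s η) (R1 η θ) (le_max_right _ _)
        (fun i j => bC1' s hs η hη i j) (fun i j => bR1' η hη θ hθ i j) i j
    have bC1R2 : ∀ η ∈ Icc a b, ∀ θ ∈ Icc a b, ∀ i j,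
        |(C1 s η * R2 η θ) i j| ≤ (n : ℝ) * (max CC1 0 * max CR2 0) :=
      fun η hη θ hθ i j => abs_mul_entry_le (C1 s η) (R2 η θ) (le_max_right _ _)
        (fun i j => bC1' s hs η hη i j) (fun i j => bR2' η hη θ hθ i j) i j
    have bC2R1 : ∀ η ∈ Icc a b, ∀ θ ∈ Icc a b, ∀ i j,
        |(C2 s η * R1 η θ) i j| ≤ (n : ℝ) * (max CC2 0 * max CR1 0) :=
      fun η hη θ hθ i j => abs_mul_entry_le (C2 s η) (R1 η θ) (le_max_right _ _)
        (fun i j => bC2' s hs η hη i j) (fun i j => bR1' η hη θ hθ i j) i j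
    have bC2R2 : ∀ η ∈ Icc a b, ∀ θ ∈ Icc a b, ∀ i j,
        |(C2 s η * R2 η θ) i j| ≤ (n : ℝ) * (max CC2 0 * max CR2 0) :=
      fun η hη θ hθ i j => abs_mul_entry_le (C2 s η) (R2 η θ) (le_max_right _ _)
        (fun i j => bC2' s hs η hη i j) (fun i j => bR2' η hη θ hθ i j) i j
    -- basic integrable pieces
    have hIB2Q1 : ∀ (c d : ℝ), Ioc c d ⊆ Ioc a b → ∀ k,
        Integrable (fun η => (B2 s * Q1 η).mulVec (z η) k) (volume.restrict (Ioc c d)) :=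
      fun c d hcd k => integrable_matvec (hcd.trans hsubab)
        (fun i j => (measurable_mul_entry (F := fun _ : ℝ => B2 s)
          (fun _ _ => measurable_const) mQ1 i j).aestronglyMeasurable)
        (fun t ht i j => abs_mul_entry_le (B2 s) (Q1 t) (le_max_right CB2 0)
          (fun i j => bB2' s hs i j) (fun i j => bQ1' t ht i j) i j)
        (hzOn hcd) k
    have hIDR1 : ∀ k, Integrable (fun η => (D s * R1 s η).mulVec (z η) k)
        (volume.restrict (Ioc a s)) :=
      fun k => integrable_matvec hsubas'
        (fun i j => (measurable_mul_entry (F := fun _ : ℝ => D s)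
          (fun _ _ => measurable_const) mR1s i j).aestronglyMeasurable)
        (fun t ht i j => abs_mul_entry_le (D s) (R1 s t) (le_max_right CD 0)
          (fun i j => bD' s hs i j) (fun i j => bR1' s hs t ht i j) i j)
        (hzOn hsubas) k
    have hIDR2 : ∀ k, Integrable (fun η => (D s * R2 s η).mulVec (z η) k)
        (volume.restrict (Ioc s b)) :=
      fun k => integrable_matvec hsubsb'
        (fun i j => (measurable_mul_entry (F := fun _ : ℝ => D s)
          (fun _ _ => measurable_const) mR2s i j).aestronglyMeasurable)
        (fun t ht i j => abs_mul_entry_le (D s) (R2 s t) (le_max_right CD 0)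
          (fun i j => bD' s hs i j) (fun i j => bR2' s hs t ht i j) i j)
        (hzOn hsubsb) k
    have hIC1S : ∀ k, Integrable (fun η => (C1 s η * S η).mulVec (z η) k)
        (volume.restrict (Ioc a s)) :=
      fun k => integrable_matvec hsubas'
        (fun i j => (measurable_mul_entry mC1s mS i j).aestronglyMeasurable)
        (fun t ht i j => abs_mul_entry_le (C1 s t) (S t) (le_max_right CC1 0)
          (fun i j => bC1' s hs t ht i j) (fun i j => bS' t ht i j) i j)
        (hzOn hsubas) k
    have hIC2S : ∀ k, Integrable (fun η => (C2 s η * S η).mulVec (z η) k)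
        (volume.restrict (Ioc s b)) :=
      fun k => integrable_matvec hsubsb'
        (fun i j => (measurable_mul_entry mC2s mS i j).aestronglyMeasurable)
        (fun t ht i j => abs_mul_entry_le (C2 s t) (S t) (le_max_right CC2 0)
          (fun i j => bC2' s hs t ht i j) (fun i j => bS' t ht i j) i j)
        (hzOn hsubsb) k
    have hIC1Q2x : ∀ k, Integrable (fun η => (C1 s η * Q2 η).mulVec x k)
        (volume.restrict (Ioc a s)) :=
      fun k => integrable_matvec_const hsubas'
        (fun i j => (measurable_mul_entry mC1s mQ2 i j).aestronglyMeasurable)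
        (fun t ht i j => abs_mul_entry_le (C1 s t) (Q2 t) (le_max_right CC1 0)
          (fun i j => bC1' s hs t ht i j) (fun i j => bQ2' t ht i j) i j) x k
    have hIC2Q2x : ∀ k, Integrable (fun η => (C2 s η * Q2 η).mulVec x k)
        (volume.restrict (Ioc s b)) :=
      fun k => integrable_matvec_const hsubsb'
        (fun i j => (measurable_mul_entry mC2s mQ2 i j).aestronglyMeasurable)
        (fun t ht i j => abs_mul_entry_le (C2 s t) (Q2 t) (le_max_right CC2 0)
          (fun i j => bC2' s hs t ht i j) (fun i j => bQ2' t ht i j) i j) x k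
    have hC1R2fix : ∀ η ∈ Icc a b, ∀ {c d : ℝ}, c ≤ d → Ioc c d ⊆ Ioc a b →
        IntervalIntegrable (fun θ => (C1 s η * R2 η θ).mulVec (z θ) j) volume c d := by
      intro η hη c d hcd hsub
      refine intervalIntegrable_of_integrable hcd (integrable_matvec (a := a) (b := b)
        (hsub.trans hsubab)
        (fun i j' => (measurable_mul_entry (F := fun _ : ℝ => C1 s η)
          (fun _ _ => measurable_const)
          (fun i j' => (mR2 i j').comp (measurable_const.prodMk measurable_id))
          i j').aestronglyMeasurable)
        (fun θ hθ i j' => abs_mul_entry_le (C1 s η) (R2 η θ) (le_max_right CC1 0)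
          (fun i j' => bC1' s hs η hη i j') (fun i j' => bR2' η hη θ hθ i j') i j')
        (hzOn hsub) j)
    have hC2R1fix : ∀ η ∈ Icc a b, ∀ {c d : ℝ}, c ≤ d → Ioc c d ⊆ Ioc a b →
        IntervalIntegrable (fun θ => (C2 s η * R1 η θ).mulVec (z θ) j) volume c d := by
      intro η hη c d hcd hsub
      refine intervalIntegrable_of_integrable hcd (integrable_matvec (a := a) (b := b)
        (hsub.trans hsubab)
        (fun i j' => (measurable_mul_entry (F := fun _ : ℝ => C2 s η)
          (fun _ _ => measurable_const)
          (fun i j' => (mR1 i j').comp (measurable_const.prodMk measurable_id))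
          i j').aestronglyMeasurable)
        (fun θ hθ i j' => abs_mul_entry_le (C2 s η) (R1 η θ) (le_max_right CC2 0)
          (fun i j' => bC2' s hs η hη i j') (fun i j' => bR1' η hη θ hθ i j') i j')
        (hzOn hsub) j)
    -- parametrized integrable pieces
    have hq3 : Integrable (fun η => ∫ θ in a..η, (C1 s η * R1 η θ).mulVec (z θ) j)
        (volume.restrict (Ioc a s)) :=
      integrable_paramInt_matvec (u := fun _ => a) (w := fun η => η) hsubas
        mC1R1 (by positivity) bC1R1 hzIoc measurable_const measurable_id
        (fun η hη => ⟨hη.1.le, Ioc_subset_Ioc_right (hη.2.trans hsb)⟩) j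
    have hq4 : Integrable (fun η => ∫ θ in η..b, (C1 s η * R2 η θ).mulVec (z θ) j)
        (volume.restrict (Ioc a s)) :=
      integrable_paramInt_matvec (u := fun η => η) (w := fun _ => b) hsubas
        mC1R2 (by positivity) bC1R2 hzIoc measurable_id measurable_const
        (fun η hη => ⟨hη.2.trans hsb, Ioc_subset_Ioc_left hη.1.le⟩) j
    have hq4a : Integrable (fun η => ∫ θ in η..s, (C1 s η * R2 η θ).mulVec (z θ) j)
        (volume.restrict (Ioc a s)) :=
      integrable_paramInt_matvec (u := fun η => η) (w := fun _ => s) hsubas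
        mC1R2 (by positivity) bC1R2 hzIoc measurable_id measurable_const
        (fun η hη => ⟨hη.2, fun θ hθ => ⟨hη.1.trans hθ.1, hθ.2.trans hsb⟩⟩) j
    have hq4b : Integrable (fun η => ∫ θ in s..b, (C1 s η * R2 η θ).mulVec (z θ) j)
        (volume.restrict (Ioc a s)) :=
      integrable_paramInt_matvec (u := fun _ => s) (w := fun _ => b) hsubas
        mC1R2 (by positivity) bC1R2 hzIoc measurable_const measurable_const
        (fun η hη => ⟨hsb, hsubsb⟩) j
    have hr3 : Integrable (fun η => ∫ θ in a..η, (C2 s η * R1 η θ).mulVec (z θ) j)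
        (volume.restrict (Ioc s b)) :=
      integrable_paramInt_matvec (u := fun _ => a) (w := fun η => η) hsubsb
        mC2R1 (by positivity) bC2R1 hzIoc measurable_const measurable_id
        (fun η hη => ⟨(has.trans hη.1.le), Ioc_subset_Ioc_right hη.2⟩) j
    have hr3a : Integrable (fun η => ∫ θ in a..s, (C2 s η * R1 η θ).mulVec (z θ) j)
        (volume.restrict (Ioc s b)) :=
      integrable_paramInt_matvec (u := fun _ => a) (w := fun _ => s) hsubsb
        mC2R1 (by positivity) bC2R1 hzIoc measurable_const measurable_const
        (fun η hη => ⟨has, hsubas⟩) j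
    have hr3b : Integrable (fun η => ∫ θ in s..η, (C2 s η * R1 η θ).mulVec (z θ) j)
        (volume.restrict (Ioc s b)) :=
      integrable_paramInt_matvec (u := fun _ => s) (w := fun η => η) hsubsb
        mC2R1 (by positivity) bC2R1 hzIoc measurable_const measurable_id
        (fun η hη => ⟨hη.1.le, fun θ hθ => ⟨has.trans_lt hθ.1, hθ.2.trans hη.2⟩⟩) j
    have hr4 : Integrable (fun η => ∫ θ in η..b, (C2 s η * R2 η θ).mulVec (z θ) j)
        (volume.restrict (Ioc s b)) :=
      integrable_paramInt_matvec (u := fun η => η) (w := fun _ => b) hsubsb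
        mC2R2 (by positivity) bC2R2 hzIoc measurable_id measurable_const
        (fun η hη => ⟨hη.2, Ioc_subset_Ioc_left (has.trans hη.1.le)⟩) j
    -- uncurried (for Fubini)
    have hUq1 : Integrable (uncurry fun η θ => (C1 s η * R1 η θ).mulVec (z θ) j)
        ((volume.restrict (Ioc a s)).prod (volume.restrict (Ioc a s))) :=
      integrable_prod_matvec hsubas' hsubas' mC1R1 bC1R1 (hzOn hsubas) j
    have hUq2 : Integrable (uncurry fun η θ => (C1 s η * R2 η θ).mulVec (z θ) j)
        ((volume.restrict (Ioc a s)).prod (volume.restrict (Ioc a s))) :=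
      integrable_prod_matvec hsubas' hsubas' mC1R2 bC1R2 (hzOn hsubas) j
    have hUq2r : Integrable (uncurry fun η θ => (C1 s η * R2 η θ).mulVec (z θ) j)
        ((volume.restrict (Ioc a s)).prod (volume.restrict (Ioc s b))) :=
      integrable_prod_matvec hsubas' hsubsb' mC1R2 bC1R2 (hzOn hsubsb) j
    have hUr1 : Integrable (uncurry fun η θ => (C2 s η * R1 η θ).mulVec (z θ) j)
        ((volume.restrict (Ioc s b)).prod (volume.restrict (Ioc a s))) :=
      integrable_prod_matvec hsubsb' hsubas' mC2R1 bC2R1 (hzOn hsubas) j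
    have hUr1s : Integrable (uncurry fun η θ => (C2 s η * R1 η θ).mulVec (z θ) j)
        ((volume.restrict (Ioc s b)).prod (volume.restrict (Ioc s b))) :=
      integrable_prod_matvec hsubsb' hsubsb' mC2R1 bC2R1 (hzOn hsubsb) j
    have hUr2 : Integrable (uncurry fun η θ => (C2 s η * R2 η θ).mulVec (z θ) j)
        ((volume.restrict (Ioc s b)).prod (volume.restrict (Ioc s b))) :=
      integrable_prod_matvec hsubsb' hsubsb' mC2R2 bC2R2 (hzOn hsubsb) j
    -- mInt-entry integrable pieces (RHS)
    have hp4 : Integrable (fun η => (mInt a η (fun θ => C1 s θ * R2 θ η)).mulVec (z η) j)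
        (volume.restrict (Ioc a s)) :=
      integrable_matvec (M := fun η => mInt a η (fun θ => C1 s θ * R2 θ η))
        (C := ((n : ℝ) * (max CC1 0 * max CR2 0)) * (b - a)) hsubas'
        (fun i' j' => (sm_paramInt (G := fun θ η => (C1 s θ * R2 θ η) i' j') (mC1R2 i' j')
          measurable_const measurable_id).aestronglyMeasurable)
        (fun η hη i' j' => by
          show |∫ θ in a..η, (C1 s θ * R2 θ η) i' j'| ≤ _
          exact abs_paramInt_le (G := fun θ η => (C1 s θ * R2 θ η) i' j')
            (C := (n : ℝ) * (max CC1 0 * max CR2 0)) (by positivity)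
            ⟨le_refl a, hab.le⟩ hη (fun θ hθ => bC1R2 θ hθ η hη i' j'))
        (hzOn hsubas) j
    have hp5 : Integrable (fun η => (mInt η s (fun θ => C1 s θ * R1 θ η)).mulVec (z η) j)
        (volume.restrict (Ioc a s)) :=
      integrable_matvec (M := fun η => mInt η s (fun θ => C1 s θ * R1 θ η))
        (C := ((n : ℝ) * (max CC1 0 * max CR1 0)) * (b - a)) hsubas'
        (fun i' j' => (sm_paramInt (G := fun θ η => (C1 s θ * R1 θ η) i' j') (mC1R1 i' j')
          measurable_id measurable_const).aestronglyMeasurable)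
        (fun η hη i' j' => by
          show |∫ θ in η..s, (C1 s θ * R1 θ η) i' j'| ≤ _
          exact abs_paramInt_le (G := fun θ η => (C1 s θ * R1 θ η) i' j')
            (C := (n : ℝ) * (max CC1 0 * max CR1 0)) (by positivity)
            hη hs (fun θ hθ => bC1R1 θ hθ η hη i' j'))
        (hzOn hsubas) j
    have hp6 : Integrable (fun η => (mInt s b (fun θ => C2 s θ * R1 θ η)).mulVec (z η) j)
        (volume.restrict (Ioc a s)) :=
      integrable_matvec (M := fun η => mInt s b (fun θ => C2 s θ * R1 θ η))
        (C := ((n : ℝ) * (max CC2 0 * max CR1 0)) * (b - a)) hsubas'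
        (fun i' j' => (sm_paramInt (G := fun θ η => (C2 s θ * R1 θ η) i' j') (mC2R1 i' j')
          measurable_const measurable_const).aestronglyMeasurable)
        (fun η hη i' j' => by
          show |∫ θ in s..b, (C2 s θ * R1 θ η) i' j'| ≤ _
          exact abs_paramInt_le (G := fun θ η => (C2 s θ * R1 θ η) i' j')
            (C := (n : ℝ) * (max CC2 0 * max CR1 0)) (by positivity)
            hs ⟨hab.le, le_refl b⟩ (fun θ hθ => bC2R1 θ hθ η hη i' j'))
        (hzOn hsubas) j
    have hp4' : Integrable (fun η => (mInt a s (fun θ => C1 s θ * R2 θ η)).mulVec (z η) j)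
        (volume.restrict (Ioc s b)) :=
      integrable_matvec (M := fun η => mInt a s (fun θ => C1 s θ * R2 θ η))
        (C := ((n : ℝ) * (max CC1 0 * max CR2 0)) * (b - a)) hsubsb'
        (fun i' j' => (sm_paramInt (G := fun θ η => (C1 s θ * R2 θ η) i' j') (mC1R2 i' j')
          measurable_const measurable_const).aestronglyMeasurable)
        (fun η hη i' j' => by
          show |∫ θ in a..s, (C1 s θ * R2 θ η) i' j'| ≤ _
          exact abs_paramInt_le (G := fun θ η => (C1 s θ * R2 θ η) i' j')
            (C := (n : ℝ) * (max CC1 0 * max CR2 0)) (by positivity)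
            ⟨le_refl a, hab.le⟩ hs (fun θ hθ => bC1R2 θ hθ η hη i' j'))
        (hzOn hsubsb) j
    have hp5' : Integrable (fun η => (mInt s η (fun θ => C2 s θ * R2 θ η)).mulVec (z η) j)
        (volume.restrict (Ioc s b)) :=
      integrable_matvec (M := fun η => mInt s η (fun θ => C2 s θ * R2 θ η))
        (C := ((n : ℝ) * (max CC2 0 * max CR2 0)) * (b - a)) hsubsb'
        (fun i' j' => (sm_paramInt (G := fun θ η => (C2 s θ * R2 θ η) i' j') (mC2R2 i' j')
          measurable_const measurable_id).aestronglyMeasurable)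
        (fun η hη i' j' => by
          show |∫ θ in s..η, (C2 s θ * R2 θ η) i' j'| ≤ _
          exact abs_paramInt_le (G := fun θ η => (C2 s θ * R2 θ η) i' j')
            (C := (n : ℝ) * (max CC2 0 * max CR2 0)) (by positivity)
            hs hη (fun θ hθ => bC2R2 θ hθ η hη i' j'))
        (hzOn hsubsb) j
    have hp6' : Integrable (fun η => (mInt η b (fun θ => C2 s θ * R1 θ η)).mulVec (z η) j)
        (volume.restrict (Ioc s b)) :=
      integrable_matvec (M := fun η => mInt η b (fun θ => C2 s θ * R1 θ η))
        (C := ((n : ℝ) * (max CC2 0 * max CR1 0)) * (b - a)) hsubsb'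
        (fun i' j' => (sm_paramInt (G := fun θ η => (C2 s θ * R1 θ η) i' j') (mC2R1 i' j')
          measurable_id measurable_const).aestronglyMeasurable)
        (fun η hη i' j' => by
          show |∫ θ in η..b, (C2 s θ * R1 θ η) i' j'| ≤ _
          exact abs_paramInt_le (G := fun θ η => (C2 s θ * R1 θ η) i' j')
            (C := (n : ℝ) * (max CC2 0 * max CR1 0)) (by positivity)
            hη ⟨hab.le, le_refl b⟩ (fun θ hθ => bC2R1 θ hθ η hη i' j'))
        (hzOn hsubsb) j
    -- the goal, explicitly
    show (B2 s).mulVec (P.mulVec x + fun k => ∫ t in a..b, (Q1 t).mulVec (z t) k) j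
        + (D s).mulVec ((Q2 s).mulVec x + (S s).mulVec (z s)
            + (fun k => ∫ η in a..s, (R1 s η).mulVec (z η) k)
            + (fun k => ∫ η in s..b, (R2 s η).mulVec (z η) k)) j
        + (∫ η in a..s, (C1 s η).mulVec ((Q2 η).mulVec x + (S η).mulVec (z η)
            + (fun k => ∫ θ in a..η, (R1 η θ).mulVec (z θ) k)
            + (fun k => ∫ θ in η..b, (R2 η θ).mulVec (z θ) k)) j)
        + (∫ η in s..b, (C2 s η).mulVec ((Q2 η).mulVec x + (S η).mulVec (z η)
            + (fun k => ∫ θ in a..η, (R1 η θ).mulVec (z θ) k)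
            + (fun k => ∫ θ in η..b, (R2 η θ).mulVec (z θ) k)) j)
      = (Q2comp a b P B2 Q2 D C1 C2 s).mulVec x j
        + (Scomp D S s).mulVec (z s) j
        + (∫ η in a..s, (R1comp a b Q1 B2 D S C1 C2 R1 R2 s η).mulVec (z η) j)
        + (∫ η in s..b, (R2comp a b Q1 B2 D S C1 C2 R1 R2 s η).mulVec (z η) j)
    -- LHS pieces
    have f1 : (B2 s).mulVec (P.mulVec x + fun k => ∫ t in a..b, (Q1 t).mulVec (z t) k) j
        = (B2 s * P).mulVec x j + ∫ t in a..b, (B2 s * Q1 t).mulVec (z t) j := by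
      rw [Matrix.mulVec_add]
      simp only [Pi.add_apply]
      rw [Matrix.mulVec_mulVec]
      congr 1
      exact (mulVec_intInt (B2 s) (fun t => (Q1 t).mulVec (z t))
        (fun k => intervalIntegrable_of_integrable hab.le (hI1 k)) j).trans
        (by simp_rw [Matrix.mulVec_mulVec])
    have f9 : (∫ t in a..b, (B2 s * Q1 t).mulVec (z t) j)
        = (∫ t in a..s, (B2 s * Q1 t).mulVec (z t) j)
          + ∫ t in s..b, (B2 s * Q1 t).mulVec (z t) j :=
      (intervalIntegral.integral_add_adjacent_intervals
        (intervalIntegrable_of_integrable has (hIB2Q1 a s hsubas j))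
        (intervalIntegrable_of_integrable hsb (hIB2Q1 s b hsubsb j))).symm
    have f2 : (D s).mulVec ((Q2 s).mulVec x + (S s).mulVec (z s)
          + (fun k => ∫ η in a..s, (R1 s η).mulVec (z η) k)
          + (fun k => ∫ η in s..b, (R2 s η).mulVec (z η) k)) j
        = (D s * Q2 s).mulVec x j + (D s * S s).mulVec (z s) j
          + (∫ η in a..s, (D s * R1 s η).mulVec (z η) j)
          + (∫ η in s..b, (D s * R2 s η).mulVec (z η) j) := hWexp (D s) s hs j
    have f3 : (∫ η in a..s, (C1 s η).mulVec ((Q2 η).mulVec x + (S η).mulVec (z η)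
          + (fun k => ∫ θ in a..η, (R1 η θ).mulVec (z θ) k)
          + (fun k => ∫ θ in η..b, (R2 η θ).mulVec (z θ) k)) j)
        = (∫ η in a..s, (C1 s η * Q2 η).mulVec x j)
          + (∫ η in a..s, (C1 s η * S η).mulVec (z η) j)
          + (∫ η in a..s, ∫ θ in a..η, (C1 s η * R1 η θ).mulVec (z θ) j)
          + (∫ η in a..s, ∫ θ in η..b, (C1 s η * R2 η θ).mulVec (z θ) j) := by
      rw [intervalIntegral.integral_of_le has]
      rw [setIntegral_congr_fun (g := fun η => (C1 s η * Q2 η).mulVec x j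
          + (C1 s η * S η).mulVec (z η) j
          + (∫ θ in a..η, (C1 s η * R1 η θ).mulVec (z θ) j)
          + ∫ θ in η..b, (C1 s η * R2 η θ).mulVec (z θ) j) measurableSet_Ioc
        (fun η hη => hWexp (C1 s η) η (hsubas' hη) j)]
      rw [← intervalIntegral.integral_of_le has]
      have ha1 : Integrable (fun η => (C1 s η * Q2 η).mulVec x j
          + (C1 s η * S η).mulVec (z η) j) (volume.restrict (Ioc a s)) :=
        (hIC1Q2x j).add (hIC1S j)
      have ha2 : Integrable (fun η => (C1 s η * Q2 η).mulVec x j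
          + (C1 s η * S η).mulVec (z η) j
          + ∫ θ in a..η, (C1 s η * R1 η θ).mulVec (z θ) j) (volume.restrict (Ioc a s)) :=
        ha1.add hq3
      rw [isum has ha2 hq4, isum has ha1 hq3, isum has (hIC1Q2x j) (hIC1S j)]
    have f6 : (∫ η in s..b, (C2 s η).mulVec ((Q2 η).mulVec x + (S η).mulVec (z η)
          + (fun k => ∫ θ in a..η, (R1 η θ).mulVec (z θ) k)
          + (fun k => ∫ θ in η..b, (R2 η θ).mulVec (z θ) k)) j)
        = (∫ η in s..b, (C2 s η * Q2 η).mulVec x j)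
          + (∫ η in s..b, (C2 s η * S η).mulVec (z η) j)
          + (∫ η in s..b, ∫ θ in a..η, (C2 s η * R1 η θ).mulVec (z θ) j)
          + (∫ η in s..b, ∫ θ in η..b, (C2 s η * R2 η θ).mulVec (z θ) j) := by
      rw [intervalIntegral.integral_of_le hsb]
      rw [setIntegral_congr_fun (g := fun η => (C2 s η * Q2 η).mulVec x j
          + (C2 s η * S η).mulVec (z η) j
          + (∫ θ in a..η, (C2 s η * R1 η θ).mulVec (z θ) j)
          + ∫ θ in η..b, (C2 s η * R2 η θ).mulVec (z θ) j) measurableSet_Ioc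
        (fun η hη => hWexp (C2 s η) η (hsubsb' hη) j)]
      rw [← intervalIntegral.integral_of_le hsb]
      have ha1 : Integrable (fun η => (C2 s η * Q2 η).mulVec x j
          + (C2 s η * S η).mulVec (z η) j) (volume.restrict (Ioc s b)) :=
        (hIC2Q2x j).add (hIC2S j)
      have ha2 : Integrable (fun η => (C2 s η * Q2 η).mulVec x j
          + (C2 s η * S η).mulVec (z η) j
          + ∫ θ in a..η, (C2 s η * R1 η θ).mulVec (z θ) j) (volume.restrict (Ioc s b)) :=
        ha1.add hr3
      rw [isum hsb ha2 hr4, isum hsb ha1 hr3, isum hsb (hIC2Q2x j) (hIC2S j)]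
    -- x-term conversions
    have f3x : (∫ η in a..s, (C1 s η * Q2 η).mulVec x j)
        = (mInt a s (fun η => C1 s η * Q2 η)).mulVec x j :=
      intInt_mulVec_const (M := fun η => C1 s η * Q2 η) x
        (fun i' j' => intervalIntegrable_entry has hsubas'
          (measurable_mul_entry mC1s mQ2 i' j')
          (fun t ht => abs_mul_entry_le (C1 s t) (Q2 t) (le_max_right CC1 0)
            (fun i j => bC1' s hs t ht i j) (fun i j => bQ2' t ht i j) i' j')) j
    have f6x : (∫ η in s..b, (C2 s η * Q2 η).mulVec x j)
        = (mInt s b (fun η => C2 s η * Q2 η)).mulVec x j :=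
      intInt_mulVec_const (M := fun η => C2 s η * Q2 η) x
        (fun i' j' => intervalIntegrable_entry hsb hsubsb'
          (measurable_mul_entry mC2s mQ2 i' j')
          (fun t ht => abs_mul_entry_le (C2 s t) (Q2 t) (le_max_right CC2 0)
            (fun i j => bC2' s hs t ht i j) (fun i j => bQ2' t ht i j) i' j')) j
    -- Fubini pieces
    have f4 : (∫ η in a..s, ∫ θ in a..η, (C1 s η * R1 η θ).mulVec (z θ) j)
        = ∫ η in a..s, (mInt η s (fun θ => C1 s θ * R1 θ η)).mulVec (z η) j := by
      rw [triangle_swap_lower has hUq1]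
      rw [intervalIntegral.integral_of_le has, intervalIntegral.integral_of_le has]
      refine setIntegral_congr_fun measurableSet_Ioc (fun t ht => ?_)
      exact intInt_mulVec_const (M := fun θ => C1 s θ * R1 θ t) (z t)
        (fun i' j' => intervalIntegrable_entry ht.2
          (fun θ hθ => ⟨(ht.1.trans hθ.1).le, hθ.2.trans hsb⟩)
          (measurable_mul_entry (F := fun θ => C1 s θ) (G := fun θ => R1 θ t)
            mC1s (fun i j => (mR1 i j).comp (measurable_id.prodMk measurable_const)) i' j')
          (fun θ hθ => bC1R1 θ hθ t (hsubas' ht) i' j')) j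
    have f5 : (∫ η in a..s, ∫ θ in η..b, (C1 s η * R2 η θ).mulVec (z θ) j)
        = (∫ η in a..s, (mInt a η (fun θ => C1 s θ * R2 θ η)).mulVec (z η) j)
          + ∫ η in s..b, (mInt a s (fun θ => C1 s θ * R2 θ η)).mulVec (z η) j := by
      have hsplit : (∫ η in a..s, ∫ θ in η..b, (C1 s η * R2 η θ).mulVec (z θ) j)
          = (∫ η in a..s, ∫ θ in η..s, (C1 s η * R2 η θ).mulVec (z θ) j)
            + ∫ η in a..s, ∫ θ in s..b, (C1 s η * R2 η θ).mulVec (z θ) j := by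
        rw [intervalIntegral.integral_of_le has]
        rw [setIntegral_congr_fun (g := fun η =>
            (∫ θ in η..s, (C1 s η * R2 η θ).mulVec (z θ) j)
              + ∫ θ in s..b, (C1 s η * R2 η θ).mulVec (z θ) j) measurableSet_Ioc
          (fun η hη => (intervalIntegral.integral_add_adjacent_intervals
            (hC1R2fix η (hsubas' hη) hη.2 (fun θ hθ => ⟨hη.1.trans hθ.1, hθ.2.trans hsb⟩))
            (hC1R2fix η (hsubas' hη) hsb hsubsb)).symm)]
        rw [← intervalIntegral.integral_of_le has]
        rw [isum has hq4a hq4b]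
      rw [hsplit]
      congr 1
      · rw [triangle_swap_upper has hUq2]
        rw [intervalIntegral.integral_of_le has, intervalIntegral.integral_of_le has]
        refine setIntegral_congr_fun measurableSet_Ioc (fun t ht => ?_)
        exact intInt_mulVec_const (M := fun θ => C1 s θ * R2 θ t) (z t)
          (fun i' j' => intervalIntegrable_entry ht.1.le
            (fun θ hθ => ⟨hθ.1.le, hθ.2.trans (ht.2.trans hsb)⟩)
            (measurable_mul_entry (F := fun θ => C1 s θ) (G := fun θ => R2 θ t)
              mC1s (fun i j => (mR2 i j).comp (measurable_id.prodMk measurable_const)) i' j')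
            (fun θ hθ => bC1R2 θ hθ t (hsubas' ht) i' j')) j
      · rw [rect_swap has hsb hUq2r]
        rw [intervalIntegral.integral_of_le hsb, intervalIntegral.integral_of_le hsb]
        refine setIntegral_congr_fun measurableSet_Ioc (fun t ht => ?_)
        exact intInt_mulVec_const (M := fun θ => C1 s θ * R2 θ t) (z t)
          (fun i' j' => intervalIntegrable_entry has hsubas'
            (measurable_mul_entry (F := fun θ => C1 s θ) (G := fun θ => R2 θ t)
              mC1s (fun i j => (mR2 i j).comp (measurable_id.prodMk measurable_const)) i' j')
            (fun θ hθ => bC1R2 θ hθ t (hsubsb' ht) i' j')) j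
    have f7 : (∫ η in s..b, ∫ θ in a..η, (C2 s η * R1 η θ).mulVec (z θ) j)
        = (∫ η in a..s, (mInt s b (fun θ => C2 s θ * R1 θ η)).mulVec (z η) j)
          + ∫ η in s..b, (mInt η b (fun θ => C2 s θ * R1 θ η)).mulVec (z η) j := by
      have hsplit : (∫ η in s..b, ∫ θ in a..η, (C2 s η * R1 η θ).mulVec (z θ) j)
          = (∫ η in s..b, ∫ θ in a..s, (C2 s η * R1 η θ).mulVec (z θ) j)
            + ∫ η in s..b, ∫ θ in s..η, (C2 s η * R1 η θ).mulVec (z θ) j := by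
        rw [intervalIntegral.integral_of_le hsb]
        rw [setIntegral_congr_fun (g := fun η =>
            (∫ θ in a..s, (C2 s η * R1 η θ).mulVec (z θ) j)
              + ∫ θ in s..η, (C2 s η * R1 η θ).mulVec (z θ) j) measurableSet_Ioc
          (fun η hη => (intervalIntegral.integral_add_adjacent_intervals
            (hC2R1fix η (hsubsb' hη) has hsubas)
            (hC2R1fix η (hsubsb' hη) hη.1.le
              (fun θ hθ => ⟨has.trans_lt hθ.1, hθ.2.trans hη.2⟩))).symm)]
        rw [← intervalIntegral.integral_of_le hsb]
        rw [isum hsb hr3a hr3b]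
      rw [hsplit]
      congr 1
      · rw [rect_swap hsb has hUr1]
        rw [intervalIntegral.integral_of_le has, intervalIntegral.integral_of_le has]
        refine setIntegral_congr_fun measurableSet_Ioc (fun t ht => ?_)
        exact intInt_mulVec_const (M := fun θ => C2 s θ * R1 θ t) (z t)
          (fun i' j' => intervalIntegrable_entry hsb hsubsb'
            (measurable_mul_entry (F := fun θ => C2 s θ) (G := fun θ => R1 θ t)
              mC2s (fun i j => (mR1 i j).comp (measurable_id.prodMk measurable_const)) i' j')
            (fun θ hθ => bC2R1 θ hθ t (hsubas' ht) i' j')) j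
      · rw [triangle_swap_lower hsb hUr1s]
        rw [intervalIntegral.integral_of_le hsb, intervalIntegral.integral_of_le hsb]
        refine setIntegral_congr_fun measurableSet_Ioc (fun t ht => ?_)
        exact intInt_mulVec_const (M := fun θ => C2 s θ * R1 θ t) (z t)
          (fun i' j' => intervalIntegrable_entry ht.2
            (fun θ hθ => ⟨(has.trans (ht.1.trans hθ.1).le), hθ.2⟩)
            (measurable_mul_entry (F := fun θ => C2 s θ) (G := fun θ => R1 θ t)
              mC2s (fun i j => (mR1 i j).comp (measurable_id.prodMk measurable_const)) i' j')
            (fun θ hθ => bC2R1 θ hθ t (hsubsb' ht) i' j')) j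
    have f8 : (∫ η in s..b, ∫ θ in η..b, (C2 s η * R2 η θ).mulVec (z θ) j)
        = ∫ η in s..b, (mInt s η (fun θ => C2 s θ * R2 θ η)).mulVec (z η) j := by
      rw [triangle_swap_upper hsb hUr2]
      rw [intervalIntegral.integral_of_le hsb, intervalIntegral.integral_of_le hsb]
      refine setIntegral_congr_fun measurableSet_Ioc (fun t ht => ?_)
      exact intInt_mulVec_const (M := fun θ => C2 s θ * R2 θ t) (z t)
        (fun i' j' => intervalIntegrable_entry ht.1.le
          (fun θ hθ => ⟨(has.trans_lt hθ.1).le, hθ.2.trans ht.2⟩)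
          (measurable_mul_entry (F := fun θ => C2 s θ) (G := fun θ => R2 θ t)
            mC2s (fun i j => (mR2 i j).comp (measurable_id.prodMk measurable_const)) i' j')
          (fun θ hθ => bC2R2 θ hθ t (hsubsb' ht) i' j')) j
    -- RHS expansions
    have g1 : (Q2comp a b P B2 Q2 D C1 C2 s).mulVec x j
        = (B2 s * P).mulVec x j + (D s * Q2 s).mulVec x j
          + (mInt a s (fun η => C1 s η * Q2 η)).mulVec x j
          + (mInt s b (fun η => C2 s η * Q2 η)).mulVec x j := by
      simp only [Q2comp, Matrix.add_mulVec, Pi.add_apply]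
    have g2 : (Scomp D S s).mulVec (z s) j = (D s * S s).mulVec (z s) j := rfl
    have g3 : (∫ η in a..s, (R1comp a b Q1 B2 D S C1 C2 R1 R2 s η).mulVec (z η) j)
        = (∫ η in a..s, (B2 s * Q1 η).mulVec (z η) j)
          + (∫ η in a..s, (D s * R1 s η).mulVec (z η) j)
          + (∫ η in a..s, (C1 s η * S η).mulVec (z η) j)
          + (∫ η in a..s, (mInt a η (fun θ => C1 s θ * R2 θ η)).mulVec (z η) j)
          + (∫ η in a..s, (mInt η s (fun θ => C1 s θ * R1 θ η)).mulVec (z η) j)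
          + (∫ η in a..s, (mInt s b (fun θ => C2 s θ * R1 θ η)).mulVec (z η) j) := by
      simp only [R1comp, Matrix.add_mulVec, Pi.add_apply]
      have hb1 : Integrable (fun η => (B2 s * Q1 η).mulVec (z η) j
          + (D s * R1 s η).mulVec (z η) j) (volume.restrict (Ioc a s)) :=
        (hIB2Q1 a s hsubas j).add (hIDR1 j)
      have hb2 : Integrable (fun η => (B2 s * Q1 η).mulVec (z η) j
          + (D s * R1 s η).mulVec (z η) j
          + (C1 s η * S η).mulVec (z η) j) (volume.restrict (Ioc a s)) := hb1.add (hIC1S j)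
      have hb3 : Integrable (fun η => (B2 s * Q1 η).mulVec (z η) j
          + (D s * R1 s η).mulVec (z η) j
          + (C1 s η * S η).mulVec (z η) j
          + (mInt a η (fun θ => C1 s θ * R2 θ η)).mulVec (z η) j)
          (volume.restrict (Ioc a s)) := hb2.add hp4
      have hb4 : Integrable (fun η => (B2 s * Q1 η).mulVec (z η) j
          + (D s * R1 s η).mulVec (z η) j
          + (C1 s η * S η).mulVec (z η) j
          + (mInt a η (fun θ => C1 s θ * R2 θ η)).mulVec (z η) j
          + (mInt η s (fun θ => C1 s θ * R1 θ η)).mulVec (z η) j)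
          (volume.restrict (Ioc a s)) := hb3.add hp5
      rw [isum has hb4 hp6, isum has hb3 hp5, isum has hb2 hp4, isum has hb1 (hIC1S j),
        isum has (hIB2Q1 a s hsubas j) (hIDR1 j)]
    have g4 : (∫ η in s..b, (R2comp a b Q1 B2 D S C1 C2 R1 R2 s η).mulVec (z η) j)
        = (∫ η in s..b, (B2 s * Q1 η).mulVec (z η) j)
          + (∫ η in s..b, (D s * R2 s η).mulVec (z η) j)
          + (∫ η in s..b, (C2 s η * S η).mulVec (z η) j)
          + (∫ η in s..b, (mInt a s (fun θ => C1 s θ * R2 θ η)).mulVec (z η) j)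
          + (∫ η in s..b, (mInt s η (fun θ => C2 s θ * R2 θ η)).mulVec (z η) j)
          + (∫ η in s..b, (mInt η b (fun θ => C2 s θ * R1 θ η)).mulVec (z η) j) := by
      simp only [R2comp, Matrix.add_mulVec, Pi.add_apply]
      have hb1 : Integrable (fun η => (B2 s * Q1 η).mulVec (z η) j
          + (D s * R2 s η).mulVec (z η) j) (volume.restrict (Ioc s b)) :=
        (hIB2Q1 s b hsubsb j).add (hIDR2 j)
      have hb2 : Integrable (fun η => (B2 s * Q1 η).mulVec (z η) j
          + (D s * R2 s η).mulVec (z η) j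
          + (C2 s η * S η).mulVec (z η) j) (volume.restrict (Ioc s b)) := hb1.add (hIC2S j)
      have hb3 : Integrable (fun η => (B2 s * Q1 η).mulVec (z η) j
          + (D s * R2 s η).mulVec (z η) j
          + (C2 s η * S η).mulVec (z η) j
          + (mInt a s (fun θ => C1 s θ * R2 θ η)).mulVec (z η) j)
          (volume.restrict (Ioc s b)) := hb2.add hp4'
      have hb4 : Integrable (fun η => (B2 s * Q1 η).mulVec (z η) j
          + (D s * R2 s η).mulVec (z η) j
          + (C2 s η * S η).mulVec (z η) j
          + (mInt a s (fun θ => C1 s θ * R2 θ η)).mulVec (z η) j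
          + (mInt s η (fun θ => C2 s θ * R2 θ η)).mulVec (z η) j)
          (volume.restrict (Ioc s b)) := hb3.add hp5'
      rw [isum hsb hb4 hp6', isum hsb hb3 hp5', isum hsb hb2 hp4', isum hsb hb1 (hIC2S j),
        isum hsb (hIB2Q1 s b hsubsb j) (hIDR2 j)]
    rw [f1, f9, f2, f3, f3x, f6, f6x, f4, f5, f7, f8, g1, g2, g3, g4]
    ring


end
end

section
/- For any matrix P ∈ ℝ^{m×m} and bounded measurable functions Q₁ : [a,b] → ℝ^{m×n}, Q₂ : [a,b] → ℝ^{n×m}, S : [a,b] → ℝ^{n×n}, R₁, R₂ : [a,b]×[a,b] → ℝ^{n×n}, define P̂ = Pᵀ, Q̂₁(s) = Q₂(s)ᵀ, Q̂₂(s) = Q₁(s)ᵀ, Ŝ(s) = S(s)ᵀ, R̂₁(s,η) = R₂(η,s)ᵀ, R̂₂(s,η) = R₁(η,s)ᵀ. Then for all (x₁,x₂), (y₁,y₂) ∈ ℝ^m × L²([a,b];ℝ^n), ⟨(x₁,x₂), 𝒫_{P,Q₁,Q₂,S,R₁,R₂}(y₁,y₂)⟩_X = ⟨𝒫_{P̂,Q̂₁,Q̂₂,Ŝ,R̂₁,R̂₂}(x₁,x₂),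 (y₁,y₂)⟩_X; that is, 𝒫_{P̂,Q̂₁,Q̂₂,Ŝ,R̂₁,R̂₂} is the adjoint of 𝒫_{P,Q₁,Q₂,S,R₁,R₂} with respect to ⟨·,·⟩_X. -/
open MeasureTheory Matrix Set

noncomputable section

namespace AdjAux

variable {a b : ℝ}

lemma memL2_comp {n : ℕ} {z : ℝ → Fin n → ℝ} (hz : MemL2 a b z) (i : Fin n) :
    MemLp (fun s => z s i) 2 (volume.restrict (Ioc a b)) := by
  have hz' : MemLp z 2 (volume.restrict (Ioc a b)) :=
    hz.mono_measure (Measure.restrict_mono Ioc_subset_Icc_self le_rfl)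
  exact hz'.of_le ((continuous_apply i).comp_aestronglyMeasurable hz'.1)
    (Filter.Eventually.of_forall fun s => norm_le_pi_norm (z s) i)

lemma integrable_mul_L2 {f g : ℝ → ℝ}
    (hf : MemLp f 2 (volume.restrict (Ioc a b)))
    (hg : MemLp g 2 (volume.restrict (Ioc a b))) :
    Integrable (fun s => f s * g s) (volume.restrict (Ioc a b)) := by
  have h := hg.smul hf (r := 1)
  rw [memLp_one_iff_integrable] at h
  exact h

lemma integrable_bdd_mul {k h : ℝ → ℝ} (hk : Measurable k) {C : ℝ}
    (hC : ∀ s ∈ Icc a b, |k s| ≤ C)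
    (hh : Integrable h (volume.restrict (Ioc a b))) :
    Integrable (fun s => k s * h s) (volume.restrict (Ioc a b)) := by
  refine hh.bdd_mul (c := C) hk.aestronglyMeasurable ?_
  filter_upwards [ae_restrict_mem measurableSet_Ioc] with s hs
  simpa [Real.norm_eq_abs] using hC s (Ioc_subset_Icc_self hs)

lemma dot_mv {k l : ℕ} (x : Fin k → ℝ) (M : Matrix (Fin k) (Fin l) ℝ) (v : Fin l → ℝ) :
    (Mᵀ *ᵥ x) ⬝ᵥ v = x ⬝ᵥ (M *ᵥ v) := by
  rw [Matrix.mulVec_transpose, Matrix.dotProduct_mulVec]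

lemma dot_mv_expand {k l : ℕ} (x : Fin k → ℝ) (M : Matrix (Fin k) (Fin l) ℝ) (v : Fin l → ℝ) :
    x ⬝ᵥ (M *ᵥ v) = ∑ i, ∑ j, M i j * (x i * v j) := by
  simp only [dotProduct, mulVec, Finset.mul_sum]
  exact Finset.sum_congr rfl fun i _ => Finset.sum_congr rfl fun j _ => by ring

lemma dot_integral {n : ℕ} (x : Fin n → ℝ) (h : ℝ → Fin n → ℝ) (μ : Measure ℝ)
    (hh : ∀ i, Integrable (fun t => h t i) μ) :
    x ⬝ᵥ (fun i => ∫ t, h t i ∂μ) = ∫ t, x ⬝ᵥ h t ∂μ := by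
  simp only [dotProduct]
  rw [integral_finset_sum _ (fun i _ => (hh i).const_mul (x i))]
  simp [integral_const_mul]

lemma integral_dot {n : ℕ} (y : Fin n → ℝ) (h : ℝ → Fin n → ℝ) (μ : Measure ℝ)
    (hh : ∀ i, Integrable (fun t => h t i) μ) :
    (fun i => ∫ t, h t i ∂μ) ⬝ᵥ y = ∫ t, h t ⬝ᵥ y ∂μ := by
  simp only [dotProduct]
  rw [integral_finset_sum _ (fun i _ => (hh i).mul_const (y i))]
  simp [integral_mul_const]

lemma integrable_ker {k l : ℕ} {K : ℝ → ℝ → Matrix (Fin k) (Fin l) ℝ}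
    (hm : ∀ i j, Measurable fun p : ℝ × ℝ => K p.1 p.2 i j)
    {C : ℝ} (hC : ∀ s ∈ Icc a b, ∀ η ∈ Icc a b, ∀ i j, |K s η i j| ≤ C)
    {f : ℝ → Fin k → ℝ} {g : ℝ → Fin l → ℝ} (hf : MemL2 a b f) (hg : MemL2 a b g) :
    Integrable (fun p : ℝ × ℝ => f p.1 ⬝ᵥ (K p.1 p.2).mulVec (g p.2))
      ((volume.restrict (Ioc a b)).prod (volume.restrict (Ioc a b))) := by
  have hexp : (fun p : ℝ × ℝ => f p.1 ⬝ᵥ (K p.1 p.2).mulVec (g p.2))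
      = fun p => ∑ i, ∑ j, K p.1 p.2 i j * (f p.1 i * g p.2 j) :=
    funext fun p => dot_mv_expand _ _ _
  rw [hexp]
  refine integrable_finset_sum _ fun i _ => integrable_finset_sum _ fun j _ => ?_
  have hfg : Integrable (fun p : ℝ × ℝ => f p.1 i * g p.2 j)
      ((volume.restrict (Ioc a b)).prod (volume.restrict (Ioc a b))) :=
    ((memL2_comp hf i).integrable one_le_two).mul_prod
      ((memL2_comp hg j).integrable one_le_two)
  refine hfg.bdd_mul (c := C) (hm i j).aestronglyMeasurable ?_
  rw [Measure.prod_restrict]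
  filter_upwards [ae_restrict_mem (measurableSet_Ioc.prod measurableSet_Ioc)] with p hp
  simpa [Real.norm_eq_abs] using
    hC p.1 (Ioc_subset_Icc_self hp.1) p.2 (Ioc_subset_Icc_self hp.2) i j

lemma ind_lower (F : ℝ → ℝ → ℝ) {s : ℝ} (hs : s ∈ Ioc a b) :
    ∫ η, (Iic s).indicator (F s) η ∂(volume.restrict (Ioc a b)) = ∫ η in Ioc a s, F s η := by
  rw [integral_indicator measurableSet_Iic, Measure.restrict_restrict measurableSet_Iic]
  have hset : Iic s ∩ Ioc a b = Ioc a s := by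
    ext η
    simp only [mem_inter_iff, mem_Iic, mem_Ioc]
    constructor
    · rintro ⟨h1, h2, h3⟩; exact ⟨h2, h1⟩
    · rintro ⟨h1, h2⟩; exact ⟨h2, h1, h2.trans hs.2⟩
  rw [hset]

lemma ind_upper (F : ℝ → ℝ → ℝ) {s : ℝ} (hs : s ∈ Ioc a b) :
    ∫ η, (Ici s).indicator (F s) η ∂(volume.restrict (Ioc a b)) = ∫ η in Ioc s b, F s η := by
  rw [integral_indicator measurableSet_Ici, Measure.restrict_restrict measurableSet_Ici]
  have h : Ici s ∩ Ioc a b = Icc s b := by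
    ext η
    simp only [mem_inter_iff, mem_Ici, mem_Ioc, mem_Icc]
    constructor
    · rintro ⟨h1, h2, h3⟩; exact ⟨h1, h3⟩
    · rintro ⟨h1, h2⟩; exact ⟨h1, hs.1.trans_le h1, h2⟩
  rw [h, integral_Icc_eq_integral_Ioc]

lemma swapT {G : ℝ × ℝ → ℝ}
    (hG : Integrable G ((volume.restrict (Ioc a b)).prod (volume.restrict (Ioc a b)))) :
    ∫ s in Ioc a b, ∫ η in Ioc a b, G (η, s) = ∫ s in Ioc a b, ∫ η in Ioc a b, G (s, η) :=
  MeasureTheory.integral_integral_swap (f := fun s η => G (η, s)) hG.swap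

lemma integrable_mv_comp {k l : ℕ} (R : ℝ → Matrix (Fin k) (Fin l) ℝ)
    (hm : ∀ i j, Measurable fun η => R η i j) {C : ℝ}
    (hC : ∀ η ∈ Icc a b, ∀ i j, |R η i j| ≤ C)
    (z : ℝ → Fin l → ℝ) (hz : ∀ j, Integrable (fun η => z η j) (volume.restrict (Ioc a b)))
    {c d : ℝ} (hsub : Ioc c d ⊆ Ioc a b) (i : Fin k) :
    Integrable (fun η => (R η).mulVec (z η) i) (volume.restrict (Ioc c d)) := by
  have hexp : (fun η => (R η).mulVec (z η) i) = fun η => ∑ j, R η i j * z η j := by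
    funext η; simp [mulVec, dotProduct]
  rw [hexp]
  refine integrable_finset_sum _ fun j _ => ?_
  have hz' : Integrable (fun η => z η j) (volume.restrict (Ioc c d)) :=
    (hz j).mono_measure (Measure.restrict_mono hsub le_rfl)
  refine hz'.bdd_mul (c := C) (hm i j).aestronglyMeasurable ?_
  filter_upwards [ae_restrict_mem measurableSet_Ioc] with η hη
  simpa [Real.norm_eq_abs] using hC η (Ioc_subset_Icc_self (hsub hη)) i j

lemma integrable_dot_mv {k l : ℕ} (M : ℝ → Matrix (Fin k) (Fin l) ℝ)
    (hm : ∀ i j, Measurable fun s => M s i j) {C : ℝ}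
    (hC : ∀ s ∈ Icc a b, ∀ i j, |M s i j| ≤ C)
    {f : ℝ → Fin k → ℝ} {g : ℝ → Fin l → ℝ}
    (hfg : ∀ i j, Integrable (fun s => f s i * g s j) (volume.restrict (Ioc a b))) :
    Integrable (fun s => f s ⬝ᵥ (M s).mulVec (g s)) (volume.restrict (Ioc a b)) := by
  have hexp : (fun s => f s ⬝ᵥ (M s).mulVec (g s))
      = fun s => ∑ i, ∑ j, M s i j * (f s i * g s j) := funext fun s => dot_mv_expand _ _ _
  rw [hexp]
  exact integrable_finset_sum _ fun i _ => integrable_finset_sum _ fun j _ =>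
    integrable_bdd_mul (hm i j) (fun s hs => hC s hs i j) (hfg i j)

end AdjAux

open AdjAux in
theorem adjoint_of_Pop {m n : ℕ} (a b : ℝ) (hab : a < b)
    (P : Matrix (Fin m) (Fin m) ℝ)
    (Q1 : ℝ → Matrix (Fin m) (Fin n) ℝ)
    (Q2 : ℝ → Matrix (Fin n) (Fin m) ℝ)
    (S : ℝ → Matrix (Fin n) (Fin n) ℝ)
    (R1 R2 : ℝ → ℝ → Matrix (Fin n) (Fin n) ℝ)
    (hQ1 : BddMeas a b Q1) (hQ2 : BddMeas a b Q2) (hS : BddMeas a b S)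
    (hR1 : BddMeas2 a b R1) (hR2 : BddMeas2 a b R2) :
    ∀ (x1 : Fin m → ℝ) (x2 : ℝ → Fin n → ℝ) (y1 : Fin m → ℝ) (y2 : ℝ → Fin n → ℝ),
      MemL2 a b x2 → MemL2 a b y2 →
      innerX a b (x1, x2) (Pop a b P Q1 Q2 S R1 R2 (y1, y2))
        = innerX a b
            (Pop a b Pᵀ (fun s => (Q2 s)ᵀ) (fun s => (Q1 s)ᵀ) (fun s => (S s)ᵀ)
              (fun s η => (R2 η s)ᵀ) (fun s η => (R1 η s)ᵀ) (x1, x2))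
            (y1, y2) := by
  obtain ⟨hQ1m, CQ1, hQ1b⟩ := hQ1
  obtain ⟨hQ2m, CQ2, hQ2b⟩ := hQ2
  obtain ⟨hSm, CS, hSb⟩ := hS
  obtain ⟨hR1m, CR1, hR1b⟩ := hR1
  obtain ⟨hR2m, CR2, hR2b⟩ := hR2
  intro x1 x2 y1 y2 hx2 hy2
  have hx2i : ∀ i, Integrable (fun s => x2 s i) (volume.restrict (Ioc a b)) :=
    fun i => (memL2_comp hx2 i).integrable one_le_two
  have hy2i : ∀ i, Integrable (fun s => y2 s i) (volume.restrict (Ioc a b)) :=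
    fun i => (memL2_comp hy2 i).integrable one_le_two
  have hxy : ∀ i j, Integrable (fun s => x2 s i * y2 s j) (volume.restrict (Ioc a b)) :=
    fun i j => integrable_mul_L2 (memL2_comp hx2 i) (memL2_comp hy2 j)
  -- scalar kernels
  set F1 : ℝ → ℝ → ℝ := fun s η => x2 s ⬝ᵥ (R1 s η).mulVec (y2 η) with hF1
  set F2 : ℝ → ℝ → ℝ := fun s η => x2 s ⬝ᵥ (R2 s η).mulVec (y2 η) with hF2
  set G1 : ℝ × ℝ → ℝ := {p : ℝ × ℝ | p.2 ≤ p.1}.indicator (fun p => F1 p.1 p.2) with hG1def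
  set G2 : ℝ × ℝ → ℝ := {p : ℝ × ℝ | p.1 ≤ p.2}.indicator (fun p => F2 p.1 p.2) with hG2def
  have hF1int : Integrable (fun p : ℝ × ℝ => F1 p.1 p.2)
      ((volume.restrict (Ioc a b)).prod (volume.restrict (Ioc a b))) :=
    integrable_ker hR1m hR1b hx2 hy2
  have hF2int : Integrable (fun p : ℝ × ℝ => F2 p.1 p.2)
      ((volume.restrict (Ioc a b)).prod (volume.restrict (Ioc a b))) :=
    integrable_ker hR2m hR2b hx2 hy2
  have hG1 : Integrable G1 ((volume.restrict (Ioc a b)).prod (volume.restrict (Ioc a b))) :=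
    hF1int.indicator (measurableSet_le measurable_snd measurable_fst)
  have hG2 : Integrable G2 ((volume.restrict (Ioc a b)).prod (volume.restrict (Ioc a b))) :=
    hF2int.indicator (measurableSet_le measurable_fst measurable_snd)
  have hG1v : ∀ s η, G1 (s, η) = (Iic s).indicator (F1 s) η := by
    intro s η; simp [hG1def, indicator_apply]
  have hG1v' : ∀ s η, G1 (η, s) = (Ici s).indicator (fun η => F1 η s) η := by
    intro s η; simp [hG1def, indicator_apply]
  have hG2v : ∀ s η, G2 (s, η) = (Ici s).indicator (F2 s) η := by
    intro s η; simp [hG2def, indicator_apply]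
  have hG2v' : ∀ s η, G2 (η, s) = (Iic s).indicator (fun η => F2 η s) η := by
    intro s η; simp [hG2def, indicator_apply]
  have hsIcc : ∀ {s : ℝ}, s ∈ Ioc a b → s ∈ Icc a b := fun hs => Ioc_subset_Icc_self hs
  -- pointwise conversion of the R1 term on the LHS
  have t3 : ∀ s ∈ Ioc a b,
      x2 s ⬝ᵥ (fun i => ∫ η in a..s, (R1 s η).mulVec (y2 η) i)
        = ∫ η in Ioc a b, G1 (s, η) := by
    intro s hs
    have e : (fun i => ∫ η in a..s, (R1 s η).mulVec (y2 η) i)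
        = fun i => ∫ η in Ioc a s, (R1 s η).mulVec (y2 η) i :=
      funext fun i => intervalIntegral.integral_of_le hs.1.le
    calc x2 s ⬝ᵥ (fun i => ∫ η in a..s, (R1 s η).mulVec (y2 η) i)
        = ∫ η in Ioc a s, F1 s η := by
          rw [e]
          exact dot_integral (x2 s) _ _ fun i =>
            integrable_mv_comp (fun η => R1 s η)
              (fun i j => (hR1m i j).comp measurable_prodMk_left)
              (fun η hη i j => hR1b s (hsIcc hs) η hη i j) y2 hy2i
              (Ioc_subset_Ioc le_rfl hs.2) i
      _ = ∫ η, (Iic s).indicator (F1 s) η ∂(volume.restrict (Ioc a b)) :=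
          (ind_lower F1 hs).symm
      _ = ∫ η in Ioc a b, G1 (s, η) := by simp only [hG1v]
  have t4 : ∀ s ∈ Ioc a b,
      x2 s ⬝ᵥ (fun i => ∫ η in s..b, (R2 s η).mulVec (y2 η) i)
        = ∫ η in Ioc a b, G2 (s, η) := by
    intro s hs
    have e : (fun i => ∫ η in s..b, (R2 s η).mulVec (y2 η) i)
        = fun i => ∫ η in Ioc s b, (R2 s η).mulVec (y2 η) i :=
      funext fun i => intervalIntegral.integral_of_le hs.2
    calc x2 s ⬝ᵥ (fun i => ∫ η in s..b, (R2 s η).mulVec (y2 η) i)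
        = ∫ η in Ioc s b, F2 s η := by
          rw [e]
          exact dot_integral (x2 s) _ _ fun i =>
            integrable_mv_comp (fun η => R2 s η)
              (fun i j => (hR2m i j).comp measurable_prodMk_left)
              (fun η hη i j => hR2b s (hsIcc hs) η hη i j) y2 hy2i
              (Ioc_subset_Ioc hs.1.le le_rfl) i
      _ = ∫ η, (Ici s).indicator (F2 s) η ∂(volume.restrict (Ioc a b)) :=
          (ind_upper F2 hs).symm
      _ = ∫ η in Ioc a b, G2 (s, η) := by simp only [hG2v]
  -- pointwise conversion of the kernel terms on the RHS
  have t3' : ∀ s ∈ Ioc a b,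
      (fun i => ∫ η in a..s, ((R2 η s)ᵀ).mulVec (x2 η) i) ⬝ᵥ y2 s
        = ∫ η in Ioc a b, G2 (η, s) := by
    intro s hs
    have e : (fun i => ∫ η in a..s, ((R2 η s)ᵀ).mulVec (x2 η) i)
        = fun i => ∫ η in Ioc a s, ((R2 η s)ᵀ).mulVec (x2 η) i :=
      funext fun i => intervalIntegral.integral_of_le hs.1.le
    calc (fun i => ∫ η in a..s, ((R2 η s)ᵀ).mulVec (x2 η) i) ⬝ᵥ y2 s
        = ∫ η in Ioc a s, ((R2 η s)ᵀ).mulVec (x2 η) ⬝ᵥ y2 s := by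
          rw [e]
          exact integral_dot (y2 s) _ _ fun i =>
            integrable_mv_comp (fun η => (R2 η s)ᵀ)
              (fun i j => by
                simpa [Matrix.transpose_apply, Function.comp_def] using
                  (hR2m j i).comp (measurable_prodMk_right (y := s)))
              (fun η hη i j => by
                simpa [Matrix.transpose_apply] using hR2b η hη s (hsIcc hs) j i)
              x2 hx2i (Ioc_subset_Ioc le_rfl hs.2) i
      _ = ∫ η in Ioc a s, F2 η s := by simp only [dot_mv]; rfl
      _ = ∫ η, (Iic s).indicator (fun η => F2 η s) η ∂(volume.restrict (Ioc a b)) :=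
          (ind_lower (fun s η => F2 η s) hs).symm
      _ = ∫ η in Ioc a b, G2 (η, s) := by simp only [hG2v']
  have t4' : ∀ s ∈ Ioc a b,
      (fun i => ∫ η in s..b, ((R1 η s)ᵀ).mulVec (x2 η) i) ⬝ᵥ y2 s
        = ∫ η in Ioc a b, G1 (η, s) := by
    intro s hs
    have e : (fun i => ∫ η in s..b, ((R1 η s)ᵀ).mulVec (x2 η) i)
        = fun i => ∫ η in Ioc s b, ((R1 η s)ᵀ).mulVec (x2 η) i :=
      funext fun i => intervalIntegral.integral_of_le hs.2
    calc (fun i => ∫ η in s..b, ((R1 η s)ᵀ).mulVec (x2 η) i) ⬝ᵥ y2 s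
        = ∫ η in Ioc s b, ((R1 η s)ᵀ).mulVec (x2 η) ⬝ᵥ y2 s := by
          rw [e]
          exact integral_dot (y2 s) _ _ fun i =>
            integrable_mv_comp (fun η => (R1 η s)ᵀ)
              (fun i j => by
                simpa [Matrix.transpose_apply, Function.comp_def] using
                  (hR1m j i).comp (measurable_prodMk_right (y := s)))
              (fun η hη i j => by
                simpa [Matrix.transpose_apply] using hR1b η hη s (hsIcc hs) j i)
              x2 hx2i (Ioc_subset_Ioc hs.1.le le_rfl) i
      _ = ∫ η in Ioc s b, F1 η s := by simp only [dot_mv]; rfl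
      _ = ∫ η, (Ici s).indicator (fun η => F1 η s) η ∂(volume.restrict (Ioc a b)) :=
          (ind_upper (fun s η => F1 η s) hs).symm
      _ = ∫ η in Ioc a b, G1 (η, s) := by simp only [hG1v']
  -- integrability of the four pieces
  have hB1 : Integrable (fun s => x2 s ⬝ᵥ (Q2 s).mulVec y1) (volume.restrict (Ioc a b)) :=
    integrable_dot_mv Q2 hQ2m hQ2b (f := x2) (g := fun _ => y1)
      (fun i j => (hx2i i).mul_const (y1 j))
  have hB2 : Integrable (fun s => x2 s ⬝ᵥ (S s).mulVec (y2 s)) (volume.restrict (Ioc a b)) :=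
    integrable_dot_mv S hSm hSb hxy
  have hB3 : Integrable (fun s => ∫ η in Ioc a b, G1 (s, η)) (volume.restrict (Ioc a b)) :=
    hG1.integral_prod_left
  have hB4 : Integrable (fun s => ∫ η in Ioc a b, G2 (s, η)) (volume.restrict (Ioc a b)) :=
    hG2.integral_prod_left
  have hC1 : Integrable (fun s => x1 ⬝ᵥ (Q1 s).mulVec (y2 s)) (volume.restrict (Ioc a b)) :=
    integrable_dot_mv Q1 hQ1m hQ1b (f := fun _ => x1) (g := y2)
      (fun i j => (hy2i j).const_mul (x1 i))
  have hC3 : Integrable (fun s => ∫ η in Ioc a b, G2 (η, s)) (volume.restrict (Ioc a b)) :=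
    hG2.integral_prod_right
  have hC4 : Integrable (fun s => ∫ η in Ioc a b, G1 (η, s)) (volume.restrict (Ioc a b)) :=
    hG1.integral_prod_right
  -- LHS normal form
  have hL : innerX a b (x1, x2) (Pop a b P Q1 Q2 S R1 R2 (y1, y2))
      = x1 ⬝ᵥ P.mulVec y1
        + (∫ s in Ioc a b, x1 ⬝ᵥ (Q1 s).mulVec (y2 s))
        + (((∫ s in Ioc a b, x2 s ⬝ᵥ (Q2 s).mulVec y1)
          + (∫ s in Ioc a b, x2 s ⬝ᵥ (S s).mulVec (y2 s))
          + (∫ s in Ioc a b, ∫ η in Ioc a b, G1 (s, η)))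
          + (∫ s in Ioc a b, ∫ η in Ioc a b, G2 (s, η))) := by
    simp only [innerX, Pop]
    have e1 : x1 ⬝ᵥ (P.mulVec y1 + fun i => ∫ s in a..b, (Q1 s).mulVec (y2 s) i)
        = x1 ⬝ᵥ P.mulVec y1 + (∫ s in Ioc a b, x1 ⬝ᵥ (Q1 s).mulVec (y2 s)) := by
      rw [dotProduct_add]
      congr 1
      have e : (fun i => ∫ s in a..b, (Q1 s).mulVec (y2 s) i)
          = fun i => ∫ s in Ioc a b, (Q1 s).mulVec (y2 s) i :=
        funext fun i => intervalIntegral.integral_of_le hab.le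
      rw [e]
      exact dot_integral x1 _ _ fun i =>
        integrable_mv_comp Q1 hQ1m hQ1b y2 hy2i (subset_refl _) i
    rw [e1, intervalIntegral.integral_of_le hab.le]
    have e2 : ∫ s in Ioc a b, x2 s ⬝ᵥ
        ((Q2 s).mulVec y1 + (S s).mulVec (y2 s)
          + (fun i => ∫ η in a..s, (R1 s η).mulVec (y2 η) i)
          + (fun i => ∫ η in s..b, (R2 s η).mulVec (y2 η) i))
        = ∫ s in Ioc a b,
            (x2 s ⬝ᵥ (Q2 s).mulVec y1 + x2 s ⬝ᵥ (S s).mulVec (y2 s)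
              + (∫ η in Ioc a b, G1 (s, η)) + (∫ η in Ioc a b, G2 (s, η))) := by
      refine setIntegral_congr_fun measurableSet_Ioc fun s hs => ?_
      rw [dotProduct_add, dotProduct_add, dotProduct_add, t3 s hs, t4 s hs]
    rw [e2]
    have h1 := integral_add hB1 hB2
    have h2 := integral_add (hB1.add hB2) hB3
    have h3 := integral_add ((hB1.add hB2).add hB3) hB4
    simp only [Pi.add_apply] at h1 h2 h3
    linear_combination h1 + h2 + h3
  -- RHS normal form
  have hR : innerX a b
      (Pop a b Pᵀ (fun s => (Q2 s)ᵀ) (fun s => (Q1 s)ᵀ) (fun s => (S s)ᵀ)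
        (fun s η => (R2 η s)ᵀ) (fun s η => (R1 η s)ᵀ) (x1, x2)) (y1, y2)
      = x1 ⬝ᵥ P.mulVec y1
        + (∫ s in Ioc a b, x2 s ⬝ᵥ (Q2 s).mulVec y1)
        + (((∫ s in Ioc a b, x1 ⬝ᵥ (Q1 s).mulVec (y2 s))
          + (∫ s in Ioc a b, x2 s ⬝ᵥ (S s).mulVec (y2 s))
          + (∫ s in Ioc a b, ∫ η in Ioc a b, G2 (η, s)))
          + (∫ s in Ioc a b, ∫ η in Ioc a b, G1 (η, s))) := by
    simp only [innerX, Pop]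
    have e1 : (Pᵀ.mulVec x1 + fun i => ∫ s in a..b, ((Q2 s)ᵀ).mulVec (x2 s) i) ⬝ᵥ y1
        = x1 ⬝ᵥ P.mulVec y1 + (∫ s in Ioc a b, x2 s ⬝ᵥ (Q2 s).mulVec y1) := by
      rw [add_dotProduct, dot_mv]
      congr 1
      have e : (fun i => ∫ s in a..b, ((Q2 s)ᵀ).mulVec (x2 s) i)
          = fun i => ∫ s in Ioc a b, ((Q2 s)ᵀ).mulVec (x2 s) i :=
        funext fun i => intervalIntegral.integral_of_le hab.le
      rw [e]
      calc (fun i => ∫ s in Ioc a b, ((Q2 s)ᵀ).mulVec (x2 s) i) ⬝ᵥ y1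
          = ∫ s in Ioc a b, ((Q2 s)ᵀ).mulVec (x2 s) ⬝ᵥ y1 :=
            integral_dot y1 _ _ fun i =>
              integrable_mv_comp (fun s => (Q2 s)ᵀ)
                (fun i j => by simpa [Matrix.transpose_apply] using hQ2m j i)
                (fun s hsm i j => by
                  simpa [Matrix.transpose_apply] using hQ2b s hsm j i)
                x2 hx2i (subset_refl _) i
        _ = ∫ s in Ioc a b, x2 s ⬝ᵥ (Q2 s).mulVec y1 := by simp only [dot_mv]
    rw [e1, intervalIntegral.integral_of_le hab.le]
    have e2 : ∫ s in Ioc a b,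
        (((Q1 s)ᵀ).mulVec x1 + ((S s)ᵀ).mulVec (x2 s)
          + (fun i => ∫ η in a..s, ((R2 η s)ᵀ).mulVec (x2 η) i)
          + (fun i => ∫ η in s..b, ((R1 η s)ᵀ).mulVec (x2 η) i)) ⬝ᵥ y2 s
        = ∫ s in Ioc a b,
            (x1 ⬝ᵥ (Q1 s).mulVec (y2 s) + x2 s ⬝ᵥ (S s).mulVec (y2 s)
              + (∫ η in Ioc a b, G2 (η, s)) + (∫ η in Ioc a b, G1 (η, s))) := by
      refine setIntegral_congr_fun measurableSet_Ioc fun s hs => ?_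
      rw [add_dotProduct, add_dotProduct, add_dotProduct, dot_mv, dot_mv,
        t3' s hs, t4' s hs]
    rw [e2]
    have h1 := integral_add hC1 hB2
    have h2 := integral_add (hC1.add hB2) hC3
    have h3 := integral_add ((hC1.add hB2).add hC3) hC4
    simp only [Pi.add_apply] at h1 h2 h3
    linear_combination h1 + h2 + h3
  rw [hL, hR, swapT hG1, swapT hG2]
  ring

end
end

section
/- Suppose P ∈ ℝ^{m×m} is symmetric, S : [a,b] → ℝ^{n×n} is bounded measurable with S(s) symmetric for all s, Q : [a,b] → ℝ^{m×n} and R₁, R₂ : [a,b]×[a,b] → ℝ^{n×n} are bounded measurable, and R₂(s,η) = R₁(η,s)ᵀ for all s, η ∈ [a,b]. Then 𝒫_{P,Q,Qᵀ,S,R₁,R₂} is self-adjoint on ℝ^m × L²([a,b];ℝ^n): for all (x₁,x₂), (y₁,y₂) ∈ ℝ^m × L²([a,b];ℝ^n), ⟨(x₁,x₂), 𝒫_{P,Q,Qᵀ,S,R₁,R₂}(y₁,y₂)⟩_X = ⟨𝒫_{P,Q,Qᵀ,S,R₁,R₂}(x₁,x₂), (y₁,y₂)⟩_X. -/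
open MeasureTheory Matrix Set

noncomputable section

namespace PopAux

variable {n m : ℕ} {a b : ℝ}

lemma finMeas (a b : ℝ) : IsFiniteMeasure (volume.restrict (Ioc a b)) :=
  ⟨by rw [Measure.restrict_apply_univ]; exact measure_Ioc_lt_top⟩

lemma memL2_comp {z : ℝ → Fin n → ℝ} (hz : MemL2 a b z) (i : Fin n) :
    MemLp (fun s => z s i) 2 (volume.restrict (Ioc a b)) := by
  have h : MemLp z 2 (volume.restrict (Ioc a b)) :=
    hz.mono_measure (Measure.restrict_mono Ioc_subset_Icc_self le_rfl)
  exact (ContinuousLinearMap.proj (R := ℝ) (φ := fun _ : Fin n => ℝ) i).comp_memLp' h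

lemma comp_int {z : ℝ → Fin n → ℝ} (hz : MemL2 a b z) (i : Fin n) :
    Integrable (fun s => z s i) (volume.restrict (Ioc a b)) :=
  haveI := finMeas a b
  (memL2_comp hz i).integrable one_le_two

lemma mul_int {x z : ℝ → Fin n → ℝ} (hx : MemL2 a b x) (hz : MemL2 a b z) (i j : Fin n) :
    Integrable (fun s => x s i * z s j) (volume.restrict (Ioc a b)) := by
  have h : MemLp ((fun s => x s i) • (fun s => z s j)) 1 (volume.restrict (Ioc a b)) :=
    (memL2_comp hz j).smul (memL2_comp hx i)
  simpa [Pi.smul_apply, smul_eq_mul, Pi.mul_def] using h.integrable le_rfl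

lemma aux_bdd {C : ℝ} {K g : ℝ → ℝ} (hm : Measurable K)
    (hb : ∀ s ∈ Icc a b, |K s| ≤ C)
    (hg : Integrable g (volume.restrict (Ioc a b))) :
    Integrable (fun s => K s * g s) (volume.restrict (Ioc a b)) :=
  hg.bdd_mul (c := C) hm.aestronglyMeasurable
    ((ae_restrict_iff' measurableSet_Ioc).2 (Filter.Eventually.of_forall fun s hs => by
      simpa [Real.norm_eq_abs] using hb s (Ioc_subset_Icc_self hs)))

lemma aux_bdd2 {C : ℝ} {K g : ℝ × ℝ → ℝ} (hm : Measurable K)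
    (hb : ∀ p : ℝ × ℝ, p.1 ∈ Icc a b → p.2 ∈ Icc a b → |K p| ≤ C)
    (hg : Integrable g ((volume.restrict (Ioc a b)).prod (volume.restrict (Ioc a b)))) :
    Integrable (fun p => K p * g p)
      ((volume.restrict (Ioc a b)).prod (volume.restrict (Ioc a b))) := by
  refine hg.bdd_mul (c := C) hm.aestronglyMeasurable ?_
  rw [Measure.prod_restrict]
  refine (ae_restrict_iff' (measurableSet_Ioc.prod measurableSet_Ioc)).2
    (Filter.Eventually.of_forall fun p hp => ?_)
  rw [Set.mem_prod] at hp
  simpa [Real.norm_eq_abs] using hb p (Ioc_subset_Icc_self hp.1) (Ioc_subset_Icc_self hp.2)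

lemma ker_int {K : ℝ → ℝ → Matrix (Fin n) (Fin n) ℝ} (hK : BddMeas2 a b K)
    {x y : ℝ → Fin n → ℝ} (hx : MemL2 a b x) (hy : MemL2 a b y) :
    Integrable (fun p : ℝ × ℝ => x p.1 ⬝ᵥ (K p.1 p.2).mulVec (y p.2))
      ((volume.restrict (Ioc a b)).prod (volume.restrict (Ioc a b))) := by
  have hrw : (fun p : ℝ × ℝ => x p.1 ⬝ᵥ (K p.1 p.2).mulVec (y p.2))
      = fun p => ∑ i, ∑ j, K p.1 p.2 i j * (x p.1 i * y p.2 j) := by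
    funext p
    simp only [dotProduct, mulVec, Finset.mul_sum]
    exact Finset.sum_congr rfl fun i _ => Finset.sum_congr rfl fun j _ => by ring
  rw [hrw]
  refine integrable_finset_sum _ fun i _ => integrable_finset_sum _ fun j _ => ?_
  obtain ⟨C, hC⟩ := hK.2
  exact aux_bdd2 (hK.1 i j) (fun p h1 h2 => hC p.1 h1 p.2 h2 i j)
    ((comp_int hx i).mul_prod (comp_int hy j))

lemma int_dot_const {k : ℕ} {F : ℝ → Matrix (Fin k) (Fin n) ℝ} (hF : BddMeas a b F)
    (v : Fin k → ℝ) {z : ℝ → Fin n → ℝ} (hz : MemL2 a b z) :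
    Integrable (fun s => v ⬝ᵥ (F s).mulVec (z s)) (volume.restrict (Ioc a b)) := by
  have hrw : (fun s => v ⬝ᵥ (F s).mulVec (z s))
      = fun s => ∑ i, ∑ j, F s i j * (v i * z s j) := by
    funext s
    simp only [dotProduct, mulVec, Finset.mul_sum]
    exact Finset.sum_congr rfl fun i _ => Finset.sum_congr rfl fun j _ => by ring
  rw [hrw]
  refine integrable_finset_sum _ fun i _ => integrable_finset_sum _ fun j _ => ?_
  obtain ⟨C, hC⟩ := hF.2
  exact aux_bdd (hF.1 i j) (fun s hs => hC s hs i j) ((comp_int hz j).const_mul (v i))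

lemma int_dot_two {F : ℝ → Matrix (Fin n) (Fin n) ℝ} (hF : BddMeas a b F)
    {x z : ℝ → Fin n → ℝ} (hx : MemL2 a b x) (hz : MemL2 a b z) :
    Integrable (fun s => x s ⬝ᵥ (F s).mulVec (z s)) (volume.restrict (Ioc a b)) := by
  have hrw : (fun s => x s ⬝ᵥ (F s).mulVec (z s))
      = fun s => ∑ i, ∑ j, F s i j * (x s i * z s j) := by
    funext s
    simp only [dotProduct, mulVec, Finset.mul_sum]
    exact Finset.sum_congr rfl fun i _ => Finset.sum_congr rfl fun j _ => by ring
  rw [hrw]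
  refine integrable_finset_sum _ fun i _ => integrable_finset_sum _ fun j _ => ?_
  obtain ⟨C, hC⟩ := hF.2
  exact aux_bdd (hF.1 i j) (fun s hs => hC s hs i j) (mul_int hx hz i j)

lemma int_mulVec_comp {k : ℕ} {F : ℝ → Matrix (Fin k) (Fin n) ℝ} (hF : BddMeas a b F)
    {z : ℝ → Fin n → ℝ} (hz : MemL2 a b z) (i : Fin k) :
    Integrable (fun s => ((F s).mulVec (z s)) i) (volume.restrict (Ioc a b)) := by
  have hrw : (fun s => ((F s).mulVec (z s)) i) = fun s => ∑ j, F s i j * z s j := by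
    funext s; simp [mulVec, dotProduct]
  rw [hrw]
  refine integrable_finset_sum _ fun j _ => ?_
  obtain ⟨C, hC⟩ := hF.2
  exact aux_bdd (hF.1 i j) (fun s hs => hC s hs i j) (comp_int hz j)

lemma row_int {K : ℝ → ℝ → Matrix (Fin n) (Fin n) ℝ} (hK : BddMeas2 a b K)
    {z : ℝ → Fin n → ℝ} (hz : MemL2 a b z) {s : ℝ} (hs : s ∈ Icc a b) (i : Fin n) :
    Integrable (fun η => ((K s η).mulVec (z η)) i) (volume.restrict (Ioc a b)) := by
  have hrw : (fun η => ((K s η).mulVec (z η)) i) = fun η => ∑ j, K s η i j * z η j := by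
    funext η; simp [mulVec, dotProduct]
  rw [hrw]
  refine integrable_finset_sum _ fun j _ => ?_
  obtain ⟨C, hC⟩ := hK.2
  exact aux_bdd ((hK.1 i j).comp (measurable_prodMk_left)) (fun η hη => hC s hs η hη i j)
    (comp_int hz j)

lemma dot3 {k l : ℕ} (M : Matrix (Fin k) (Fin l) ℝ) (u : Fin k → ℝ) (v : Fin l → ℝ) :
    u ⬝ᵥ M.mulVec v = (Mᵀ.mulVec u) ⬝ᵥ v := by
  rw [Matrix.mulVec_transpose, ← Matrix.dotProduct_mulVec]

lemma dot_integral {k : ℕ} {μ : Measure ℝ} (v : Fin k → ℝ) (h : ℝ → Fin k → ℝ)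
    (hint : ∀ i, Integrable (fun s => h s i) μ) :
    (v ⬝ᵥ fun i => ∫ s, h s i ∂μ) = ∫ s, v ⬝ᵥ h s ∂μ := by
  simp only [dotProduct]
  calc ∑ i, v i * ∫ s, h s i ∂μ = ∑ i, ∫ s, v i * h s i ∂μ :=
        Finset.sum_congr rfl fun i _ => (integral_const_mul (v i) _).symm
    _ = ∫ s, ∑ i, v i * h s i ∂μ :=
        (integral_finset_sum _ fun i _ => (hint i).const_mul (v i)).symm

lemma dot_intervalIntegral {k : ℕ} {c d : ℝ} (v : Fin k → ℝ) (f : ℝ → Fin k → ℝ)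
    (hf : ∀ i, IntervalIntegrable (fun t => f t i) volume c d) :
    (v ⬝ᵥ fun i => ∫ t in c..d, f t i) = ∫ t in c..d, v ⬝ᵥ f t := by
  simp only [dotProduct]
  calc ∑ i, v i * ∫ t in c..d, f t i = ∑ i, ∫ t in c..d, v i * f t i :=
        Finset.sum_congr rfl fun i _ => (intervalIntegral.integral_const_mul (v i) _).symm
    _ = ∫ t in c..d, ∑ i, v i * f t i :=
        (intervalIntegral.integral_finset_sum fun i _ => (hf i).const_mul (v i)).symm

lemma repr_left {k : ℕ} {s : ℝ} (hs : s ∈ Ioc a b) (v : Fin k → ℝ) (f : ℝ → Fin k → ℝ)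
    (hf : ∀ i, Integrable (fun η => f η i) (volume.restrict (Ioc a b))) :
    (v ⬝ᵥ fun i => ∫ η in a..s, f η i)
      = ∫ η in Ioc a b, (Ioc a s).indicator (fun η => v ⬝ᵥ f η) η := by
  have hca : ∀ i, IntervalIntegrable (fun η => f η i) volume a s := fun i => by
    rw [intervalIntegrable_iff, uIoc_of_le hs.1.le]
    exact (hf i).mono_measure (Measure.restrict_mono (Ioc_subset_Ioc_right hs.2) le_rfl)
  rw [dot_intervalIntegral v f hca, intervalIntegral.integral_of_le hs.1.le,
    integral_indicator measurableSet_Ioc, Measure.restrict_restrict measurableSet_Ioc,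
    inter_eq_self_of_subset_left (Ioc_subset_Ioc_right hs.2)]

lemma repr_right {k : ℕ} {s : ℝ} (hs : s ∈ Ioc a b) (v : Fin k → ℝ) (f : ℝ → Fin k → ℝ)
    (hf : ∀ i, Integrable (fun η => f η i) (volume.restrict (Ioc a b))) :
    (v ⬝ᵥ fun i => ∫ η in s..b, f η i)
      = ∫ η in Ioc a b, (Ioc s b).indicator (fun η => v ⬝ᵥ f η) η := by
  have hca : ∀ i, IntervalIntegrable (fun η => f η i) volume s b := fun i => by
    rw [intervalIntegrable_iff, uIoc_of_le hs.2]
    exact (hf i).mono_measure (Measure.restrict_mono (Ioc_subset_Ioc_left hs.1.le) le_rfl)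
  rw [dot_intervalIntegral v f hca, intervalIntegral.integral_of_le hs.2,
    integral_indicator measurableSet_Ioc, Measure.restrict_restrict measurableSet_Ioc,
    inter_eq_self_of_subset_left (Ioc_subset_Ioc_left hs.1.le)]

lemma swapT {K : ℝ → ℝ → Matrix (Fin n) (Fin n) ℝ} (hK : BddMeas2 a b K) :
    BddMeas2 a b (fun s η => (K η s)ᵀ) :=
  ⟨fun i j => (hK.1 j i).comp measurable_swap,
    hK.2.elim fun C hC => ⟨C, fun s hs η hη i j => hC η hη s hs j i⟩⟩

lemma core (K : ℝ → ℝ → Matrix (Fin n) (Fin n) ℝ)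
    (hK : BddMeas2 a b K) (x y : ℝ → Fin n → ℝ) (hx : MemL2 a b x) (hy : MemL2 a b y) :
    ∫ s in Ioc a b, ∫ η in Ioc a b,
        (Ioc a s).indicator (fun η => x s ⬝ᵥ (K s η).mulVec (y η)) η
      = ∫ s in Ioc a b, ∫ η in Ioc a b,
        (Ioc s b).indicator (fun η => ((K η s)ᵀ.mulVec (x η)) ⬝ᵥ y s) η := by
  have hbase : Integrable (fun p : ℝ × ℝ => ((K p.2 p.1)ᵀ.mulVec (x p.2)) ⬝ᵥ y p.1)
      ((volume.restrict (Ioc a b)).prod (volume.restrict (Ioc a b))) := by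
    have h := ker_int (swapT hK) hy hx
    refine h.congr (Filter.Eventually.of_forall fun p => ?_)
    exact dotProduct_comm _ _
  have hmset : MeasurableSet {p : ℝ × ℝ | p.2 ∈ Ioc p.1 b} := by
    have : {p : ℝ × ℝ | p.2 ∈ Ioc p.1 b}
        = {p : ℝ × ℝ | p.1 < p.2} ∩ {p : ℝ × ℝ | p.2 ≤ b} := by
      ext p; simp [Set.mem_Ioc, Set.mem_setOf_eq]
    rw [this]
    exact (measurableSet_lt measurable_fst measurable_snd).inter
      (measurableSet_le measurable_snd measurable_const)
  have huncurry : Integrable (Function.uncurry fun s η =>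
      (Ioc s b).indicator (fun η => ((K η s)ᵀ.mulVec (x η)) ⬝ᵥ y s) η)
      ((volume.restrict (Ioc a b)).prod (volume.restrict (Ioc a b))) := by
    refine (hbase.indicator hmset).congr (Filter.Eventually.of_forall fun p => ?_)
    simp only [Function.uncurry]
    by_cases hp : p.2 ∈ Ioc p.1 b
    · rw [Set.indicator_of_mem (show p ∈ {p : ℝ × ℝ | p.2 ∈ Ioc p.1 b} from hp),
        Set.indicator_of_mem hp]
    · rw [Set.indicator_of_notMem (show p ∉ {p : ℝ × ℝ | p.2 ∈ Ioc p.1 b} from hp),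
        Set.indicator_of_notMem hp]
  rw [integral_integral_swap huncurry]
  refine setIntegral_congr_fun measurableSet_Ioc fun s hs => ?_
  have hnull : (volume.restrict (Ioc a b)) {s} = 0 := by
    rw [Measure.restrict_apply (measurableSet_singleton s)]
    exact measure_mono_null inter_subset_left (measure_singleton s)
  have hne : ∀ᵐ t ∂(volume.restrict (Ioc a b)), t ≠ s := by
    rw [ae_iff]
    simpa only [ne_eq, not_not, Set.setOf_eq_eq_singleton] using hnull
  refine integral_congr_ae ?_
  filter_upwards [ae_restrict_mem measurableSet_Ioc, hne] with t ht htne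
  by_cases h : t ∈ Ioc a s
  · have h2 : s ∈ Ioc t b := ⟨lt_of_le_of_ne h.2 htne, hs.2⟩
    rw [Set.indicator_of_mem h, Set.indicator_of_mem h2]
    rw [Matrix.mulVec_transpose, ← Matrix.dotProduct_mulVec]
  · have h2 : s ∉ Ioc t b := fun hc => h ⟨ht.1, le_of_lt hc.1⟩
    rw [Set.indicator_of_notMem h, Set.indicator_of_notMem h2]

end PopAux
open PopAux

/-- If `P` is symmetric, `S(s)` is symmetric for all `s ∈ [a,b]`, and
`R₂(s,η) = R₁(η,s)ᵀ` on `[a,b] × [a,b]`, then `𝒫_{P,Q,Qᵀ,S,R₁,R₂}` is self-adjoint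
on `ℝ^m × L²([a,b];ℝⁿ)` with respect to `⟨·,·⟩_X`. -/
theorem selfAdjoint_of_Pop {m n : ℕ} (a b : ℝ) (hab : a < b)
    (P : Matrix (Fin m) (Fin m) ℝ) (hP : P.IsSymm)
    (Q : ℝ → Matrix (Fin m) (Fin n) ℝ)
    (S : ℝ → Matrix (Fin n) (Fin n) ℝ)
    (R1 R2 : ℝ → ℝ → Matrix (Fin n) (Fin n) ℝ)
    (hQ : BddMeas a b Q) (hS : BddMeas a b S)
    (hR1 : BddMeas2 a b R1) (hR2 : BddMeas2 a b R2)
    (hSsymm : ∀ s ∈ Icc a b, (S s).IsSymm)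
    (hR : ∀ s ∈ Icc a b, ∀ η ∈ Icc a b, R2 s η = (R1 η s)ᵀ) :
    ∀ (x1 : Fin m → ℝ) (x2 : ℝ → Fin n → ℝ) (y1 : Fin m → ℝ) (y2 : ℝ → Fin n → ℝ),
      MemL2 a b x2 → MemL2 a b y2 →
      innerX a b (x1, x2) (Pop a b P Q (fun s => (Q s)ᵀ) S R1 R2 (y1, y2))
        = innerX a b (Pop a b P Q (fun s => (Q s)ᵀ) S R1 R2 (x1, x2)) (y1, y2) := by
  intro x1 x2 y1 y2 hx2 hy2
  simp only [innerX, Pop, intervalIntegral.integral_of_le hab.le, dotProduct_add,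
    add_dotProduct]
  -- measurable sets
  have hm1 : MeasurableSet {p : ℝ × ℝ | p.2 ∈ Ioc a p.1} := by
    have : {p : ℝ × ℝ | p.2 ∈ Ioc a p.1}
        = {p : ℝ × ℝ | a < p.2} ∩ {p : ℝ × ℝ | p.2 ≤ p.1} := by
      ext p; simp [Set.mem_Ioc, Set.mem_setOf_eq]
    rw [this]
    exact (measurableSet_lt measurable_const measurable_snd).inter
      (measurableSet_le measurable_snd measurable_fst)
  have hm2 : MeasurableSet {p : ℝ × ℝ | p.2 ∈ Ioc p.1 b} := by
    have : {p : ℝ × ℝ | p.2 ∈ Ioc p.1 b}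
        = {p : ℝ × ℝ | p.1 < p.2} ∩ {p : ℝ × ℝ | p.2 ≤ b} := by
      ext p; simp [Set.mem_Ioc, Set.mem_setOf_eq]
    rw [this]
    exact (measurableSet_lt measurable_fst measurable_snd).inter
      (measurableSet_le measurable_snd measurable_const)
  -- integrability of the simple terms
  have hT1 : Integrable (fun s => x2 s ⬝ᵥ (Q s)ᵀ *ᵥ y1) (volume.restrict (Ioc a b)) :=
    (int_dot_const hQ y1 hx2).congr (Filter.Eventually.of_forall fun s =>
      ((dot3 (Q s) y1 (x2 s)).trans (dotProduct_comm _ _)))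
  have hT2 : Integrable (fun s => x2 s ⬝ᵥ S s *ᵥ y2 s) (volume.restrict (Ioc a b)) :=
    int_dot_two hS hx2 hy2
  have hU1 : Integrable (fun s => (Q s)ᵀ *ᵥ x1 ⬝ᵥ y2 s) (volume.restrict (Ioc a b)) :=
    (int_dot_const hQ x1 hy2).congr (Filter.Eventually.of_forall fun s => dot3 (Q s) x1 (y2 s))
  have hU2 : Integrable (fun s => S s *ᵥ x2 s ⬝ᵥ y2 s) (volume.restrict (Ioc a b)) :=
    (int_dot_two hS hy2 hx2).congr (Filter.Eventually.of_forall fun s => dotProduct_comm _ _)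
  -- integrability of the kernel (double-integral) terms
  have hGen : ∀ (K : ℝ → ℝ → Matrix (Fin n) (Fin n) ℝ), BddMeas2 a b K →
      ∀ (u w : ℝ → Fin n → ℝ), MemL2 a b u → MemL2 a b w →
      Integrable (fun s => ∫ η in Ioc a b,
        (Ioc a s).indicator (fun η => u s ⬝ᵥ (K s η).mulVec (w η)) η)
        (volume.restrict (Ioc a b)) := by
    intro K hK u w hu hw
    have h := ((ker_int hK hu hw).indicator hm1).integral_prod_left
    refine h.congr (Filter.Eventually.of_forall fun s => ?_)
    refine integral_congr_ae (Filter.Eventually.of_forall fun η => ?_)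
    show {p : ℝ × ℝ | p.2 ∈ Ioc a p.1}.indicator
        (fun p => u p.1 ⬝ᵥ (K p.1 p.2).mulVec (w p.2)) (s, η)
      = (Ioc a s).indicator (fun η => u s ⬝ᵥ (K s η).mulVec (w η)) η
    by_cases hmem : η ∈ Ioc a s
    · rw [Set.indicator_of_mem (show (s, η) ∈ {p : ℝ × ℝ | p.2 ∈ Ioc a p.1} from hmem),
        Set.indicator_of_mem hmem]
    · rw [Set.indicator_of_notMem (show (s, η) ∉ {p : ℝ × ℝ | p.2 ∈ Ioc a p.1} from hmem),
        Set.indicator_of_notMem hmem]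
  have hGen2 : ∀ (K : ℝ → ℝ → Matrix (Fin n) (Fin n) ℝ), BddMeas2 a b K →
      ∀ (u w : ℝ → Fin n → ℝ), MemL2 a b u → MemL2 a b w →
      Integrable (fun s => ∫ η in Ioc a b,
        (Ioc s b).indicator (fun η => u s ⬝ᵥ (K s η).mulVec (w η)) η)
        (volume.restrict (Ioc a b)) := by
    intro K hK u w hu hw
    have h := ((ker_int hK hu hw).indicator hm2).integral_prod_left
    refine h.congr (Filter.Eventually.of_forall fun s => ?_)
    refine integral_congr_ae (Filter.Eventually.of_forall fun η => ?_)
    show {p : ℝ × ℝ | p.2 ∈ Ioc p.1 b}.indicator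
        (fun p => u p.1 ⬝ᵥ (K p.1 p.2).mulVec (w p.2)) (s, η)
      = (Ioc s b).indicator (fun η => u s ⬝ᵥ (K s η).mulVec (w η)) η
    by_cases hmem : η ∈ Ioc s b
    · rw [Set.indicator_of_mem (show (s, η) ∈ {p : ℝ × ℝ | p.2 ∈ Ioc p.1 b} from hmem),
        Set.indicator_of_mem hmem]
    · rw [Set.indicator_of_notMem (show (s, η) ∉ {p : ℝ × ℝ | p.2 ∈ Ioc p.1 b} from hmem),
        Set.indicator_of_notMem hmem]
  -- split the LHS integral
  have hLsplit : (∫ s in Ioc a b,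
        ((x2 s ⬝ᵥ (Q s)ᵀ *ᵥ y1 + x2 s ⬝ᵥ S s *ᵥ y2 s
          + (x2 s ⬝ᵥ fun i => ∫ η in a..s, (R1 s η *ᵥ y2 η) i))
          + (x2 s ⬝ᵥ fun i => ∫ η in s..b, (R2 s η *ᵥ y2 η) i)))
      = (∫ s in Ioc a b, x2 s ⬝ᵥ (Q s)ᵀ *ᵥ y1)
        + (∫ s in Ioc a b, x2 s ⬝ᵥ S s *ᵥ y2 s)
        + (∫ s in Ioc a b, ∫ η in Ioc a b,
            (Ioc a s).indicator (fun η => x2 s ⬝ᵥ (R1 s η).mulVec (y2 η)) η)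
        + (∫ s in Ioc a b, ∫ η in Ioc a b,
            (Ioc s b).indicator (fun η => x2 s ⬝ᵥ (R2 s η).mulVec (y2 η)) η) := by
    rw [setIntegral_congr_fun (μ := volume) measurableSet_Ioc
      (g := fun s => x2 s ⬝ᵥ (Q s)ᵀ *ᵥ y1 + x2 s ⬝ᵥ S s *ᵥ y2 s
        + (∫ η in Ioc a b, (Ioc a s).indicator (fun η => x2 s ⬝ᵥ (R1 s η).mulVec (y2 η)) η)
        + (∫ η in Ioc a b, (Ioc s b).indicator (fun η => x2 s ⬝ᵥ (R2 s η).mulVec (y2 η)) η))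
      (fun s hs => by
        rw [repr_left hs (x2 s) _ (fun i => row_int hR1 hy2 (Ioc_subset_Icc_self hs) i),
          repr_right hs (x2 s) _ (fun i => row_int hR2 hy2 (Ioc_subset_Icc_self hs) i)])]
    have i3 := hGen R1 hR1 x2 y2 hx2 hy2
    have i4 := hGen2 R2 hR2 x2 y2 hx2 hy2
    have h12 : Integrable (fun s => x2 s ⬝ᵥ (Q s)ᵀ *ᵥ y1 + x2 s ⬝ᵥ S s *ᵥ y2 s)
        (volume.restrict (Ioc a b)) := by exact hT1.add hT2
    have h123 : Integrable (fun s => x2 s ⬝ᵥ (Q s)ᵀ *ᵥ y1 + x2 s ⬝ᵥ S s *ᵥ y2 s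
        + ∫ η in Ioc a b, (Ioc a s).indicator (fun η => x2 s ⬝ᵥ (R1 s η).mulVec (y2 η)) η)
        (volume.restrict (Ioc a b)) := by exact h12.add i3
    rw [integral_add h123 i4, integral_add h12 i3, integral_add hT1 hT2]
  -- split the RHS integral
  have hRsplit : (∫ s in Ioc a b,
        (((Q s)ᵀ *ᵥ x1 ⬝ᵥ y2 s + S s *ᵥ x2 s ⬝ᵥ y2 s
          + ((fun i => ∫ η in a..s, (R1 s η *ᵥ x2 η) i) ⬝ᵥ y2 s))
          + ((fun i => ∫ η in s..b, (R2 s η *ᵥ x2 η) i) ⬝ᵥ y2 s)))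
      = (∫ s in Ioc a b, (Q s)ᵀ *ᵥ x1 ⬝ᵥ y2 s)
        + (∫ s in Ioc a b, S s *ᵥ x2 s ⬝ᵥ y2 s)
        + (∫ s in Ioc a b, ∫ η in Ioc a b,
            (Ioc a s).indicator (fun η => y2 s ⬝ᵥ (R1 s η).mulVec (x2 η)) η)
        + (∫ s in Ioc a b, ∫ η in Ioc a b,
            (Ioc s b).indicator (fun η => y2 s ⬝ᵥ (R2 s η).mulVec (x2 η)) η) := by
    rw [setIntegral_congr_fun (μ := volume) measurableSet_Ioc
      (g := fun s => (Q s)ᵀ *ᵥ x1 ⬝ᵥ y2 s + S s *ᵥ x2 s ⬝ᵥ y2 s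
        + (∫ η in Ioc a b, (Ioc a s).indicator (fun η => y2 s ⬝ᵥ (R1 s η).mulVec (x2 η)) η)
        + (∫ η in Ioc a b, (Ioc s b).indicator (fun η => y2 s ⬝ᵥ (R2 s η).mulVec (x2 η)) η))
      (fun s hs => by
        rw [dotProduct_comm (fun i => ∫ η in a..s, (R1 s η *ᵥ x2 η) i) (y2 s),
          dotProduct_comm (fun i => ∫ η in s..b, (R2 s η *ᵥ x2 η) i) (y2 s),
          repr_left hs (y2 s) _ (fun i => row_int hR1 hx2 (Ioc_subset_Icc_self hs) i),
          repr_right hs (y2 s) _ (fun i => row_int hR2 hx2 (Ioc_subset_Icc_self hs) i)])]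
    have i3 := hGen R1 hR1 y2 x2 hy2 hx2
    have i4 := hGen2 R2 hR2 y2 x2 hy2 hx2
    have h12 : Integrable (fun s => (Q s)ᵀ *ᵥ x1 ⬝ᵥ y2 s + S s *ᵥ x2 s ⬝ᵥ y2 s)
        (volume.restrict (Ioc a b)) := by exact hU1.add hU2
    have h123 : Integrable (fun s => (Q s)ᵀ *ᵥ x1 ⬝ᵥ y2 s + S s *ᵥ x2 s ⬝ᵥ y2 s
        + ∫ η in Ioc a b, (Ioc a s).indicator (fun η => y2 s ⬝ᵥ (R1 s η).mulVec (x2 η)) η)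
        (volume.restrict (Ioc a b)) := by exact h12.add i3
    rw [integral_add h123 i4, integral_add h12 i3, integral_add hU1 hU2]
  rw [hLsplit, hRsplit]
  -- the six matching equalities
  have e1 : x1 ⬝ᵥ P *ᵥ y1 = P *ᵥ x1 ⬝ᵥ y1 := by
    rw [dotProduct_mulVec, ← Matrix.mulVec_transpose, hP.eq]
  have e2 : (x1 ⬝ᵥ fun i => ∫ s in Ioc a b, (Q s *ᵥ y2 s) i)
      = ∫ s in Ioc a b, (Q s)ᵀ *ᵥ x1 ⬝ᵥ y2 s := by
    rw [dot_integral x1 _ (fun i => int_mulVec_comp hQ hy2 i)]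
    exact integral_congr_ae (Filter.Eventually.of_forall fun s => dot3 (Q s) x1 (y2 s))
  have e3 : (∫ s in Ioc a b, x2 s ⬝ᵥ (Q s)ᵀ *ᵥ y1)
      = (fun i => ∫ s in Ioc a b, (Q s *ᵥ x2 s) i) ⬝ᵥ y1 := by
    rw [dotProduct_comm _ y1, dot_integral y1 _ (fun i => int_mulVec_comp hQ hx2 i)]
    exact integral_congr_ae (Filter.Eventually.of_forall fun s =>
      ((dot3 (Q s) y1 (x2 s)).trans (dotProduct_comm _ _)).symm)
  have e4 : (∫ s in Ioc a b, x2 s ⬝ᵥ S s *ᵥ y2 s)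
      = ∫ s in Ioc a b, S s *ᵥ x2 s ⬝ᵥ y2 s :=
    setIntegral_congr_fun measurableSet_Ioc fun s hs => by
      rw [dot3 (S s) (x2 s) (y2 s), (hSsymm s (Ioc_subset_Icc_self hs)).eq]
  have e5 : (∫ s in Ioc a b, ∫ η in Ioc a b,
        (Ioc a s).indicator (fun η => x2 s ⬝ᵥ (R1 s η).mulVec (y2 η)) η)
      = ∫ s in Ioc a b, ∫ η in Ioc a b,
        (Ioc s b).indicator (fun η => y2 s ⬝ᵥ (R2 s η).mulVec (x2 η)) η := by
    refine (core R1 hR1 x2 y2 hx2 hy2).trans ?_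
    refine setIntegral_congr_fun measurableSet_Ioc fun s hs => ?_
    refine integral_congr_ae (Filter.Eventually.of_forall fun η => ?_)
    by_cases hmem : η ∈ Ioc s b
    · rw [Set.indicator_of_mem hmem, Set.indicator_of_mem hmem]
      have hηI : η ∈ Icc a b := ⟨le_of_lt (lt_trans hs.1 hmem.1), hmem.2⟩
      rw [hR s (Ioc_subset_Icc_self hs) η hηI]
      exact dotProduct_comm _ _
    · rw [Set.indicator_of_notMem hmem, Set.indicator_of_notMem hmem]
  have e6 : (∫ s in Ioc a b, ∫ η in Ioc a b,
        (Ioc a s).indicator (fun η => y2 s ⬝ᵥ (R1 s η).mulVec (x2 η)) η)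
      = ∫ s in Ioc a b, ∫ η in Ioc a b,
        (Ioc s b).indicator (fun η => x2 s ⬝ᵥ (R2 s η).mulVec (y2 η)) η := by
    refine Eq.trans ?_ ((core (fun u v => (R2 v u)ᵀ) (swapT hR2) y2 x2 hy2 hx2).trans ?_)
    · show _ = ∫ s in Ioc a b, ∫ η in Ioc a b,
        (Ioc a s).indicator (fun η => y2 s ⬝ᵥ ((R2 η s)ᵀ).mulVec (x2 η)) η
      refine setIntegral_congr_fun measurableSet_Ioc fun s hs => ?_
      refine integral_congr_ae (Filter.Eventually.of_forall fun η => ?_)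
      by_cases hmem : η ∈ Ioc a s
      · rw [Set.indicator_of_mem hmem, Set.indicator_of_mem hmem]
        have hηI : η ∈ Icc a b := ⟨le_of_lt hmem.1, le_trans hmem.2 hs.2⟩
        rw [hR η hηI s (Ioc_subset_Icc_self hs), transpose_transpose]
      · rw [Set.indicator_of_notMem hmem, Set.indicator_of_notMem hmem]
    · show (∫ s in Ioc a b, ∫ η in Ioc a b,
        (Ioc s b).indicator (fun η => (((R2 s η)ᵀ)ᵀ.mulVec (y2 η)) ⬝ᵥ x2 s) η) = _
      refine setIntegral_congr_fun measurableSet_Ioc fun s hs => ?_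
      refine integral_congr_ae (Filter.Eventually.of_forall fun η => ?_)
      by_cases hmem : η ∈ Ioc s b
      · rw [Set.indicator_of_mem hmem, Set.indicator_of_mem hmem, transpose_transpose]
        exact dotProduct_comm _ _
      · rw [Set.indicator_of_notMem hmem, Set.indicator_of_notMem hmem]
  rw [e1, e2, e3, e4, e5, e6]
  ring

end
end

section
/- Let z ∈ W^{2,2}([a,b];ℝ^{n_p}) satisfy the boundary condition B_c z_b = 0, where B_c ∈ ℝ^{2n_p×4n_p} has full row rank and B_c B_d is invertible. Then for every s ∈ [a,b], z(s) = ∫ₐˢ G₁(s,η) z_ss(η) dη + ∫ₛᵇ G₂(s,η) z_ss(η) dη. -/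
open MeasureTheory Matrix Set

noncomputable section

/-- The block matrix `B_d ∈ ℝ^{4n_p × 2n_p}` with block rows
`[I, 0]`, `[I, (b−a)I]`, `[0, I]`, `[0, I]`. -/
def Bdm (a b : ℝ) (np : ℕ) : Matrix (Fin 4 × Fin np) (Fin 2 × Fin np) ℝ :=
  Matrix.of fun p q =>
    (![![(1 : Matrix (Fin np) (Fin np) ℝ), 0],
       ![1, (b - a) • 1],
       ![0, 1],
       ![0, 1]] p.1 q.1) p.2 q.2

/-- The block column `col(0, (b−η)I, 0, I) ∈ ℝ^{4n_p × n_p}`. -/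
def colE (b : ℝ) (np : ℕ) (η : ℝ) : Matrix (Fin 4 × Fin np) (Fin np) ℝ :=
  Matrix.of fun p j =>
    (![(0 : Matrix (Fin np) (Fin np) ℝ), (b - η) • 1, 0, 1] p.1) p.2 j

/-- `B_f(η) = (B_c B_d)⁻¹ B_c col(0,(b−η)I,0,I)`. -/
def Bfm (a b : ℝ) {np : ℕ}
    (Bc : Matrix (Fin 2 × Fin np) (Fin 4 × Fin np) ℝ) (η : ℝ) :
    Matrix (Fin 2 × Fin np) (Fin np) ℝ :=
  (Bc * Bdm a b np)⁻¹ * Bc * colE b np η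

/-- The block row `[I, (s−a)I] ∈ ℝ^{n_p × 2n_p}`. -/
def rowIA (a : ℝ) (np : ℕ) (s : ℝ) : Matrix (Fin np) (Fin 2 × Fin np) ℝ :=
  Matrix.of fun i q => (![(1 : Matrix (Fin np) (Fin np) ℝ), (s - a) • 1] q.1) i q.2

/-- The block row `[0, I] ∈ ℝ^{n_p × 2n_p}`. -/
def rowZI (np : ℕ) : Matrix (Fin np) (Fin 2 × Fin np) ℝ :=
  Matrix.of fun i q => (![(0 : Matrix (Fin np) (Fin np) ℝ), 1] q.1) i q.2

/-- `B_a(s,η) = −[I,(s−a)I] B_f(η)`. -/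
def Bam (a b : ℝ) {np : ℕ}
    (Bc : Matrix (Fin 2 × Fin np) (Fin 4 × Fin np) ℝ) (s η : ℝ) :
    Matrix (Fin np) (Fin np) ℝ :=
  -(rowIA a np s * Bfm a b Bc η)

/-- `B_b(η) = −[0,I] B_f(η)`. -/
def Bbm (a b : ℝ) {np : ℕ}
    (Bc : Matrix (Fin 2 × Fin np) (Fin 4 × Fin np) ℝ) (η : ℝ) :
    Matrix (Fin np) (Fin np) ℝ :=
  -(rowZI np * Bfm a b Bc η)

/-- `G₁(s,η) = B_a(s,η) + (s−η)I`. -/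
def G1m (a b : ℝ) {np : ℕ}
    (Bc : Matrix (Fin 2 × Fin np) (Fin 4 × Fin np) ℝ) (s η : ℝ) :
    Matrix (Fin np) (Fin np) ℝ :=
  Bam a b Bc s η + (s - η) • 1

/-- `G₂(s,η) = B_a(s,η)`. -/
def G2m (a b : ℝ) {np : ℕ}
    (Bc : Matrix (Fin 2 × Fin np) (Fin 4 × Fin np) ℝ) (s η : ℝ) :
    Matrix (Fin np) (Fin np) ℝ :=
  Bam a b Bc s η

/-- `G₃(s,η) = B_b(η) + I`. -/
def G3m (a b : ℝ) {np : ℕ}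
    (Bc : Matrix (Fin 2 × Fin np) (Fin 4 × Fin np) ℝ) (_s η : ℝ) :
    Matrix (Fin np) (Fin np) ℝ :=
  Bbm a b Bc η + 1

/-- `G₄(s,η) = B_b(η)`. -/
def G4m (a b : ℝ) {np : ℕ}
    (Bc : Matrix (Fin 2 × Fin np) (Fin 4 × Fin np) ℝ) (_s η : ℝ) :
    Matrix (Fin np) (Fin np) ℝ :=
  Bbm a b Bc η

/-- The boundary vector `z_b = col(z(a), z(b), z_s(a), z_s(b)) ∈ ℝ^{4n_p}`. -/
def zbv (a b : ℝ) {np : ℕ} (z zs : ℝ → Fin np → ℝ) : Fin 4 × Fin np → ℝ :=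
  fun p => ![z a, z b, zs a, zs b] p.1 p.2
/-- Fundamental theorem of calculus for a function with a derivative within `Icc a b`. -/
theorem aux_ftc {a b : ℝ} {f f' : ℝ → ℝ} (hab : a ≤ b)
    (hd : ∀ x ∈ Icc a b, HasDerivWithinAt f (f' x) (Icc a b) x)
    (hint : IntervalIntegrable f' volume a b) :
    ∫ η in a..b, f' η = f b - f a := by
  refine intervalIntegral.integral_eq_sub_of_hasDeriv_right_of_le hab
    (fun x hx => (hd x hx).continuousWithinAt)
    (fun x hx => ?_) hint
  exact ((hd x (Ioo_subset_Icc_self hx)).hasDerivAt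
    (Icc_mem_nhds hx.1 hx.2)).hasDerivWithinAt

/-- Matrix-vector multiplication commutes with interval integration. -/
theorem aux_swap {m k : Type*} [Fintype k] (M : Matrix m k ℝ) (F : ℝ → k → ℝ) {c d : ℝ}
    (hF : ∀ p, IntervalIntegrable (fun η => F η p) volume c d) (q : m) :
    M.mulVec (fun p => ∫ η in c..d, F η p) q = ∫ η in c..d, M.mulVec (F η) q := by
  simp only [Matrix.mulVec, dotProduct]
  calc ∑ p, M q p * ∫ η in c..d, F η p
      = ∑ p, ∫ η in c..d, M q p * F η p := by
        simp [intervalIntegral.integral_const_mul]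
    _ = ∫ η in c..d, ∑ p, M q p * F η p :=
        (intervalIntegral.integral_finset_sum (fun p _ => (hF p).const_mul _)).symm
set_option maxHeartbeats 1000000 in
/-- If `z ∈ W^{2,2}([a,b];ℝ^{n_p})` satisfies the boundary condition
`B_c z_b = 0` with `B_c` of full row rank and `B_c B_d` invertible, then
`z(s) = ∫ₐˢ G₁(s,η) z_ss(η) dη + ∫ₛᵇ G₂(s,η) z_ss(η) dη` for every `s ∈ [a,b]`. -/
theorem z_from_zss {np : ℕ} (a b : ℝ) (hab : a < b)
    (z zs zss : ℝ → Fin np → ℝ)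
    (hz : ∀ s ∈ Icc a b, HasDerivWithinAt z (zs s) (Icc a b) s)
    (hzs : ∀ s ∈ Icc a b, HasDerivWithinAt zs (zss s) (Icc a b) s)
    (hzss : MemLp zss 2 (volume.restrict (Icc a b)))
    (Bc : Matrix (Fin 2 × Fin np) (Fin 4 × Fin np) ℝ)
    (hrank : Bc.rank = Fintype.card (Fin 2 × Fin np))
    (hdet : IsUnit (Bc * Bdm a b np).det)
    (hbc : Bc.mulVec (zbv a b z zs) = 0) :
    ∀ s ∈ Icc a b,
      z s = (fun i => ∫ η in a..s, (G1m a b Bc s η).mulVec (zss η) i)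
          + (fun i => ∫ η in s..b, (G2m a b Bc s η).mulVec (zss η) i) := by
  intro s hs
  have habl : a ≤ b := hab.le
  have ha : a ∈ Icc a b := ⟨le_refl a, habl⟩
  have hb : b ∈ Icc a b := ⟨habl, le_refl b⟩
  haveI : IsFiniteMeasure (volume.restrict (Icc a b)) := by
    refine ⟨?_⟩
    rw [Measure.restrict_apply_univ]
    exact measure_Icc_lt_top
  have hIntV : Integrable zss (volume.restrict (Icc a b)) := hzss.integrable (by norm_num)
  have hIntc : ∀ j, IntegrableOn (fun η => zss η j) (Icc a b) volume := fun j =>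
    (ContinuousLinearMap.proj (R := ℝ) (φ := fun _ : Fin np => ℝ) j).integrable_comp hIntV
  have hII : ∀ j c d, c ∈ Icc a b → d ∈ Icc a b →
      IntervalIntegrable (fun η => zss η j) volume c d := by
    intro j c d hc hd
    apply MeasureTheory.IntegrableOn.intervalIntegrable
    apply (hIntc j).mono_set
    rw [← uIcc_of_le habl]
    exact uIcc_subset_uIcc (by rwa [uIcc_of_le habl]) (by rwa [uIcc_of_le habl])
  have key : ∀ (f : ℝ → ℝ), Continuous f → ∀ j c d, c ∈ Icc a b → d ∈ Icc a b →
      IntervalIntegrable (fun η => f η * zss η j) volume c d :=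
    fun f hf j c d hc hd => (hII j c d hc hd).continuousOn_mul hf.continuousOn
  have hzc : ∀ j, ∀ t ∈ Icc a b, HasDerivWithinAt (fun x => z x j) (zs t j) (Icc a b) t :=
    fun j t ht => hasDerivWithinAt_pi.mp (hz t ht) j
  have hzsc : ∀ j, ∀ t ∈ Icc a b, HasDerivWithinAt (fun x => zs x j) (zss t j) (Icc a b) t :=
    fun j t ht => hasDerivWithinAt_pi.mp (hzs t ht) j
  -- FTC for `zs`
  have ftc_zs : ∀ t ∈ Icc a b, ∀ j, ∫ η in a..t, zss η j = zs t j - zs a j := by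
    intro t ht j
    exact aux_ftc ht.1
      (fun x hx => (hzsc j x (Icc_subset_Icc_right ht.2 hx)).mono (Icc_subset_Icc_right ht.2))
      (hII j a t ha ht)
  -- Taylor expansion with integral remainder
  have taylor : ∀ t ∈ Icc a b, ∀ j,
      z t j = z a j + (t - a) * zs a j + ∫ η in a..t, (t - η) * zss η j := by
    intro t ht j
    have hF : ∀ x ∈ Icc a t, HasDerivWithinAt (fun η => (t - η) * zs η j + z η j)
        ((t - x) * zss x j) (Icc a t) x := by
      intro x hx
      have hx' : x ∈ Icc a b := Icc_subset_Icc_right ht.2 hx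
      have h1 : HasDerivWithinAt (fun η : ℝ => (t - η) * zs η j)
          ((0 - 1) * zs x j + (t - x) * zss x j) (Icc a t) x :=
        (((hasDerivWithinAt_const x _ t).sub (hasDerivWithinAt_id x _)).mul
          ((hzsc j x hx').mono (Icc_subset_Icc_right ht.2)))
      have h2 := h1.add ((hzc j x hx').mono (Icc_subset_Icc_right ht.2))
      convert h2 using 1
      case e'_9 => ring
      all_goals rfl
    have hres := aux_ftc ht.1 hF
      (key (fun η => t - η) (by fun_prop) j a t ha ht)
    rw [hres]; ring
  -- the boundary vector of initial values
  obtain ⟨v, hv⟩ : ∃ v : Fin 2 × Fin np → ℝ, v = fun q => ![z a, zs a] q.1 q.2 := ⟨_, rfl⟩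
  obtain ⟨w, hw⟩ : ∃ w : Fin 4 × Fin np → ℝ, w = fun p =>
      (![(fun _ => (0:ℝ)), (fun j => ∫ η in a..b, (b - η) * zss η j),
        (fun _ => (0:ℝ)), (fun j => ∫ η in a..b, zss η j)] p.1) p.2 := ⟨_, rfl⟩
  have hzb : zbv a b z zs = (Bdm a b np).mulVec v + w := by
    funext p
    obtain ⟨k, i⟩ := p
    have hzbT := taylor b hb
    have hzsT := ftc_zs b hb
    fin_cases k <;>
      simp [zbv, Pi.add_apply, Matrix.mulVec, dotProduct, Fintype.sum_prod_type,
        Bdm, hv, hw, Matrix.one_apply, Matrix.smul_apply, smul_eq_mul,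
        Matrix.cons_val_zero, Matrix.cons_val_one, Matrix.cons_val_two, Matrix.cons_val_three,
        Matrix.head_cons, Matrix.tail_cons, Matrix.zero_apply, Matrix.vecHead, Matrix.vecTail,
        mul_ite, ite_mul, Finset.sum_ite_eq]
    all_goals
      first
        | linarith [hzbT i]
        | linarith [hzsT i]
  have hmv : (Bc * Bdm a b np).mulVec v = -(Bc.mulVec w) := by
    have h0 := hbc
    rw [hzb, Matrix.mulVec_add, Matrix.mulVec_mulVec] at h0
    exact eq_neg_of_add_eq_zero_left h0
  have hv2 : v = -(((Bc * Bdm a b np)⁻¹ * Bc).mulVec w) := by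
    calc v = ((Bc * Bdm a b np)⁻¹ * (Bc * Bdm a b np)).mulVec v := by
          rw [Matrix.nonsing_inv_mul _ hdet, Matrix.one_mulVec]
      _ = (Bc * Bdm a b np)⁻¹.mulVec ((Bc * Bdm a b np).mulVec v) :=
          (Matrix.mulVec_mulVec _ _ _).symm
      _ = (Bc * Bdm a b np)⁻¹.mulVec (-(Bc.mulVec w)) := by rw [hmv]
      _ = -(((Bc * Bdm a b np)⁻¹ * Bc).mulVec w) := by
          rw [← Matrix.mulVec_mulVec, Matrix.mulVec_neg]
  -- continuity of the entries of `colE` and `Bfm`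
  have hcolE_cont : ∀ p j, Continuous fun η => colE b np η p j := by
    intro ⟨k, i⟩ j
    fin_cases k <;>
      simp [colE, Matrix.smul_apply, smul_eq_mul, Matrix.vecHead, Matrix.vecTail] <;> fun_prop
  have hBfm_cont : ∀ q j, Continuous fun η => Bfm a b Bc η q j := by
    intro q j
    have hrw : ∀ η, Bfm a b Bc η q j =
        ∑ p, ((Bc * Bdm a b np)⁻¹ * Bc) q p * colE b np η p j := by
      intro η
      rw [Bfm, Matrix.mul_apply]
    simp only [hrw]
    exact continuous_finset_sum _ (fun p _ => continuous_const.mul (hcolE_cont p j))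
  have hBam_cont : ∀ i j, Continuous fun η => Bam a b Bc s η i j := by
    intro i j
    have hrw : ∀ η, Bam a b Bc s η i j =
        -∑ q, rowIA a np s i q * Bfm a b Bc η q j := by
      intro η
      rw [Bam, Matrix.neg_apply, Matrix.mul_apply]
    simp only [hrw]
    exact (continuous_finset_sum _ (fun q _ => continuous_const.mul (hBfm_cont q j))).neg
  -- interval integrability of the various integrands
  have hFint : ∀ p c d, c ∈ Icc a b → d ∈ Icc a b →
      IntervalIntegrable (fun η => (colE b np η).mulVec (zss η) p) volume c d := by
    intro p c d hc hd
    have h := IntervalIntegrable.sum (μ := volume) (a := c) (b := d) Finset.univ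
      (f := fun j η => colE b np η p j * zss η j)
      (fun j _ => key _ (hcolE_cont p j) j c d hc hd)
    have he : (fun η => (colE b np η).mulVec (zss η) p)
        = ∑ j : Fin np, fun η => colE b np η p j * zss η j := by
      funext η
      simp [Matrix.mulVec, dotProduct, Finset.sum_apply]
    rw [he]
    exact h
  have hBfmInt : ∀ q, IntervalIntegrable (fun η => (Bfm a b Bc η).mulVec (zss η) q)
      volume a b := by
    intro q
    have h := IntervalIntegrable.sum (μ := volume) (a := a) (b := b) Finset.univ
      (f := fun j η => Bfm a b Bc η q j * zss η j)
      (fun j _ => key _ (hBfm_cont q j) j a b ha hb)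
    have he : (fun η => (Bfm a b Bc η).mulVec (zss η) q)
        = ∑ j : Fin np, fun η => Bfm a b Bc η q j * zss η j := by
      funext η
      simp [Matrix.mulVec, dotProduct, Finset.sum_apply]
    rw [he]
    exact h
  have hBamInt : ∀ i c d, c ∈ Icc a b → d ∈ Icc a b →
      IntervalIntegrable (fun η => (Bam a b Bc s η).mulVec (zss η) i) volume c d := by
    intro i c d hc hd
    have h := IntervalIntegrable.sum (μ := volume) (a := c) (b := d) Finset.univ
      (f := fun j η => Bam a b Bc s η i j * zss η j)
      (fun j _ => key _ (hBam_cont i j) j c d hc hd)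
    have he : (fun η => (Bam a b Bc s η).mulVec (zss η) i)
        = ∑ j : Fin np, fun η => Bam a b Bc s η i j * zss η j := by
      funext η
      simp [Matrix.mulVec, dotProduct, Finset.sum_apply]
    rw [he]
    exact h
  -- express `w` as an integral
  have hwint : w = fun p => ∫ η in a..b, (colE b np η).mulVec (zss η) p := by
    funext p
    obtain ⟨k, i⟩ := p
    fin_cases k <;>
      simp [hw, colE, Matrix.mulVec, dotProduct, Matrix.one_apply,
        Matrix.cons_val_zero, Matrix.cons_val_one, Matrix.cons_val_two, Matrix.cons_val_three,
        Matrix.head_cons, Matrix.tail_cons, Matrix.zero_apply, Matrix.vecHead, Matrix.vecTail,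
        Matrix.smul_apply, smul_eq_mul, mul_ite, ite_mul, Finset.sum_ite_eq]
  -- the initial values expressed via the integral
  have hv3 : ∀ q, v q = -∫ η in a..b, (Bfm a b Bc η).mulVec (zss η) q := by
    intro q
    rw [hv2]
    simp only [Pi.neg_apply, neg_inj]
    rw [hwint, aux_swap _ _ (fun p => hFint p a b ha hb) q]
    congr 1
    funext η
    rw [Matrix.mulVec_mulVec]
    rfl
  -- main computation
  funext i
  have hrow : (rowIA a np s).mulVec v i = z a i + (s - a) * zs a i := by
    rw [hv]
    simp [rowIA, Matrix.mulVec, dotProduct, Fintype.sum_prod_type, Fin.sum_univ_two,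
      Matrix.one_apply, Matrix.smul_apply, smul_eq_mul, Matrix.vecHead, Matrix.vecTail,
      mul_ite, ite_mul, Finset.sum_ite_eq]
  have hmain : z a i + (s - a) * zs a i = ∫ η in a..b, (Bam a b Bc s η).mulVec (zss η) i := by
    rw [← hrow]
    have h1 : v = -(fun q => ∫ η in a..b, (Bfm a b Bc η).mulVec (zss η) q) := by
      funext q; rw [hv3 q]; rfl
    rw [h1, Matrix.mulVec_neg, Pi.neg_apply,
      aux_swap _ _ (fun q => hBfmInt q) i, ← intervalIntegral.integral_neg]
    congr 1
    funext η
    rw [Matrix.mulVec_mulVec, Bam, Matrix.neg_mulVec, Pi.neg_apply]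
  have hsplit : ∫ η in a..b, (Bam a b Bc s η).mulVec (zss η) i =
      (∫ η in a..s, (Bam a b Bc s η).mulVec (zss η) i)
        + ∫ η in s..b, (Bam a b Bc s η).mulVec (zss η) i :=
    (intervalIntegral.integral_add_adjacent_intervals
      (hBamInt i a s ha hs) (hBamInt i s b hs hb)).symm
  have hG1 : ∀ η, (G1m a b Bc s η).mulVec (zss η) i =
      (Bam a b Bc s η).mulVec (zss η) i + (s - η) * zss η i := by
    intro η
    simp only [G1m, Matrix.add_mulVec, Matrix.smul_mulVec, Matrix.one_mulVec,
      Pi.add_apply, Pi.smul_apply, smul_eq_mul]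
  have hG1int : ∫ η in a..s, (G1m a b Bc s η).mulVec (zss η) i =
      (∫ η in a..s, (Bam a b Bc s η).mulVec (zss η) i) + ∫ η in a..s, (s - η) * zss η i := by
    simp only [hG1]
    exact intervalIntegral.integral_add (hBamInt i a s ha hs)
      (key (fun η => s - η) (by fun_prop) i a s ha hs)
  have hG2 : ∀ η, (G2m a b Bc s η).mulVec (zss η) i = (Bam a b Bc s η).mulVec (zss η) i :=
    fun η => rfl
  simp only [Pi.add_apply, hG1int, hG2]
  rw [taylor s hs i]
  rw [hmain, hsplit]
  ring

end
end

section
/- Let z ∈ W^{2,2}([a,b];ℝ^{n_p}) satisfy the boundary condition B_c z_b = 0, where B_c ∈ ℝ^{2n_p×4n_p} has full row rank and B_c B_d is invertible. Then for every s ∈ [a,b], z_s(s) = ∫ₐˢ G₃(s,η) z_ss(η) dη + ∫ₛᵇ G₄(s,η) z_ss(η) dη. -/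
open MeasureTheory Matrix Set

noncomputable section

section Aux

/-- FTC for a one-sided (within-`Icc`) derivative with integrable derivative. -/
lemma ftc_aux {a b : ℝ} {f f' : ℝ → ℝ}
    (hderiv : ∀ t ∈ Icc a b, HasDerivWithinAt f (f' t) (Icc a b) t)
    {c d : ℝ} (hc : c ∈ Icc a b) (hd : d ∈ Icc a b) (hcd : c ≤ d)
    (hint : IntervalIntegrable f' volume c d) :
    ∫ η in c..d, f' η = f d - f c := by
  have hcont : ContinuousOn f (Icc a b) := fun x hx => (hderiv x hx).continuousWithinAt
  apply intervalIntegral.integral_eq_sub_of_hasDeriv_right_of_le hcd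
  · exact hcont.mono (Icc_subset_Icc hc.1 hd.2)
  · intro x hx
    have hxI : x ∈ Ioo a b := ⟨lt_of_le_of_lt hc.1 hx.1, lt_of_lt_of_le hx.2 hd.2⟩
    exact ((hderiv x (Ioo_subset_Icc_self hxI)).hasDerivAt
      (Icc_mem_nhds hxI.1 hxI.2)).hasDerivWithinAt
  · exact hint

lemma Bdm_mulVec {np : ℕ} (a b : ℝ) (w : Fin 2 × Fin np → ℝ) (p : Fin 4) (k : Fin np) :
    (Bdm a b np).mulVec w (p, k) =
      ![w (0, k), w (0, k) + (b - a) * w (1, k), w (1, k), w (1, k)] p := by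
  fin_cases p <;>
    simp [Bdm, Matrix.mulVec, dotProduct, Fintype.sum_prod_type, Matrix.one_apply,
      Fin.sum_univ_succ, mul_ite, Matrix.vecHead, Matrix.vecTail, Function.comp]

lemma colE_mulVec {np : ℕ} (b η : ℝ) (x : Fin np → ℝ) (p : Fin 4) (k : Fin np) :
    (colE b np η).mulVec x (p, k) = ![0, (b - η) * x k, 0, x k] p := by
  fin_cases p <;>
    simp [colE, Matrix.mulVec, dotProduct, Matrix.one_apply, mul_ite,
      Matrix.vecHead, Matrix.vecTail, Function.comp]

lemma rowZI_mulVec {np : ℕ} (w : Fin 2 × Fin np → ℝ) (i : Fin np) :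
    (rowZI np).mulVec w i = w (1, i) := by
  simp [rowZI, Matrix.mulVec, dotProduct, Fintype.sum_prod_type, Matrix.one_apply,
    Fin.sum_univ_succ, mul_ite, Matrix.vecHead, Matrix.vecTail, Function.comp]

end Aux

/-- If `z ∈ W^{2,2}([a,b];ℝ^{n_p})` satisfies the boundary condition
`B_c z_b = 0` with `B_c` of full row rank and `B_c B_d` invertible, then
`z_s(s) = ∫ₐˢ G₃(s,η) z_ss(η) dη + ∫ₛᵇ G₄(s,η) z_ss(η) dη` for every `s ∈ [a,b]`. -/
theorem zs_from_zss {np : ℕ} (a b : ℝ) (hab : a < b)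
    (z zs zss : ℝ → Fin np → ℝ)
    (hz : ∀ s ∈ Icc a b, HasDerivWithinAt z (zs s) (Icc a b) s)
    (hzs : ∀ s ∈ Icc a b, HasDerivWithinAt zs (zss s) (Icc a b) s)
    (hzss : MemLp zss 2 (volume.restrict (Icc a b)))
    (Bc : Matrix (Fin 2 × Fin np) (Fin 4 × Fin np) ℝ)
    (hrank : Bc.rank = Fintype.card (Fin 2 × Fin np))
    (hdet : IsUnit (Bc * Bdm a b np).det)
    (hbc : Bc.mulVec (zbv a b z zs) = 0) :
    ∀ s ∈ Icc a b,
      zs s = (fun i => ∫ η in a..s, (G3m a b Bc s η).mulVec (zss η) i)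
           + (fun i => ∫ η in s..b, (G4m a b Bc s η).mulVec (zss η) i) := by
  intro s hs
  have hab' : a ≤ b := hab.le
  -- componentwise derivatives
  have hz' : ∀ i, ∀ t ∈ Icc a b, HasDerivWithinAt (fun u => z u i) (zs t i) (Icc a b) t :=
    fun i t ht => (ContinuousLinearMap.proj (R := ℝ) (φ := fun _ : Fin np => ℝ)
      i).hasFDerivAt.comp_hasDerivWithinAt t (hz t ht)
  have hzs' : ∀ i, ∀ t ∈ Icc a b, HasDerivWithinAt (fun u => zs u i) (zss t i) (Icc a b) t :=
    fun i t ht => (ContinuousLinearMap.proj (R := ℝ) (φ := fun _ : Fin np => ℝ)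
      i).hasFDerivAt.comp_hasDerivWithinAt t (hzs t ht)
  have hzsC : ∀ i, ContinuousOn (fun t => zs t i) (Icc a b) :=
    fun i x hx => (hzs' i x hx).continuousWithinAt
  -- integrability
  have hIntOn : IntegrableOn zss (Icc a b) := hzss.integrable one_le_two
  have hIi : ∀ i, IntegrableOn (fun t => zss t i) (Icc a b) :=
    fun i => (ContinuousLinearMap.proj (R := ℝ) (φ := fun _ : Fin np => ℝ) i).integrable_comp hIntOn
  have hsub : ∀ c ∈ Icc a b, ∀ d ∈ Icc a b, uIcc c d ⊆ Icc a b := by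
    intro c hc d hd
    exact uIcc_subset_Icc hc hd
  have hIIi : ∀ i, ∀ c ∈ Icc a b, ∀ d ∈ Icc a b,
      IntervalIntegrable (fun t => zss t i) volume c d :=
    fun i c hc d hd => ((hIi i).mono_set (hsub c hc d hd)).intervalIntegrable
  have hKi : ∀ i, IntegrableOn (fun η => (b - η) * zss η i) (Icc a b) := by
    intro i
    refine Integrable.bdd_mul (c := |b - a|) (hIi i)
      ((continuous_const.sub continuous_id).aestronglyMeasurable) ?_
    filter_upwards [ae_restrict_mem measurableSet_Icc] with x hx
    rw [Real.norm_eq_abs]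
    exact le_trans (abs_le.mpr ⟨by linarith [hx.2], by linarith [hx.1]⟩) (le_abs_self _)
  have hKIi : ∀ i, ∀ c ∈ Icc a b, ∀ d ∈ Icc a b,
      IntervalIntegrable (fun η => (b - η) * zss η i) volume c d :=
    fun i c hc d hd => ((hKi i).mono_set (hsub c hc d hd)).intervalIntegrable
  have hzsII : ∀ i, ∀ c ∈ Icc a b, ∀ d ∈ Icc a b,
      IntervalIntegrable (fun t => zs t i) volume c d :=
    fun i c hc d hd => ((hzsC i).mono (hsub c hc d hd)).intervalIntegrable
  have ha : a ∈ Icc a b := ⟨le_rfl, hab'⟩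
  have hb : b ∈ Icc a b := ⟨hab', le_rfl⟩
  -- FTC facts
  have ftczs : ∀ i, ∀ c ∈ Icc a b, ∀ d ∈ Icc a b, c ≤ d →
      ∫ η in c..d, zss η i = zs d i - zs c i :=
    fun i c hc d hd hcd => ftc_aux (hzs' i) hc hd hcd (hIIi i c hc d hd)
  have ftcz : ∀ i, ∫ η in a..b, zs η i = z b i - z a i :=
    fun i => ftc_aux (hz' i) ha hb hab' (hzsII i a ha b hb)
  -- Taylor identity
  have hTay : ∀ i, ∫ η in a..b, (b - η) * zss η i
      = z b i - z a i - (b - a) * zs a i := by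
    intro i
    have hder : ∀ t ∈ Icc a b, HasDerivWithinAt (fun η => (b - η) * zs η i)
        ((b - t) * zss t i - zs t i) (Icc a b) t := by
      intro t ht
      have h1 : HasDerivWithinAt (fun η : ℝ => b - η) (-1) (Icc a b) t :=
        ((hasDerivAt_id t).const_sub b).hasDerivWithinAt
      have h2 := h1.mul (hzs' i t ht)
      convert h2 using 1
      case e'_4 => rfl
      case e'_5 => rfl
      case e'_8 => rfl
      case e'_9 => ring
    have hint : IntervalIntegrable (fun t => (b - t) * zss t i - zs t i) volume a b :=
      (hKIi i a ha b hb).sub (hzsII i a ha b hb)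
    have h2 : ∫ η in a..b, ((b - η) * zss η i - zs η i)
        = (b - b) * zs b i - (b - a) * zs a i := ftc_aux hder ha hb hab' hint
    have h3 : ∫ η in a..b, ((b - η) * zss η i - zs η i)
        = (∫ η in a..b, (b - η) * zss η i) - ∫ η in a..b, zs η i :=
      intervalIntegral.integral_sub (hKIi i a ha b hb) (hzsII i a ha b hb)
    rw [h3, ftcz i] at h2
    linarith [h2]
  -- matrix/vector setup
  set M : Matrix (Fin 2 × Fin np) (Fin 4 × Fin np) ℝ := (Bc * Bdm a b np)⁻¹ * Bc with hM
  set N : Matrix (Fin np) (Fin 4 × Fin np) ℝ := rowZI np * M with hN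
  set w : Fin 2 × Fin np → ℝ := fun q => ![z a, zs a] q.1 q.2 with hw
  set V : Fin 4 × Fin np → ℝ := fun p =>
    ![fun _ => (0 : ℝ), fun k => z b k - z a k - (b - a) * zs a k,
      fun _ => (0 : ℝ), fun k => zs b k - zs a k] p.1 p.2 with hV
  clear_value M N w V
  have hVeq : V = zbv a b z zs - (Bdm a b np).mulVec w := by
    funext pk
    obtain ⟨p, k⟩ := pk
    simp only [Pi.sub_apply]
    rw [Bdm_mulVec]
    fin_cases p <;>
      simp [zbv, hV, hw] <;> ring
  have hMV : M.mulVec V = -w := by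
    have h1 : Bc.mulVec V = -((Bc * Bdm a b np).mulVec w) := by
      rw [hVeq, Matrix.mulVec_sub, hbc, zero_sub, ← Matrix.mulVec_mulVec]
    calc M.mulVec V = (Bc * Bdm a b np)⁻¹.mulVec (Bc.mulVec V) := by
              rw [hM, ← Matrix.mulVec_mulVec]
      _ = -(((Bc * Bdm a b np)⁻¹ * (Bc * Bdm a b np)).mulVec w) := by
              rw [h1, Matrix.mulVec_neg, Matrix.mulVec_mulVec]
      _ = -w := by rw [Matrix.nonsing_inv_mul _ hdet, Matrix.one_mulVec]
  -- the Green's-kernel part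
  have hBbeq : ∀ η (i : Fin np), (Bbm a b Bc η).mulVec (zss η) i
      = -(∑ q : Fin 4 × Fin np, N i q * (colE b np η).mulVec (zss η) q) := by
    intro η i
    have hm : Bbm a b Bc η = -(N * colE b np η) := by
      rw [hN, hM]
      unfold Bbm Bfm rowZI
      simp only [Matrix.mul_assoc]
    rw [hm, Matrix.neg_mulVec, ← Matrix.mulVec_mulVec]
    simp only [Pi.neg_apply, neg_inj, Matrix.mulVec, dotProduct, Matrix.mul_apply,
      Finset.sum_mul, Finset.mul_sum, mul_assoc]
  have hUint : ∀ c ∈ Icc a b, ∀ d ∈ Icc a b, ∀ q : Fin 4 × Fin np,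
      IntervalIntegrable (fun η => (colE b np η).mulVec (zss η) q) volume c d := by
    intro c hc d hd q
    obtain ⟨p, k⟩ := q
    have he : (fun η => (colE b np η).mulVec (zss η) (p, k))
        = fun η => ![0, (b - η) * zss η k, 0, zss η k] p :=
      funext fun η => colE_mulVec b η (zss η) p k
    rw [he]
    fin_cases p
    · simpa using intervalIntegrable_const (c := (0:ℝ))
    · simpa using hKIi k c hc d hd
    · simpa using intervalIntegrable_const (c := (0:ℝ))
    · simpa using hIIi k c hc d hd
  have hBint : ∀ i, ∀ c ∈ Icc a b, ∀ d ∈ Icc a b,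
      IntervalIntegrable (fun η => (Bbm a b Bc η).mulVec (zss η) i) volume c d := by
    intro i c hc d hd
    have he : (fun η => (Bbm a b Bc η).mulVec (zss η) i)
        = fun η => -(∑ q : Fin 4 × Fin np, N i q * (colE b np η).mulVec (zss η) q) :=
      funext fun η => hBbeq η i
    rw [he]
    apply IntervalIntegrable.neg
    have he2 : (fun η => ∑ q : Fin 4 × Fin np, N i q * (colE b np η).mulVec (zss η) q)
        = ∑ q : Fin 4 × Fin np, (fun η => N i q * (colE b np η).mulVec (zss η) q) := by
      funext η; simp
    rw [he2]
    exact IntervalIntegrable.sum Finset.univ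
      (fun q _ => (hUint c hc d hd q).const_mul (N i q))
  have h0 : ∀ q : Fin 4 × Fin np, ∫ η in a..b, (colE b np η).mulVec (zss η) q = V q := by
    intro q
    obtain ⟨p, k⟩ := q
    have he : (fun η => (colE b np η).mulVec (zss η) (p, k))
        = fun η => ![0, (b - η) * zss η k, 0, zss η k] p :=
      funext fun η => colE_mulVec b η (zss η) p k
    rw [he]
    fin_cases p
    · simp [hV]
    · simpa [hV] using hTay k
    · simp [hV]
    · simpa [hV] using ftczs k a ha b hb hab'
  have hBab : ∀ i, ∫ η in a..b, (Bbm a b Bc η).mulVec (zss η) i = zs a i := by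
    intro i
    have he : (fun η => (Bbm a b Bc η).mulVec (zss η) i)
        = fun η => -(∑ q : Fin 4 × Fin np, N i q * (colE b np η).mulVec (zss η) q) :=
      funext fun η => hBbeq η i
    rw [he]
    rw [intervalIntegral.integral_neg,
      intervalIntegral.integral_finset_sum (fun q _ => (hUint a ha b hb q).const_mul _)]
    have hsum : ∀ q ∈ (Finset.univ : Finset (Fin 4 × Fin np)),
        (∫ η in a..b, N i q * (colE b np η).mulVec (zss η) q) = N i q * V q := by
      intro q _
      rw [intervalIntegral.integral_const_mul, h0 q]
    rw [Finset.sum_congr rfl hsum]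
    have hNV : ∑ q : Fin 4 × Fin np, N i q * V q = N.mulVec V i := by
      simp [Matrix.mulVec, dotProduct]
    rw [hNV, hN, ← Matrix.mulVec_mulVec, hMV, Matrix.mulVec_neg]
    simp [rowZI_mulVec, hw]
  -- final assembly
  funext i
  simp only [Pi.add_apply]
  have hG3 : ∀ η, (G3m a b Bc s η).mulVec (zss η) i
      = (Bbm a b Bc η).mulVec (zss η) i + zss η i := by
    intro η
    rw [G3m, Matrix.add_mulVec, Matrix.one_mulVec]
    simp
  have hG4 : ∀ η, (G4m a b Bc s η).mulVec (zss η) i = (Bbm a b Bc η).mulVec (zss η) i :=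
    fun η => rfl
  simp only [hG3, hG4]
  rw [intervalIntegral.integral_add (hBint i a ha s hs) (hIIi i a ha s hs)]
  have hsplit := intervalIntegral.integral_add_adjacent_intervals
    (hBint i a ha s hs) (hBint i s hs b hb)
  have hftc := ftczs i a ha s hs hs.1
  have hB := hBab i
  linarith [hsplit, hftc, hB]

end
end

section
/- Let z ∈ W^{2,2}([a,b];ℝ^{n_p}) satisfy the boundary condition B_c z_b = 0, where B_c ∈ ℝ^{2n_p×4n_p} and B_c B_d is invertible. Then col(z(a), z_s(a)) = −∫ₐᵇ B_f(η) z_ss(η) dη. -/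
open MeasureTheory Matrix Set

noncomputable section

/-- If `z ∈ W^{2,2}([a,b];ℝ^{n_p})` satisfies `B_c z_b = 0` with
`B_c B_d` invertible, then `col(z(a), z_s(a)) = −∫ₐᵇ B_f(η) z_ss(η) dη`. -/
theorem boundary_from_zss {np : ℕ} (a b : ℝ) (hab : a < b)
    (z zs zss : ℝ → Fin np → ℝ)
    (hz : ∀ s ∈ Icc a b, HasDerivWithinAt z (zs s) (Icc a b) s)
    (hzs : ∀ s ∈ Icc a b, HasDerivWithinAt zs (zss s) (Icc a b) s)
    (hzss : MemLp zss 2 (volume.restrict (Icc a b)))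
    (Bc : Matrix (Fin 2 × Fin np) (Fin 4 × Fin np) ℝ)
    (hdet : IsUnit (Bc * Bdm a b np).det)
    (hbc : Bc.mulVec (zbv a b z zs) = 0) :
    (fun q : Fin 2 × Fin np => ![z a, zs a] q.1 q.2)
      = -(fun q : Fin 2 × Fin np => ∫ η in a..b, (Bfm a b Bc η).mulVec (zss η) q) := by
  have hzi : ∀ i, ∀ s ∈ Icc a b, HasDerivWithinAt (fun t => z t i) (zs s i) (Icc a b) s :=
    fun i s hs => hasDerivWithinAt_pi.1 (hz s hs) i
  have hzsi : ∀ i, ∀ s ∈ Icc a b, HasDerivWithinAt (fun t => zs t i) (zss s i) (Icc a b) s :=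
    fun i s hs => hasDerivWithinAt_pi.1 (hzs s hs) i
  -- integrability
  have hInt : ∀ i, IntervalIntegrable (fun η => zss η i) volume a b := by
    intro i
    haveI : IsFiniteMeasure (volume.restrict (Icc a b)) :=
      ⟨by rw [Measure.restrict_apply_univ]; exact measure_Icc_lt_top⟩
    have h1 : Integrable zss (volume.restrict (Icc a b)) := hzss.integrable one_le_two
    have h2 : Integrable (fun η => zss η i) (volume.restrict (Icc a b)) :=
      (ContinuousLinearMap.proj (R := ℝ) (φ := fun _ : Fin np => ℝ) i).integrable_comp h1
    rw [intervalIntegrable_iff_integrableOn_Ioc_of_le hab.le]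
    exact IntegrableOn.mono_set h2 Ioc_subset_Icc_self
  have hIntb : ∀ i, IntervalIntegrable (fun η => (b - η) * zss η i) volume a b :=
    fun i => (hInt i).continuousOn_mul (Continuous.continuousOn (by continuity))
  -- FTC identities
  have hFTC1 : ∀ i, ∫ η in a..b, zss η i = zs b i - zs a i := by
    intro i
    apply intervalIntegral.integral_eq_sub_of_hasDeriv_right_of_le hab.le
    · exact fun s hs => (hzsi i s hs).continuousWithinAt
    · intro x hx
      exact (((hzsi i x (Ioo_subset_Icc_self hx)).hasDerivAt
        (Icc_mem_nhds hx.1 hx.2)).hasDerivWithinAt)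
    · exact hInt i
  have hFTC2 : ∀ i, ∫ η in a..b, (b - η) * zss η i
      = z b i - (z a i + (b - a) * zs a i) := by
    intro i
    have key : ∀ s ∈ Icc a b, HasDerivWithinAt (fun t => (b - t) * zs t i + z t i)
        ((b - s) * zss s i) (Icc a b) s := by
      intro s hs
      have h1 : HasDerivWithinAt (fun t : ℝ => b - t) (-1) (Icc a b) s := by
        simpa using ((hasDerivWithinAt_id s (Icc a b)).const_sub b)
      have h2 := (h1.mul (hzsi i s hs)).add (hzi i s hs)
      rw [show (b - s) * zss s i = -1 * zs s i + (b - s) * zss s i + zs s i by ring]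
      exact h2
    have h := intervalIntegral.integral_eq_sub_of_hasDeriv_right_of_le hab.le
      (fun s hs => (key s hs).continuousWithinAt)
      (fun x hx => ((key x (Ioo_subset_Icc_self hx)).hasDerivAt
        (Icc_mem_nhds hx.1 hx.2)).hasDerivWithinAt) (hIntb i)
    rw [h]; ring
  -- colE mulVec computations
  have hcol0 : ∀ (η : ℝ) (i : Fin np),
      (colE b np η).mulVec (zss η) ((0 : Fin 4), i) = 0 := by
    intro η i
    have h : ∀ j, colE b np η ((0 : Fin 4), i) j
        = (0 : Matrix (Fin np) (Fin np) ℝ) i j := fun _ => rfl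
    simp [Matrix.mulVec, dotProduct, h]
  have hcol1 : ∀ (η : ℝ) (i : Fin np),
      (colE b np η).mulVec (zss η) ((1 : Fin 4), i) = (b - η) * zss η i := by
    intro η i
    have h : ∀ j, colE b np η ((1 : Fin 4), i) j
        = ((b - η) • (1 : Matrix (Fin np) (Fin np) ℝ)) i j := fun _ => rfl
    simp [Matrix.mulVec, dotProduct, h, Matrix.smul_apply, Matrix.one_apply,
      smul_eq_mul, mul_ite, ite_mul, Finset.sum_ite_eq, Finset.sum_ite_eq']
  have hcol2 : ∀ (η : ℝ) (i : Fin np),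
      (colE b np η).mulVec (zss η) ((2 : Fin 4), i) = 0 := by
    intro η i
    have h : ∀ j, colE b np η ((2 : Fin 4), i) j
        = (0 : Matrix (Fin np) (Fin np) ℝ) i j := fun _ => rfl
    simp [Matrix.mulVec, dotProduct, h]
  have hcol3 : ∀ (η : ℝ) (i : Fin np),
      (colE b np η).mulVec (zss η) ((3 : Fin 4), i) = zss η i := by
    intro η i
    have h : ∀ j, colE b np η ((3 : Fin 4), i) j
        = (1 : Matrix (Fin np) (Fin np) ℝ) i j := fun _ => rfl
    simp [Matrix.mulVec, dotProduct, h, Matrix.one_apply, ite_mul,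
      Finset.sum_ite_eq, Finset.sum_ite_eq']
  -- the vector w
  set w : Fin 2 × Fin np → ℝ := fun q => ![z a, zs a] q.1 q.2 with hw
  -- Bdm mulVec computations
  have hBdm0 : ∀ i : Fin np, (Bdm a b np).mulVec w ((0 : Fin 4), i) = z a i := by
    intro i
    have h : ∀ q : Fin 2 × Fin np, Bdm a b np ((0 : Fin 4), i) q
        = (![(1 : Matrix (Fin np) (Fin np) ℝ), 0] q.1) i q.2 := fun _ => rfl
    simp only [Matrix.mulVec, dotProduct, h, Fintype.sum_prod_type, Fin.sum_univ_two, hw]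
    simp [Matrix.one_apply, ite_mul, Finset.sum_ite_eq, Finset.sum_ite_eq']
  have hBdm1 : ∀ i : Fin np, (Bdm a b np).mulVec w ((1 : Fin 4), i)
      = z a i + (b - a) * zs a i := by
    intro i
    have h : ∀ q : Fin 2 × Fin np, Bdm a b np ((1 : Fin 4), i) q
        = (![(1 : Matrix (Fin np) (Fin np) ℝ), (b - a) • 1] q.1) i q.2 := fun _ => rfl
    simp only [Matrix.mulVec, dotProduct, h, Fintype.sum_prod_type, Fin.sum_univ_two, hw]
    simp [Matrix.one_apply, Matrix.smul_apply, smul_eq_mul, mul_ite, ite_mul,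
      Finset.sum_ite_eq, Finset.sum_ite_eq']
  have hBdm2 : ∀ i : Fin np, (Bdm a b np).mulVec w ((2 : Fin 4), i) = zs a i := by
    intro i
    have h : ∀ q : Fin 2 × Fin np, Bdm a b np ((2 : Fin 4), i) q
        = (![(0 : Matrix (Fin np) (Fin np) ℝ), 1] q.1) i q.2 := fun _ => rfl
    simp only [Matrix.mulVec, dotProduct, h, Fintype.sum_prod_type, Fin.sum_univ_two, hw]
    simp [Matrix.one_apply, ite_mul, Finset.sum_ite_eq, Finset.sum_ite_eq']
  have hBdm3 : ∀ i : Fin np, (Bdm a b np).mulVec w ((3 : Fin 4), i) = zs a i := by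
    intro i
    have h : ∀ q : Fin 2 × Fin np, Bdm a b np ((3 : Fin 4), i) q
        = (![(0 : Matrix (Fin np) (Fin np) ℝ), 1] q.1) i q.2 := fun _ => rfl
    simp only [Matrix.mulVec, dotProduct, h, Fintype.sum_prod_type, Fin.sum_univ_two, hw]
    simp [Matrix.one_apply, ite_mul, Finset.sum_ite_eq, Finset.sum_ite_eq']
  -- the integral vector
  set vInt : Fin 4 × Fin np → ℝ :=
    fun p => ∫ η in a..b, (colE b np η).mulVec (zss η) p with hvInt
  -- decomposition zbv = Bdm * w + vInt
  have hdecomp : zbv a b z zs = (Bdm a b np).mulVec w + vInt := by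
    funext p
    obtain ⟨k, i⟩ := p
    fin_cases k
    · show z a i = (Bdm a b np).mulVec w ((0 : Fin 4), i)
        + ∫ η in a..b, (colE b np η).mulVec (zss η) ((0 : Fin 4), i)
      have he : (fun η => (colE b np η).mulVec (zss η) ((0 : Fin 4), i))
          = fun _ => (0 : ℝ) := funext fun η => hcol0 η i
      rw [hBdm0, he]
      simp
    · show z b i = (Bdm a b np).mulVec w ((1 : Fin 4), i)
        + ∫ η in a..b, (colE b np η).mulVec (zss η) ((1 : Fin 4), i)
      have he : (fun η => (colE b np η).mulVec (zss η) ((1 : Fin 4), i))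
          = fun η => (b - η) * zss η i := funext fun η => hcol1 η i
      rw [hBdm1, he, hFTC2 i]
      ring
    · show zs a i = (Bdm a b np).mulVec w ((2 : Fin 4), i)
        + ∫ η in a..b, (colE b np η).mulVec (zss η) ((2 : Fin 4), i)
      have he : (fun η => (colE b np η).mulVec (zss η) ((2 : Fin 4), i))
          = fun _ => (0 : ℝ) := funext fun η => hcol2 η i
      rw [hBdm2, he]
      simp
    · show zs b i = (Bdm a b np).mulVec w ((3 : Fin 4), i)
        + ∫ η in a..b, (colE b np η).mulVec (zss η) ((3 : Fin 4), i)
      have he : (fun η => (colE b np η).mulVec (zss η) ((3 : Fin 4), i))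
          = fun η => zss η i := funext fun η => hcol3 η i
      rw [hBdm3, he, hFTC1 i]
      ring
  -- solve for w
  set M := (Bc * Bdm a b np)⁻¹ * Bc with hM
  have e1 : (Bc * Bdm a b np).mulVec w + Bc.mulVec vInt = 0 := by
    rw [← Matrix.mulVec_mulVec, ← Matrix.mulVec_add, ← hdecomp, hbc]
  have e2 : w = -(M.mulVec vInt) := by
    have h1 : (Bc * Bdm a b np).mulVec w = -(Bc.mulVec vInt) :=
      eq_neg_of_add_eq_zero_left e1
    calc w = ((Bc * Bdm a b np)⁻¹ * (Bc * Bdm a b np)).mulVec w := by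
            rw [Matrix.nonsing_inv_mul _ hdet, Matrix.one_mulVec]
      _ = (Bc * Bdm a b np)⁻¹.mulVec ((Bc * Bdm a b np).mulVec w) := by
            rw [Matrix.mulVec_mulVec]
      _ = (Bc * Bdm a b np)⁻¹.mulVec (-(Bc.mulVec vInt)) := by rw [h1]
      _ = -((Bc * Bdm a b np)⁻¹.mulVec (Bc.mulVec vInt)) := by
            rw [Matrix.mulVec_neg]
      _ = -(M.mulVec vInt) := by rw [Matrix.mulVec_mulVec, hM]
  -- integrability of colE mulVec components
  have hcolInt : ∀ p : Fin 4 × Fin np,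
      IntervalIntegrable (fun η => (colE b np η).mulVec (zss η) p) volume a b := by
    rintro ⟨k, i⟩
    fin_cases k
    · show IntervalIntegrable
        (fun η => (colE b np η).mulVec (zss η) ((0 : Fin 4), i)) volume a b
      rw [funext fun η => hcol0 η i]
      exact intervalIntegrable_const
    · show IntervalIntegrable
        (fun η => (colE b np η).mulVec (zss η) ((1 : Fin 4), i)) volume a b
      rw [show (fun η => (colE b np η).mulVec (zss η) ((1 : Fin 4), i))
          = fun η => (b - η) * zss η i from funext fun η => hcol1 η i]
      exact hIntb i
    · show IntervalIntegrable
        (fun η => (colE b np η).mulVec (zss η) ((2 : Fin 4), i)) volume a b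
      rw [funext fun η => hcol2 η i]
      exact intervalIntegrable_const
    · show IntervalIntegrable
        (fun η => (colE b np η).mulVec (zss η) ((3 : Fin 4), i)) volume a b
      rw [show (fun η => (colE b np η).mulVec (zss η) ((3 : Fin 4), i))
          = fun η => zss η i from funext fun η => hcol3 η i]
      exact hInt i
  -- swap matrix and integral
  have hswap : ∀ q : Fin 2 × Fin np,
      ∫ η in a..b, (Bfm a b Bc η).mulVec (zss η) q = M.mulVec vInt q := by
    intro q
    have hb : ∀ η : ℝ, (Bfm a b Bc η).mulVec (zss η) q
        = ∑ p : Fin 4 × Fin np, M q p * (colE b np η).mulVec (zss η) p := by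
      intro η
      show (M * colE b np η).mulVec (zss η) q = _
      rw [← Matrix.mulVec_mulVec]
      rfl
    simp_rw [hb]
    rw [intervalIntegral.integral_finset_sum
      (fun p _ => (hcolInt p).const_mul (M q p))]
    exact Finset.sum_congr rfl fun p _ => intervalIntegral.integral_const_mul _ _
  -- conclude
  funext q
  have hq := congrFun e2 q
  calc (fun q : Fin 2 × Fin np => ![z a, zs a] q.1 q.2) q = w q := rfl
    _ = -(M.mulVec vInt) q := hq
    _ = -(M.mulVec vInt q) := rfl
    _ = -(∫ η in a..b, (Bfm a b Bc η).mulVec (zss η) q) := by rw [hswap q]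
    _ = _ := rfl


end
end
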